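/- arXiv:1402.4276 — 4 statements merged into one kernel-verified Lean document; each statement's English description precedes it below -/
import Mathlib

section
/- Let Ω be a nonempty open subset of ℝⁿ and let F be a Taylorian 1-field on the closure of Ω (i.e. Γ¹(F;cl Ω) < +∞). Then Γ¹(F;Ω) = max{ Lip(Df;Ω) , Γ¹(F;∂Ω) }, where ∂Ω denotes the topological boundary of Ω. -/
noncomputable section

open scoped RealInnerProductSpace

section GammaDefs

variable {H : Type*} [NormedAddCommGroup H] [InnerProductSpace ℝ H]

/-- Evaluation of the first-degree polynomial `F(x)` at `a`:
`F(x)(a) = f_x + ⟨D_xf, a - x⟩`. -/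
def fieldEval (f : H → ℝ) (Df : H → H) (x a : H) : ℝ :=
  f x + ⟪Df x, a - x⟫

/-- `Γ¹(F; x, y) = 2 · sup_{a} |F(x)(a) - F(y)(a)| / (‖x-a‖² + ‖y-a‖²)` for `x ≠ y`. -/
def gammaPair (f : H → ℝ) (Df : H → H) (x y : H) : ℝ :=
  ⨆ a : H, 2 * |fieldEval f Df x a - fieldEval f Df y a| / (‖x - a‖ ^ 2 + ‖y - a‖ ^ 2)

/-- The set of values `Γ¹(F; x, y)` for `x ≠ y` ranging over `S`. -/
def gammaVals (f : H → ℝ) (Df : H → H) (S : Set H) : Set ℝ :=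
  {t | ∃ x ∈ S, ∃ y ∈ S, x ≠ y ∧ t = gammaPair f Df x y}

/-- `Γ¹(F; S) = sup_{x ≠ y ∈ S} Γ¹(F; x, y)` (real supremum, `0` if `S` has at most one point). -/
def gammaOn (f : H → ℝ) (Df : H → H) (S : Set H) : ℝ :=
  sSup (gammaVals f Df S)

end GammaDefs

section LipDefs

variable {α β : Type*} [NormedAddCommGroup α] [NormedAddCommGroup β]

/-- The set of difference quotients `‖g x - g y‖ / ‖x - y‖`, `x ≠ y ∈ S`. -/
def lipVals (g : α → β) (S : Set α) : Set ℝ :=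
  {t | ∃ x ∈ S, ∃ y ∈ S, x ≠ y ∧ t = ‖g x - g y‖ / ‖x - y‖}

/-- `Lip(g; S) = sup_{x ≠ y ∈ S} ‖g x - g y‖ / ‖x - y‖` (real supremum). -/
def lipOn (g : α → β) (S : Set α) : ℝ :=
  sSup (lipVals g S)

end LipDefs

section PsiDefs

variable {H : Type*} [NormedAddCommGroup H] [InnerProductSpace ℝ H]

/-- `v_{a,b} = ½(D_af + D_bf) + (κ/2)(b - a)`. -/
def vab (Df : H → H) (κ : ℝ) (a b : H) : H :=
  (1 / 2 : ℝ) • (Df a + Df b) + (κ / 2) • (b - a)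

/-- `α_{a,b}`. -/
def alphaab (f : H → ℝ) (Df : H → H) (κ : ℝ) (a b : H) : ℝ :=
  2 * κ * (f a - f b) + κ * ⟪Df a + Df b, b - a⟫
    - 1 / 2 * ‖Df a - Df b‖ ^ 2 + κ ^ 2 / 2 * ‖a - b‖ ^ 2

/-- `β_{a,b}(x)`. -/
def betaab (Df : H → H) (κ : ℝ) (a b x : H) : ℝ :=
  ‖(1 / 2 : ℝ) • (Df a - Df b) + (κ / 2) • ((2 : ℝ) • x - a - b)‖ ^ 2

/-- `r_{a,b}(x) = √(α_{a,b} + β_{a,b}(x))`. -/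
def rab (f : H → ℝ) (Df : H → H) (κ : ℝ) (a b x : H) : ℝ :=
  Real.sqrt (alphaab f Df κ a b + betaab Df κ a b x)

/-- `Λ_x = {v : ‖v - v_{a,b}‖ ≤ r_{a,b}(x) for all a, b ∈ Ω}`. -/
def Lambda (f : H → ℝ) (Df : H → H) (κ : ℝ) (Ω : Set H) (x : H) : Set H :=
  {v | ∀ a ∈ Ω, ∀ b ∈ Ω, ‖v - vab Df κ a b‖ ≤ rab f Df κ a b x}

/-- `Ψ⁺(F, x, a, v)`. -/
def PsiPlus (f : H → ℝ) (Df : H → H) (κ : ℝ) (x a v : H) : ℝ :=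
  f a + 1 / 2 * ⟪Df a + v, x - a⟫ + κ / 4 * ‖a - x‖ ^ 2 - 1 / (4 * κ) * ‖Df a - v‖ ^ 2

/-- `Ψ⁻(F, x, a, v)`. -/
def PsiMinus (f : H → ℝ) (Df : H → H) (κ : ℝ) (x a v : H) : ℝ :=
  f a + 1 / 2 * ⟪Df a + v, x - a⟫ - κ / 4 * ‖a - x‖ ^ 2 + 1 / (4 * κ) * ‖Df a - v‖ ^ 2

/-- `inf_{a ∈ Ω} Ψ⁺(F, x, a, v)`. -/
def infPsiPlus (f : H → ℝ) (Df : H → H) (κ : ℝ) (Ω : Set H) (x v : H) : ℝ :=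
  sInf {t | ∃ a ∈ Ω, t = PsiPlus f Df κ x a v}

/-- `sup_{a ∈ Ω} Ψ⁻(F, x, a, v)`. -/
def supPsiMinus (f : H → ℝ) (Df : H → H) (κ : ℝ) (Ω : Set H) (x v : H) : ℝ :=
  sSup {t | ∃ a ∈ Ω, t = PsiMinus f Df κ x a v}

/-- `u⁺(x) = sup_{v ∈ Λ_x} inf_{a ∈ Ω} Ψ⁺(F, x, a, v)`. -/
def uPlus (f : H → ℝ) (Df : H → H) (κ : ℝ) (Ω : Set H) (x : H) : ℝ :=
  sSup {t | ∃ v ∈ Lambda f Df κ Ω x, t = infPsiPlus f Df κ Ω x v}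

/-- `u⁻(x) = inf_{v ∈ Λ_x} sup_{a ∈ Ω} Ψ⁻(F, x, a, v)`. -/
def uMinus (f : H → ℝ) (Df : H → H) (κ : ℝ) (Ω : Set H) (x : H) : ℝ :=
  sInf {t | ∃ v ∈ Lambda f Df κ Ω x, t = supPsiMinus f Df κ Ω x v}

/-- `(g, Dg)` is a minimal Lipschitz extension of the 1-field `(f, Df)` of domain `Ω` to `H`. -/
def IsMLE (f : H → ℝ) (Df : H → H) (Ω : Set H) (g : H → ℝ) (Dg : H → H) : Prop :=
  (∀ x ∈ Ω, g x = f x ∧ Dg x = Df x) ∧ gammaOn g Dg Set.univ = gammaOn f Df Ω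

/-- Over extremal MLE. -/
def IsOverExtremal (f : H → ℝ) (Df : H → H) (Ω : Set H) (g₁ : H → ℝ) (Dg₁ : H → H) : Prop :=
  IsMLE f Df Ω g₁ Dg₁ ∧ ∀ g Dg, IsMLE f Df Ω g Dg → ∀ x, g x ≤ g₁ x

/-- Under extremal MLE. -/
def IsUnderExtremal (f : H → ℝ) (Df : H → H) (Ω : Set H) (g₂ : H → ℝ) (Dg₂ : H → H) : Prop :=
  IsMLE f Df Ω g₂ Dg₂ ∧ ∀ g Dg, IsMLE f Df Ω g Dg → ∀ x, g₂ x ≤ g x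

/-- Absolutely minimal Lipschitz extension. -/
def IsAMLE (f : H → ℝ) (Df : H → H) (Ω : Set H) (g : H → ℝ) (Dg : H → H) : Prop :=
  IsMLE f Df Ω g Dg ∧
    ∀ V : Set H, V.Nonempty → IsOpen V → Bornology.IsBounded V → closure V ⊆ Ωᶜ →
      gammaOn g Dg V = gammaOn g Dg (frontier V)

end PsiDefs
namespace Stmt6Aux

set_option linter.unusedSectionVars false

open Set

variable {H : Type*} [NormedAddCommGroup H] [InnerProductSpace ℝ H]

/-- The quotient whose supremum over `a` is `gammaPair`. -/
def tm (f : H → ℝ) (Df : H → H) (x y a : H) : ℝ :=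
  2 * |fieldEval f Df x a - fieldEval f Df y a| / (‖x - a‖ ^ 2 + ‖y - a‖ ^ 2)

lemma gammaPair_eq_iSup (f : H → ℝ) (Df : H → H) (x y : H) :
    gammaPair f Df x y = ⨆ a : H, tm f Df x y a := rfl

lemma tm_nonneg (f : H → ℝ) (Df : H → H) (x y a : H) : 0 ≤ tm f Df x y a := by
  unfold tm; positivity

lemma den_pos {x y : H} (hxy : x ≠ y) (a : H) : 0 < ‖x - a‖ ^ 2 + ‖y - a‖ ^ 2 := by
  rcases eq_or_ne x a with h | h
  · have h2 : y - a ≠ 0 := fun e => hxy (by rw [h, eq_comm, ← sub_eq_zero]; exact e)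
    have hp : 0 < ‖y - a‖ := norm_pos_iff.mpr h2
    have := pow_pos hp 2
    have := sq_nonneg ‖x - a‖
    linarith
  · have hp : 0 < ‖x - a‖ := norm_pos_iff.mpr (sub_ne_zero.mpr h)
    have := pow_pos hp 2
    have := sq_nonneg ‖y - a‖
    linarith

lemma diff_eq (f : H → ℝ) (Df : H → H) (x y a : H) :
    fieldEval f Df x a - fieldEval f Df y a
      = (f x - f y + ⟪Df y, y - x⟫) + ⟪Df x - Df y, a - x⟫ := by
  simp only [fieldEval, inner_sub_left, inner_sub_right]
  ring

lemma tm_bddAbove (f : H → ℝ) (Df : H → H) {x y : H} (hxy : x ≠ y) :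
    BddAbove (Set.range (tm f Df x y)) := by
  set d := ‖x - y‖ with hd
  have hd0 : 0 < d := norm_sub_pos_iff.mpr hxy
  set C := |f x - f y + ⟪Df y, y - x⟫| with hC
  set K := ‖Df x - Df y‖ with hK
  refine ⟨(8 * C + 4 * K * d) / d ^ 2, ?_⟩
  rintro t ⟨a, rfl⟩
  have hden := den_pos hxy a
  rw [tm, div_le_div_iff₀ hden (by positivity)]
  set s := ‖x - a‖ with hs
  set u := ‖y - a‖ with hu
  have hΔ : |fieldEval f Df x a - fieldEval f Df y a| ≤ C + K * s := by
    rw [diff_eq]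
    refine (abs_add_le _ _).trans ?_
    gcongr
    calc |⟪Df x - Df y, a - x⟫| ≤ ‖Df x - Df y‖ * ‖a - x‖ := abs_real_inner_le_norm _ _
    _ = K * s := by rw [norm_sub_rev a x]
  have hs0 : 0 ≤ s := norm_nonneg _
  have hu0 : 0 ≤ u := norm_nonneg _
  have hC0 : 0 ≤ C := abs_nonneg _
  have hK0 : 0 ≤ K := norm_nonneg _
  have htri1 : d - s ≤ u := by
    have h1 := norm_sub_le_norm_sub_add_norm_sub x a y
    have h2 : ‖a - y‖ = u := norm_sub_rev a y
    linarith
  have htri2 : s - d ≤ u := by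
    have h1 := norm_sub_le_norm_sub_add_norm_sub x y a
    linarith
  have h2 : (d - s) * (d - s) ≤ u * u := by nlinarith
  have hfact1 : d ^ 2 ≤ 2 * (s ^ 2 + u ^ 2) := by nlinarith [sq_nonneg (2*s - d)]
  have hfact2 : s * d ≤ 2 * (s ^ 2 + u ^ 2) := by nlinarith [sq_nonneg (2*s - d), sq_nonneg d]
  have habs := abs_nonneg (fieldEval f Df x a - fieldEval f Df y a)
  nlinarith [mul_le_mul_of_nonneg_right hΔ (le_of_lt (mul_pos hd0 hd0)),
    mul_le_mul_of_nonneg_left hfact1 hC0, mul_le_mul_of_nonneg_left hfact2 hK0]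

lemma tm_le_gammaPair (f : H → ℝ) (Df : H → H) {x y : H} (hxy : x ≠ y) (a : H) :
    tm f Df x y a ≤ gammaPair f Df x y :=
  le_ciSup (tm_bddAbove f Df hxy) a

lemma gammaPair_nonneg (f : H → ℝ) (Df : H → H) {x y : H} (hxy : x ≠ y) :
    0 ≤ gammaPair f Df x y :=
  (tm_nonneg f Df x y x).trans (tm_le_gammaPair f Df hxy x)

section PairBounds

variable {H : Type*} [NormedAddCommGroup H] [InnerProductSpace ℝ H]
variable {f : H → ℝ} {Df : H → H}

lemma fieldEval_self (f : H → ℝ) (Df : H → H) (q : H) : fieldEval f Df q q = f q := by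
  simp [fieldEval]

/-- Pair bound: if all gamma values on `S` are `≤ G`, then the two-point inequality holds. -/
lemma pair_bound {S : Set H} {G : ℝ} (hub : ∀ t ∈ gammaVals f Df S, t ≤ G) (hG : 0 ≤ G)
    {p q : H} (hp : p ∈ S) (hq : q ∈ S) (w : H) :
    fieldEval f Df q w - fieldEval f Df p w ≤ G / 2 * (‖w - p‖ ^ 2 + ‖w - q‖ ^ 2) := by
  rcases eq_or_ne q p with rfl | hqp
  · simp; positivity
  · have h1 : gammaPair f Df q p ≤ G := hub _ ⟨q, hq, p, hp, hqp, rfl⟩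
    have h2 : tm f Df q p w ≤ G := (tm_le_gammaPair f Df hqp w).trans h1
    have hden := den_pos hqp w
    rw [tm, div_le_iff₀ hden] at h2
    have habs : fieldEval f Df q w - fieldEval f Df p w
        ≤ |fieldEval f Df q w - fieldEval f Df p w| := le_abs_self _
    have hrw1 : ‖q - w‖ = ‖w - q‖ := norm_sub_rev _ _
    have hrw2 : ‖p - w‖ = ‖w - p‖ := norm_sub_rev _ _
    rw [hrw1, hrw2] at h2
    nlinarith
    
/-- Two-sided Taylor bound. -/
lemma taylor_abs {S : Set H} {G : ℝ} (hub : ∀ t ∈ gammaVals f Df S, t ≤ G) (hG : 0 ≤ G)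
    {p q : H} (hp : p ∈ S) (hq : q ∈ S) :
    |f q - f p - ⟪Df p, q - p⟫| ≤ G / 2 * ‖q - p‖ ^ 2 := by
  have h1 := pair_bound hub hG hp hq q
  have h2 := pair_bound hub hG hq hp q
  rw [fieldEval_self] at h1 h2
  have hfe : fieldEval f Df p q = f p + ⟪Df p, q - p⟫ := rfl
  rw [hfe] at h1 h2
  have hqq : ‖q - q‖ ^ 2 = (0:ℝ) := by simp
  rw [hqq] at h1 h2
  simp only [add_zero, zero_add] at h1 h2
  rw [abs_le]
  constructor <;> linarith

end PairBounds

section BLemma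

variable {H : Type*} [NormedAddCommGroup H] [InnerProductSpace ℝ H]

set_option maxHeartbeats 1000000 in
/-- The gradient difference is controlled by `gammaPair`. -/
lemma B_le_gammaPair (f : H → ℝ) (Df : H → H) {x y : H} (hxy : x ≠ y) :
    ‖Df x - Df y‖ ≤ ‖x - y‖ * gammaPair f Df x y := by
  rcases eq_or_lt_of_le (norm_nonneg (Df x - Df y)) with h0 | hKpos
  · rw [← h0]
    exact mul_nonneg (norm_nonneg _) (gammaPair_nonneg f Df hxy)
  have hd0 : 0 < ‖x - y‖ := norm_sub_pos_iff.mpr hxy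
  obtain ⟨e, he⟩ : ∃ e : H, e = ‖Df x - Df y‖⁻¹ • (Df x - Df y) := ⟨_, rfl⟩
  have henorm : ‖e‖ = 1 := by
    rw [he, norm_smul, norm_inv, norm_norm, inv_mul_cancel₀ (ne_of_gt hKpos)]
  obtain ⟨ap, hap⟩ : ∃ ap : H, ap = x - (2:ℝ)⁻¹ • (x - y) + (‖x - y‖/2) • e := ⟨_, rfl⟩
  obtain ⟨am, ham⟩ : ∃ am : H, am = x - (2:ℝ)⁻¹ • (x - y) - (‖x - y‖/2) • e := ⟨_, rfl⟩
  have hxap : x - ap = (2:ℝ)⁻¹ • (x - y) - (‖x - y‖/2) • e := by rw [hap]; module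
  have hyap : y - ap = -((2:ℝ)⁻¹ • (x - y) + (‖x - y‖/2) • e) := by rw [hap]; module
  have hxam : x - am = (2:ℝ)⁻¹ • (x - y) + (‖x - y‖/2) • e := by rw [ham]; module
  have hyam : y - am = -((2:ℝ)⁻¹ • (x - y) - (‖x - y‖/2) • e) := by rw [ham]; module
  have h1n : ‖(2:ℝ)⁻¹ • (x - y)‖ = ‖x - y‖ / 2 := by
    rw [norm_smul, Real.norm_eq_abs]
    rw [show |(2:ℝ)⁻¹| = (2:ℝ)⁻¹ by norm_num]
    ring
  have h2n : ‖(‖x - y‖/2) • e‖ = ‖x - y‖ / 2 := by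
    rw [norm_smul, henorm, Real.norm_eq_abs, abs_of_nonneg (by positivity), mul_one]
  have hpar := parallelogram_law_with_norm ℝ ((2:ℝ)⁻¹ • (x - y)) ((‖x - y‖/2) • e)
  have denp : ‖x - ap‖ ^ 2 + ‖y - ap‖ ^ 2 = ‖x - y‖ ^ 2 := by
    rw [hxap, hyap, norm_neg]
    nlinarith [hpar, h1n, h2n]
  have denm : ‖x - am‖ ^ 2 + ‖y - am‖ ^ 2 = ‖x - y‖ ^ 2 := by
    rw [hxam, hyam, norm_neg]
    nlinarith [hpar, h1n, h2n]
  have hsq : (0:ℝ) < ‖x - y‖ ^ 2 := pow_pos hd0 2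
  have htp : 2 * |fieldEval f Df x ap - fieldEval f Df y ap|
      ≤ gammaPair f Df x y * ‖x - y‖ ^ 2 := by
    have h := tm_le_gammaPair f Df hxy ap
    rw [tm, denp, div_le_iff₀ hsq] at h
    linarith
  have htm : 2 * |fieldEval f Df x am - fieldEval f Df y am|
      ≤ gammaPair f Df x y * ‖x - y‖ ^ 2 := by
    have h := tm_le_gammaPair f Df hxy am
    rw [tm, denm, div_le_iff₀ hsq] at h
    linarith
  have h5 : (ap - x) - (am - x) = ‖x - y‖ • e := by
    rw [hap, ham]; module
  have h7 : ⟪Df x - Df y, ‖x - y‖ • e⟫ = ‖x - y‖ * ‖Df x - Df y‖ := by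
    rw [he, smul_smul, real_inner_smul_right, real_inner_self_eq_norm_sq]
    field_simp
  have hAB : ⟪Df x - Df y, ap - x⟫ - ⟪Df x - Df y, am - x⟫ = ‖x - y‖ * ‖Df x - Df y‖ := by
    rw [← inner_sub_right, h5, h7]
  have hdiff : (fieldEval f Df x ap - fieldEval f Df y ap)
      - (fieldEval f Df x am - fieldEval f Df y am) = ‖x - y‖ * ‖Df x - Df y‖ := by
    rw [diff_eq f Df x y ap, diff_eq f Df x y am]
    linarith [hAB]
  have habs' := abs_sub (fieldEval f Df x ap - fieldEval f Df y ap)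
    (fieldEval f Df x am - fieldEval f Df y am)
  rw [hdiff, abs_of_nonneg (mul_nonneg (norm_nonneg (x - y)) (norm_nonneg (Df x - Df y)))]
    at habs'
  have key : ∀ d K G P Q : ℝ, 0 < d → d * K ≤ P + Q → 2*P ≤ G*d^2 → 2*Q ≤ G*d^2 →
      K ≤ d * G := by
    intro d K G P Q h1 h2 h3 h4; nlinarith
  exact key _ _ _ _ _ hd0 habs' htp htm

end BLemma

section CILemma

open Set

/-- Continuous induction along `[0,1]` over a closed parameter set `T` with
quadratic step bounds and nonincreasing jumps over gaps. -/
lemma continuous_induction {T : Set ℝ} (hTc : IsClosed T) (hT : T ⊆ Icc 0 1)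
    (h0 : (0:ℝ) ∈ T) (h1 : (1:ℝ) ∈ T) (g : ℝ → ℝ) {C : ℝ} (hC : 0 ≤ C)
    (step : ∀ t ∈ T, ∀ t' ∈ T, t ≤ t' → g t' - g t ≤ C * (t' - t) ^ 2)
    (jump : ∀ t ∈ T, ∀ t' ∈ T, t < t' → Ioo t t' ∩ T = ∅ → g t' ≤ g t) :
    g 1 ≤ g 0 := by
  refine le_of_forall_pos_le_add fun ε hε => ?_
  set S := {t : ℝ | t ∈ T ∧ g t ≤ g 0 + ε * t} with hSdef
  have hS0 : (0:ℝ) ∈ S := ⟨h0, by simp⟩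
  have hSne : S.Nonempty := ⟨0, hS0⟩
  have hSsub : S ⊆ T := fun t ht => ht.1
  have hSb : BddAbove S := ⟨1, fun t ht => (hT (hSsub ht)).2⟩
  set m := sSup S with hm
  have hmT : m ∈ T := by
    have h1c : m ∈ closure S := csSup_mem_closure hSne hSb
    have h2c := closure_mono hSsub h1c
    rwa [hTc.closure_eq] at h2c
  have hm0 : 0 ≤ m := le_csSup hSb hS0
  have hm1 : m ≤ 1 := csSup_le hSne fun t ht => (hT (hSsub ht)).2
  have hmS : g m ≤ g 0 + ε * m := by
    by_contra hcon; push_neg at hcon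
    set X := g m - (g 0 + ε * m) with hX
    have hX0 : 0 < X := by rw [hX]; linarith
    set δ := min 1 (X / (C + 1)) with hδ
    have hδ0 : 0 < δ := lt_min one_pos (div_pos hX0 (by linarith))
    obtain ⟨t, htS, htgt⟩ := exists_lt_of_lt_csSup hSne (show m - δ < m by linarith)
    have htm : t ≤ m := le_csSup hSb htS
    have hstep := step t (hSsub htS) m hmT htm
    have hmt1 : 0 ≤ m - t := by linarith
    have hmt2 : m - t ≤ δ := by linarith
    have h2' : C * (m - t) ^ 2 ≤ C * δ ^ 2 := by
      have : (m - t) ^ 2 ≤ δ ^ 2 := by nlinarith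
      exact mul_le_mul_of_nonneg_left this hC
    have hδ1 : δ ≤ 1 := min_le_left _ _
    have h3' : C * δ ^ 2 ≤ C * δ := by
      have : δ ^ 2 ≤ δ := by nlinarith
      exact mul_le_mul_of_nonneg_left this hC
    have h4' : C * δ ≤ C * (X / (C + 1)) :=
      mul_le_mul_of_nonneg_left (min_le_right 1 (X / (C + 1))) hC
    have h5' : C * (X / (C + 1)) < X := by
      have hc1 : (0:ℝ) < C + 1 := by linarith
      rw [mul_div_assoc', div_lt_iff₀ hc1]
      nlinarith
    have h6' : ε * t ≤ ε * m := mul_le_mul_of_nonneg_left htm hε.le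
    have := htS.2
    linarith
  have hmeq : m = 1 := by
    by_contra hne
    have hmlt : m < 1 := lt_of_le_of_ne hm1 hne
    set R := T ∩ Ioc m 1 with hR
    have hRne : R.Nonempty := ⟨1, h1, hmlt, le_refl 1⟩
    have hRb : BddBelow R := ⟨m, fun t ht => le_of_lt ht.2.1⟩
    have hτmem : sInf R ∈ T ∩ Icc m 1 := by
      have h1c : sInf R ∈ closure R := csInf_mem_closure hRne hRb
      have h2c : closure R ⊆ T ∩ Icc m 1 :=
        closure_minimal (fun t ht => ⟨ht.1, le_of_lt ht.2.1, ht.2.2⟩) (hTc.inter isClosed_Icc)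
      exact h2c h1c
    rcases eq_or_lt_of_le hτmem.2.1 with heq | hlt
    · set δ := min (1 - m) (ε / (C + 1)) with hδ
      have hδ0 : 0 < δ := lt_min (by linarith) (div_pos hε (by linarith))
      obtain ⟨t', ht'R, ht'lt⟩ := exists_lt_of_csInf_lt hRne
        (show sInf R < m + δ by rw [← heq]; linarith)
      have hstep := step m hmT t' ht'R.1 (le_of_lt ht'R.2.1)
      have h0tm : 0 ≤ t' - m := by linarith [ht'R.2.1]
      have hCle : C * (t' - m) ≤ ε := by
        have hle : t' - m ≤ δ := by linarith
        have h7 : δ ≤ ε / (C + 1) := min_le_right _ _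
        have h8 : C * (ε / (C + 1)) ≤ ε := by
          rw [mul_div_assoc', div_le_iff₀ (show (0:ℝ) < C + 1 by linarith)]
          nlinarith
        nlinarith
      have hgt' : g t' ≤ g 0 + ε * t' := by
        nlinarith [mul_le_mul_of_nonneg_right hCle h0tm]
      have : t' ≤ m := le_csSup hSb ⟨ht'R.1, hgt'⟩
      linarith [ht'R.2.1]
    · have hgap : Ioo m (sInf R) ∩ T = ∅ := by
        ext s
        simp only [mem_inter_iff, mem_Ioo, mem_empty_iff_false, iff_false, not_and]
        rintro ⟨hs1, hs2⟩ hsT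
        have hsR : s ∈ R := ⟨hsT, hs1, le_trans (le_of_lt hs2) hτmem.2.2⟩
        have := csInf_le hRb hsR
        linarith
      have hjump := jump m hmT (sInf R) hτmem.1 hlt hgap
      have hmem : sInf R ∈ S := ⟨hτmem.1, by nlinarith [hτmem.2.1]⟩
      have := le_csSup hSb hmem
      linarith
  have hfin := hmS
  rw [hmeq] at hfin
  linarith

end CILemma

section Mono

open Set

variable {H : Type*} [NormedAddCommGroup H] [InnerProductSpace ℝ H]
variable {f : H → ℝ} {Df : H → H} {Ω : Set H} {κ Γb : ℝ}

/-- `Φ` decreases when moving straight towards `w` inside `closure Ω`. -/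
lemma phi_mono (hκ0 : 0 ≤ κ) (hκΓ : κ ≤ Γb)
    (hTay : ∀ p ∈ closure Ω, ∀ q ∈ closure Ω,
      |f q - f p - ⟪Df p, q - p⟫| ≤ Γb / 2 * ‖q - p‖ ^ 2)
    (hLip : ∀ p ∈ closure Ω, ∀ q ∈ closure Ω, ‖Df p - Df q‖ ≤ κ * ‖p - q‖)
    (w u : H) {s : ℝ} (hs : s ∈ Icc (0:ℝ) 1)
    (hseg : ∀ t ∈ Icc (0:ℝ) 1, u + (t * s) • (w - u) ∈ closure Ω) :
    f (u + s • (w - u)) + ⟪Df (u + s • (w - u)), w - (u + s • (w - u))⟫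
        + κ / 2 * ‖w - (u + s • (w - u))‖ ^ 2
      ≤ f u + ⟪Df u, w - u⟫ + κ / 2 * ‖w - u‖ ^ 2 := by
  have hE : 0 ≤ ‖w - u‖ := norm_nonneg _
  have hC : 0 ≤ (Γb - κ) / 2 * s ^ 2 * ‖w - u‖ ^ 2 :=
    mul_nonneg (mul_nonneg (by linarith) (sq_nonneg s)) (sq_nonneg _)
  have hstep : ∀ t ∈ Icc (0:ℝ) 1, ∀ t' ∈ Icc (0:ℝ) 1, t ≤ t' →
      (f (u + (t' * s) • (w - u)) + ⟪Df (u + (t' * s) • (w - u)),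
        w - (u + (t' * s) • (w - u))⟫ + κ / 2 * ‖w - (u + (t' * s) • (w - u))‖ ^ 2)
      - (f (u + (t * s) • (w - u)) + ⟪Df (u + (t * s) • (w - u)),
        w - (u + (t * s) • (w - u))⟫ + κ / 2 * ‖w - (u + (t * s) • (w - u))‖ ^ 2)
      ≤ ((Γb - κ) / 2 * s ^ 2 * ‖w - u‖ ^ 2) * (t' - t) ^ 2 := by
    intro t ht t' ht' htt
    obtain ⟨p, hpd⟩ : ∃ p : H, p = u + (t * s) • (w - u) := ⟨_, rfl⟩
    obtain ⟨q, hqd⟩ : ∃ q : H, q = u + (t' * s) • (w - u) := ⟨_, rfl⟩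
    have hp : p ∈ closure Ω := hpd ▸ hseg t ht
    have hq : q ∈ closure Ω := hqd ▸ hseg t' ht'
    have hqp : q - p = ((t' - t) * s) • (w - u) := by rw [hpd, hqd]; module
    have hwp : w - p = (1 - t * s) • (w - u) := by rw [hpd]; module
    have hwq : w - q = (1 - t' * s) • (w - u) := by rw [hqd]; module
    have hts : 0 ≤ (t' - t) * s := mul_nonneg (by linarith) hs.1
    have hts1 : 0 ≤ 1 - t * s := by nlinarith [ht.1, ht.2, hs.1, hs.2]
    have hts2 : 0 ≤ 1 - t' * s := by nlinarith [ht'.1, ht'.2, hs.1, hs.2]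
    have hnqp : ‖q - p‖ = (t' - t) * s * ‖w - u‖ := by
      rw [hqp, norm_smul, Real.norm_eq_abs, abs_of_nonneg hts]
    have hnwp : ‖w - p‖ = (1 - t * s) * ‖w - u‖ := by
      rw [hwp, norm_smul, Real.norm_eq_abs, abs_of_nonneg hts1]
    have hnwq : ‖w - q‖ = (1 - t' * s) * ‖w - u‖ := by
      rw [hwq, norm_smul, Real.norm_eq_abs, abs_of_nonneg hts2]
    have hinner : ⟪Df p, q - p⟫ + ⟪Df p, w - q⟫ = ⟪Df p, w - p⟫ := by
      rw [← inner_add_right]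
      congr 1
      abel
    have hisub : ⟪Df q - Df p, w - q⟫ = ⟪Df q, w - q⟫ - ⟪Df p, w - q⟫ :=
      inner_sub_left _ _ _
    have b1 : f q - f p - ⟪Df p, q - p⟫ ≤ Γb / 2 * ((t' - t) * s * ‖w - u‖) ^ 2 := by
      have h := (le_abs_self _).trans (hTay p hp q hq)
      rwa [hnqp] at h
    have b2 : ⟪Df q - Df p, w - q⟫
        ≤ κ * ((t' - t) * s * ‖w - u‖) * ((1 - t' * s) * ‖w - u‖) := by
      calc ⟪Df q - Df p, w - q⟫ ≤ ‖Df q - Df p‖ * ‖w - q‖ := real_inner_le_norm _ _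
        _ ≤ (κ * ‖q - p‖) * ‖w - q‖ :=
            mul_le_mul_of_nonneg_right (hLip q hq p hp) (norm_nonneg _)
        _ = κ * ((t' - t) * s * ‖w - u‖) * ((1 - t' * s) * ‖w - u‖) := by
            rw [hnqp, hnwq]
    rw [← hpd, ← hqd, hnwp, hnwq]
    nlinarith [b1, b2, hisub, hinner]
  have hjump : ∀ t ∈ Icc (0:ℝ) 1, ∀ t' ∈ Icc (0:ℝ) 1, t < t' →
      Ioo t t' ∩ Icc (0:ℝ) 1 = ∅ → True := fun _ _ _ _ _ _ => trivial
  have hg := continuous_induction isClosed_Icc (subset_refl _)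
    (by constructor <;> norm_num) (by constructor <;> norm_num)
    (fun t => f (u + (t * s) • (w - u)) + ⟪Df (u + (t * s) • (w - u)),
      w - (u + (t * s) • (w - u))⟫ + κ / 2 * ‖w - (u + (t * s) • (w - u))‖ ^ 2)
    hC hstep ?_
  · have hg' : f (u + ((1:ℝ) * s) • (w - u)) + ⟪Df (u + ((1:ℝ) * s) • (w - u)),
        w - (u + ((1:ℝ) * s) • (w - u))⟫ + κ / 2 * ‖w - (u + ((1:ℝ) * s) • (w - u))‖ ^ 2
        ≤ f (u + ((0:ℝ) * s) • (w - u)) + ⟪Df (u + ((0:ℝ) * s) • (w - u)),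
        w - (u + ((0:ℝ) * s) • (w - u))⟫
          + κ / 2 * ‖w - (u + ((0:ℝ) * s) • (w - u))‖ ^ 2 := hg
    have e1 : u + ((1:ℝ) * s) • (w - u) = u + s • (w - u) := by rw [one_mul]
    have e0 : u + ((0:ℝ) * s) • (w - u) = u := by rw [zero_mul, zero_smul, add_zero]
    rw [e1, e0] at hg'
    exact hg'
  · -- jump: vacuous since T = Icc 0 1
    intro t ht t' ht' htt hgap
    exfalso
    have : (t + t') / 2 ∈ Ioo t t' ∩ Icc (0:ℝ) 1 :=
      ⟨⟨by linarith, by linarith⟩, ⟨by linarith [ht.1], by linarith [ht'.2]⟩⟩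
    rw [hgap] at this
    exact this

/-- `Ψ` decreases when moving straight away from `w` inside `closure Ω`. -/
lemma psi_mono (hκ0 : 0 ≤ κ) (hκΓ : κ ≤ Γb)
    (hTay : ∀ p ∈ closure Ω, ∀ q ∈ closure Ω,
      |f q - f p - ⟪Df p, q - p⟫| ≤ Γb / 2 * ‖q - p‖ ^ 2)
    (hLip : ∀ p ∈ closure Ω, ∀ q ∈ closure Ω, ‖Df p - Df q‖ ≤ κ * ‖p - q‖)
    (w u : H) {s : ℝ} (hs : s ∈ Icc (0:ℝ) 1)
    (hseg : ∀ t ∈ Icc (0:ℝ) 1, u + (t * s) • (w - u) ∈ closure Ω) :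
    f u + ⟪Df u, w - u⟫ - κ / 2 * ‖w - u‖ ^ 2
      ≤ f (u + s • (w - u)) + ⟪Df (u + s • (w - u)), w - (u + s • (w - u))⟫
        - κ / 2 * ‖w - (u + s • (w - u))‖ ^ 2 := by
  have hE : 0 ≤ ‖w - u‖ := norm_nonneg _
  have hC : 0 ≤ (Γb + κ) / 2 * s ^ 2 * ‖w - u‖ ^ 2 :=
    mul_nonneg (mul_nonneg (by linarith) (sq_nonneg s)) (sq_nonneg _)
  have hstep : ∀ t ∈ Icc (0:ℝ) 1, ∀ t' ∈ Icc (0:ℝ) 1, t ≤ t' →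
      (f (u + ((1 - t') * s) • (w - u)) + ⟪Df (u + ((1 - t') * s) • (w - u)),
        w - (u + ((1 - t') * s) • (w - u))⟫
        - κ / 2 * ‖w - (u + ((1 - t') * s) • (w - u))‖ ^ 2)
      - (f (u + ((1 - t) * s) • (w - u)) + ⟪Df (u + ((1 - t) * s) • (w - u)),
        w - (u + ((1 - t) * s) • (w - u))⟫
        - κ / 2 * ‖w - (u + ((1 - t) * s) • (w - u))‖ ^ 2)
      ≤ ((Γb + κ) / 2 * s ^ 2 * ‖w - u‖ ^ 2) * (t' - t) ^ 2 := by
    intro t ht t' ht' htt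
    obtain ⟨p, hpd⟩ : ∃ p : H, p = u + ((1 - t) * s) • (w - u) := ⟨_, rfl⟩
    obtain ⟨q, hqd⟩ : ∃ q : H, q = u + ((1 - t') * s) • (w - u) := ⟨_, rfl⟩
    have hp : p ∈ closure Ω := hpd ▸ hseg (1 - t) ⟨by linarith [ht.2], by linarith [ht.1]⟩
    have hq : q ∈ closure Ω := hqd ▸ hseg (1 - t') ⟨by linarith [ht'.2], by linarith [ht'.1]⟩
    have hqp : q - p = (-((t' - t) * s)) • (w - u) := by rw [hpd, hqd]; module
    have hwp : w - p = (1 - (1 - t) * s) • (w - u) := by rw [hpd]; module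
    have hwq : w - q = (1 - (1 - t') * s) • (w - u) := by rw [hqd]; module
    have hts : 0 ≤ (t' - t) * s := mul_nonneg (by linarith) hs.1
    have hts1 : 0 ≤ 1 - (1 - t) * s := by nlinarith [ht.1, ht.2, hs.1, hs.2]
    have hts2 : 0 ≤ 1 - (1 - t') * s := by nlinarith [ht'.1, ht'.2, hs.1, hs.2]
    have hnqp : ‖q - p‖ = (t' - t) * s * ‖w - u‖ := by
      rw [hqp, norm_smul, Real.norm_eq_abs, abs_neg, abs_of_nonneg hts]
    have hnwp : ‖w - p‖ = (1 - (1 - t) * s) * ‖w - u‖ := by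
      rw [hwp, norm_smul, Real.norm_eq_abs, abs_of_nonneg hts1]
    have hnwq : ‖w - q‖ = (1 - (1 - t') * s) * ‖w - u‖ := by
      rw [hwq, norm_smul, Real.norm_eq_abs, abs_of_nonneg hts2]
    have hinner : ⟪Df p, q - p⟫ + ⟪Df p, w - q⟫ = ⟪Df p, w - p⟫ := by
      rw [← inner_add_right]
      congr 1
      abel
    have hisub : ⟪Df q - Df p, w - q⟫ = ⟪Df q, w - q⟫ - ⟪Df p, w - q⟫ :=
      inner_sub_left _ _ _
    have b1 : f q - f p - ⟪Df p, q - p⟫ ≤ Γb / 2 * ((t' - t) * s * ‖w - u‖) ^ 2 := by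
      have h := (le_abs_self _).trans (hTay p hp q hq)
      rwa [hnqp] at h
    have b2 : ⟪Df q - Df p, w - q⟫
        ≤ κ * ((t' - t) * s * ‖w - u‖) * ((1 - (1 - t') * s) * ‖w - u‖) := by
      calc ⟪Df q - Df p, w - q⟫ ≤ ‖Df q - Df p‖ * ‖w - q‖ := real_inner_le_norm _ _
        _ ≤ (κ * ‖q - p‖) * ‖w - q‖ :=
            mul_le_mul_of_nonneg_right (hLip q hq p hp) (norm_nonneg _)
        _ = κ * ((t' - t) * s * ‖w - u‖) * ((1 - (1 - t') * s) * ‖w - u‖) := by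
            rw [hnqp, hnwq]
    rw [← hpd, ← hqd, hnwp, hnwq]
    nlinarith [b1, b2, hisub, hinner]
  have hg := continuous_induction isClosed_Icc (subset_refl _)
    (by constructor <;> norm_num) (by constructor <;> norm_num)
    (fun t => f (u + ((1 - t) * s) • (w - u)) + ⟪Df (u + ((1 - t) * s) • (w - u)),
      w - (u + ((1 - t) * s) • (w - u))⟫
      - κ / 2 * ‖w - (u + ((1 - t) * s) • (w - u))‖ ^ 2)
    hC hstep ?_
  · have hg' : f (u + ((1 - (1:ℝ)) * s) • (w - u)) + ⟪Df (u + ((1 - (1:ℝ)) * s) • (w - u)),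
        w - (u + ((1 - (1:ℝ)) * s) • (w - u))⟫
        - κ / 2 * ‖w - (u + ((1 - (1:ℝ)) * s) • (w - u))‖ ^ 2
        ≤ f (u + ((1 - (0:ℝ)) * s) • (w - u)) + ⟪Df (u + ((1 - (0:ℝ)) * s) • (w - u)),
        w - (u + ((1 - (0:ℝ)) * s) • (w - u))⟫
          - κ / 2 * ‖w - (u + ((1 - (0:ℝ)) * s) • (w - u))‖ ^ 2 := hg
    have e1 : u + ((1 - (1:ℝ)) * s) • (w - u) = u := by norm_num
    have e0 : u + ((1 - (0:ℝ)) * s) • (w - u) = u + s • (w - u) := by norm_num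
    rw [e1, e0] at hg'
    exact hg'
  · -- jump: vacuous
    intro t ht t' ht' htt hgap
    exfalso
    have : (t + t') / 2 ∈ Ioo t t' ∩ Icc (0:ℝ) 1 :=
      ⟨⟨by linarith, by linarith⟩, ⟨by linarith [ht.1], by linarith [ht'.2]⟩⟩
    rw [hgap] at this
    exact this

end Mono

section KTaylor

open Set

variable {H : Type*} [NormedAddCommGroup H] [InnerProductSpace ℝ H]
variable {f : H → ℝ} {Df : H → H} {Ω : Set H} {κ Γb : ℝ}

lemma gap_frontier (hΩop : IsOpen Ω) {γ : ℝ → H} (hγ : Continuous γ)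
    {t t' : ℝ} (htt : t < t')
    (hpt : γ t ∈ closure Ω) (hqt : γ t' ∈ closure Ω)
    (hgap : ∀ s, t < s → s < t' → γ s ∉ closure Ω) :
    γ t ∈ frontier Ω ∧ γ t' ∈ frontier Ω := by
  have key : ∀ r : ℝ, γ r ∈ closure Ω →
      (∀ δ, 0 < δ → ∃ s, t < s ∧ s < t' ∧ |s - r| < δ) → γ r ∈ frontier Ω := by
    intro r hγr happ
    have hcc : γ r ∈ closure ((closure Ω)ᶜ) := by
      rw [mem_closure_iff]
      intro o ho hoγ
      obtain ⟨δ, hδ0, hball⟩ := Metric.isOpen_iff.mp (ho.preimage hγ) r hoγ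
      obtain ⟨s, hs1, hs2, hs3⟩ := happ δ hδ0
      exact ⟨γ s, hball (by rwa [Metric.mem_ball, Real.dist_eq]), hgap s hs1 hs2⟩
    rw [closure_compl] at hcc
    have hnotΩ : γ r ∉ Ω := by
      intro hmem
      exact hcc (interior_mono subset_closure (hΩop.interior_eq.symm ▸ hmem))
    rw [hΩop.frontier_eq]
    exact ⟨hγr, hnotΩ⟩
  constructor
  · refine key t hpt fun δ hδ => ⟨min (t + δ/2) ((t + t')/2), ?_, ?_, ?_⟩
    · exact lt_min (by linarith) (by linarith)
    · exact (min_le_right _ _).trans_lt (by linarith)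
    · have h1 : min (t + δ/2) ((t + t')/2) ≤ t + δ/2 := min_le_left _ _
      have h2 : t < min (t + δ/2) ((t + t')/2) := lt_min (by linarith) (by linarith)
      rw [abs_of_nonneg (by linarith)]
      linarith
  · refine key t' hqt fun δ hδ => ⟨max (t' - δ/2) ((t + t')/2), ?_, ?_, ?_⟩
    · exact lt_max_of_lt_right (by linarith)
    · exact max_lt (by linarith) (by linarith)
    · have h1 : t' - δ/2 ≤ max (t' - δ/2) ((t + t')/2) := le_max_left _ _
      have h2 : max (t' - δ/2) ((t + t')/2) < t' := max_lt (by linarith) (by linarith)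
      rw [abs_of_nonpos (by linarith)]
      linarith

/-- Upper `κ`-Taylor inequality on the closure. -/
lemma taylor_up (hΩop : IsOpen Ω) (hκ0 : 0 ≤ κ) (hκΓ : κ ≤ Γb)
    (hTay : ∀ p ∈ closure Ω, ∀ q ∈ closure Ω,
      |f q - f p - ⟪Df p, q - p⟫| ≤ Γb / 2 * ‖q - p‖ ^ 2)
    (hLip : ∀ p ∈ closure Ω, ∀ q ∈ closure Ω, ‖Df p - Df q‖ ≤ κ * ‖p - q‖)
    (hBd : ∀ p ∈ frontier Ω, ∀ q ∈ frontier Ω, ∀ w : H,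
      fieldEval f Df q w - fieldEval f Df p w ≤ κ / 2 * (‖w - p‖ ^ 2 + ‖w - q‖ ^ 2))
    {a b : H} (ha : a ∈ closure Ω) (hb : b ∈ closure Ω) :
    f b - f a - ⟪Df a, b - a⟫ ≤ κ / 2 * ‖b - a‖ ^ 2 := by
  have hγc : Continuous fun t : ℝ => a + t • (b - a) :=
    continuous_const.add (continuous_id.smul continuous_const)
  have hTc : IsClosed (Icc (0:ℝ) 1 ∩ (fun t : ℝ => a + t • (b - a)) ⁻¹' (closure Ω)) :=
    isClosed_Icc.inter (isClosed_closure.preimage hγc)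
  have hC : 0 ≤ (Γb - κ) / 2 * ‖b - a‖ ^ 2 :=
    mul_nonneg (by linarith) (sq_nonneg _)
  have h0T : (0:ℝ) ∈ Icc (0:ℝ) 1 ∩ (fun t : ℝ => a + t • (b - a)) ⁻¹' (closure Ω) :=
    ⟨by constructor <;> norm_num, by simpa using ha⟩
  have h1T : (1:ℝ) ∈ Icc (0:ℝ) 1 ∩ (fun t : ℝ => a + t • (b - a)) ⁻¹' (closure Ω) :=
    ⟨by constructor <;> norm_num, by simpa using hb⟩
  have hstep : ∀ t ∈ Icc (0:ℝ) 1 ∩ (fun t : ℝ => a + t • (b - a)) ⁻¹' (closure Ω),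
      ∀ t' ∈ Icc (0:ℝ) 1 ∩ (fun t : ℝ => a + t • (b - a)) ⁻¹' (closure Ω), t ≤ t' →
      (f (a + t' • (b - a)) - ⟪Df a, (a + t' • (b - a)) - a⟫ - κ/2 * t'^2 * ‖b - a‖^2)
      - (f (a + t • (b - a)) - ⟪Df a, (a + t • (b - a)) - a⟫ - κ/2 * t^2 * ‖b - a‖^2)
      ≤ ((Γb - κ) / 2 * ‖b - a‖ ^ 2) * (t' - t) ^ 2 := by
    intro t ht t' ht' htt
    obtain ⟨p, hpd⟩ : ∃ p : H, p = a + t • (b - a) := ⟨_, rfl⟩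
    obtain ⟨q, hqd⟩ : ∃ q : H, q = a + t' • (b - a) := ⟨_, rfl⟩
    have hp : p ∈ closure Ω := hpd ▸ ht.2
    have hq : q ∈ closure Ω := hqd ▸ ht'.2
    have hqp : q - p = (t' - t) • (b - a) := by rw [hpd, hqd]; module
    have hpa : p - a = t • (b - a) := by rw [hpd]; module
    have hqa : q - a = t' • (b - a) := by rw [hqd]; module
    have hnqp : ‖q - p‖ = (t' - t) * ‖b - a‖ := by
      rw [hqp, norm_smul, Real.norm_eq_abs, abs_of_nonneg (by linarith)]
    have hnpa : ‖p - a‖ = t * ‖b - a‖ := by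
      rw [hpa, norm_smul, Real.norm_eq_abs, abs_of_nonneg ht.1.1]
    have hsplit : ⟪Df a, q - a⟫ - ⟪Df a, p - a⟫ = ⟪Df a, q - p⟫ := by
      rw [← inner_sub_right]
      congr 1
      abel
    have hisub : ⟪Df p - Df a, q - p⟫ = ⟪Df p, q - p⟫ - ⟪Df a, q - p⟫ :=
      inner_sub_left _ _ _
    have b1 : f q - f p - ⟪Df p, q - p⟫ ≤ Γb / 2 * ((t' - t) * ‖b - a‖) ^ 2 := by
      have h := (le_abs_self _).trans (hTay p hp q hq)
      rwa [hnqp] at h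
    have b2 : ⟪Df p - Df a, q - p⟫ ≤ κ * (t * ‖b - a‖) * ((t' - t) * ‖b - a‖) := by
      calc ⟪Df p - Df a, q - p⟫ ≤ ‖Df p - Df a‖ * ‖q - p‖ := real_inner_le_norm _ _
        _ ≤ (κ * ‖p - a‖) * ‖q - p‖ :=
            mul_le_mul_of_nonneg_right (hLip p hp a ha) (norm_nonneg _)
        _ = κ * (t * ‖b - a‖) * ((t' - t) * ‖b - a‖) := by rw [hnpa, hnqp]
    rw [← hpd, ← hqd]
    nlinarith [b1, b2, hisub, hsplit]
  have hjump : ∀ t ∈ Icc (0:ℝ) 1 ∩ (fun t : ℝ => a + t • (b - a)) ⁻¹' (closure Ω),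
      ∀ t' ∈ Icc (0:ℝ) 1 ∩ (fun t : ℝ => a + t • (b - a)) ⁻¹' (closure Ω), t < t' →
      Ioo t t' ∩ (Icc (0:ℝ) 1 ∩ (fun t : ℝ => a + t • (b - a)) ⁻¹' (closure Ω)) = ∅ →
      (f (a + t' • (b - a)) - ⟪Df a, (a + t' • (b - a)) - a⟫ - κ/2 * t'^2 * ‖b - a‖^2)
      ≤ (f (a + t • (b - a)) - ⟪Df a, (a + t • (b - a)) - a⟫ - κ/2 * t^2 * ‖b - a‖^2) := by
    intro t ht t' ht' htt hgap
    have hgap' : ∀ s, t < s → s < t' → (a + s • (b - a)) ∉ closure Ω := by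
      intro s hs1 hs2 hmem
      have hsIcc : s ∈ Icc (0:ℝ) 1 := ⟨by linarith [ht.1.1], by linarith [ht'.1.2]⟩
      have : s ∈ Ioo t t' ∩ (Icc (0:ℝ) 1 ∩ (fun t : ℝ => a + t • (b - a)) ⁻¹' (closure Ω)) :=
        ⟨⟨hs1, hs2⟩, hsIcc, hmem⟩
      rw [hgap] at this
      exact this
    obtain ⟨hfp, hfq⟩ := gap_frontier hΩop hγc htt ht.2 ht'.2 hgap'
    obtain ⟨p, hpd⟩ : ∃ p : H, p = a + t • (b - a) := ⟨_, rfl⟩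
    obtain ⟨q, hqd⟩ : ∃ q : H, q = a + t' • (b - a) := ⟨_, rfl⟩
    rw [← hpd] at hfp
    rw [← hqd] at hfq
    have hp : p ∈ closure Ω := hpd ▸ ht.2
    have hqp : q - p = (t' - t) • (b - a) := by rw [hpd, hqd]; module
    have hpa : p - a = t • (b - a) := by rw [hpd]; module
    have hqa : q - a = t' • (b - a) := by rw [hqd]; module
    have hnqp : ‖q - p‖ = (t' - t) * ‖b - a‖ := by
      rw [hqp, norm_smul, Real.norm_eq_abs, abs_of_nonneg (by linarith)]
    have hnpa : ‖p - a‖ = t * ‖b - a‖ := by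
      rw [hpa, norm_smul, Real.norm_eq_abs, abs_of_nonneg ht.1.1]
    have hsplit : ⟪Df a, q - a⟫ - ⟪Df a, p - a⟫ = ⟪Df a, q - p⟫ := by
      rw [← inner_sub_right]
      congr 1
      abel
    have hisub : ⟪Df p - Df a, q - p⟫ = ⟪Df p, q - p⟫ - ⟪Df a, q - p⟫ :=
      inner_sub_left _ _ _
    have b1 : f q - f p - ⟪Df p, q - p⟫ ≤ κ / 2 * ((t' - t) * ‖b - a‖) ^ 2 := by
      have h := hBd p hfp q hfq q
      rw [fieldEval_self] at h
      have hfe : fieldEval f Df p q = f p + ⟪Df p, q - p⟫ := rfl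
      rw [hfe] at h
      have hqq : ‖q - q‖ ^ 2 = (0:ℝ) := by simp
      rw [hqq] at h
      rw [hnqp] at h
      linarith
    have b2 : ⟪Df p - Df a, q - p⟫ ≤ κ * (t * ‖b - a‖) * ((t' - t) * ‖b - a‖) := by
      calc ⟪Df p - Df a, q - p⟫ ≤ ‖Df p - Df a‖ * ‖q - p‖ := real_inner_le_norm _ _
        _ ≤ (κ * ‖p - a‖) * ‖q - p‖ :=
            mul_le_mul_of_nonneg_right (hLip p hp a ha) (norm_nonneg _)
        _ = κ * (t * ‖b - a‖) * ((t' - t) * ‖b - a‖) := by rw [hnpa, hnqp]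
    rw [← hpd, ← hqd]
    nlinarith [b1, b2, hisub, hsplit]
  have hg := continuous_induction hTc inter_subset_left h0T h1T
    (fun t => f (a + t • (b - a)) - ⟪Df a, (a + t • (b - a)) - a⟫ - κ/2 * t^2 * ‖b - a‖^2)
    hC hstep hjump
  have hg' : f (a + (1:ℝ) • (b - a)) - ⟪Df a, (a + (1:ℝ) • (b - a)) - a⟫
      - κ/2 * (1:ℝ)^2 * ‖b - a‖^2
      ≤ f (a + (0:ℝ) • (b - a)) - ⟪Df a, (a + (0:ℝ) • (b - a)) - a⟫
      - κ/2 * (0:ℝ)^2 * ‖b - a‖^2 := hg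
  have e1 : a + (1:ℝ) • (b - a) = b := by rw [one_smul]; abel
  have e0 : a + (0:ℝ) • (b - a) = a := by rw [zero_smul, add_zero]
  rw [e1, e0] at hg'
  have ei : ⟪Df a, a - a⟫ = 0 := by simp
  rw [ei] at hg'
  have hba : b - a = b - a := rfl
  nlinarith [hg']

end KTaylor

section KTaylorDown

open Set

variable {H : Type*} [NormedAddCommGroup H] [InnerProductSpace ℝ H]
variable {f : H → ℝ} {Df : H → H} {Ω : Set H} {κ Γb : ℝ}

/-- Lower `κ`-Taylor inequality on the closure. -/
lemma taylor_down (hΩop : IsOpen Ω) (hκ0 : 0 ≤ κ) (hκΓ : κ ≤ Γb)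
    (hTay : ∀ p ∈ closure Ω, ∀ q ∈ closure Ω,
      |f q - f p - ⟪Df p, q - p⟫| ≤ Γb / 2 * ‖q - p‖ ^ 2)
    (hLip : ∀ p ∈ closure Ω, ∀ q ∈ closure Ω, ‖Df p - Df q‖ ≤ κ * ‖p - q‖)
    (hBd : ∀ p ∈ frontier Ω, ∀ q ∈ frontier Ω, ∀ w : H,
      fieldEval f Df q w - fieldEval f Df p w ≤ κ / 2 * (‖w - p‖ ^ 2 + ‖w - q‖ ^ 2))
    {a b : H} (ha : a ∈ closure Ω) (hb : b ∈ closure Ω) :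
    f a + ⟪Df a, b - a⟫ - κ / 2 * ‖b - a‖ ^ 2 ≤ f b := by
  have hγc : Continuous fun t : ℝ => a + t • (b - a) :=
    continuous_const.add (continuous_id.smul continuous_const)
  have hTc : IsClosed (Icc (0:ℝ) 1 ∩ (fun t : ℝ => a + t • (b - a)) ⁻¹' (closure Ω)) :=
    isClosed_Icc.inter (isClosed_closure.preimage hγc)
  have hC : 0 ≤ (Γb - κ) / 2 * ‖b - a‖ ^ 2 :=
    mul_nonneg (by linarith) (sq_nonneg _)
  have h0T : (0:ℝ) ∈ Icc (0:ℝ) 1 ∩ (fun t : ℝ => a + t • (b - a)) ⁻¹' (closure Ω) :=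
    ⟨by constructor <;> norm_num, by simpa using ha⟩
  have h1T : (1:ℝ) ∈ Icc (0:ℝ) 1 ∩ (fun t : ℝ => a + t • (b - a)) ⁻¹' (closure Ω) :=
    ⟨by constructor <;> norm_num, by simpa using hb⟩
  have hstep : ∀ t ∈ Icc (0:ℝ) 1 ∩ (fun t : ℝ => a + t • (b - a)) ⁻¹' (closure Ω),
      ∀ t' ∈ Icc (0:ℝ) 1 ∩ (fun t : ℝ => a + t • (b - a)) ⁻¹' (closure Ω), t ≤ t' →
      (⟪Df a, (a + t' • (b - a)) - a⟫ - κ/2 * t'^2 * ‖b - a‖^2 - f (a + t' • (b - a)))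
      - (⟪Df a, (a + t • (b - a)) - a⟫ - κ/2 * t^2 * ‖b - a‖^2 - f (a + t • (b - a)))
      ≤ ((Γb - κ) / 2 * ‖b - a‖ ^ 2) * (t' - t) ^ 2 := by
    intro t ht t' ht' htt
    obtain ⟨p, hpd⟩ : ∃ p : H, p = a + t • (b - a) := ⟨_, rfl⟩
    obtain ⟨q, hqd⟩ : ∃ q : H, q = a + t' • (b - a) := ⟨_, rfl⟩
    have hp : p ∈ closure Ω := hpd ▸ ht.2
    have hq : q ∈ closure Ω := hqd ▸ ht'.2
    have hqp : q - p = (t' - t) • (b - a) := by rw [hpd, hqd]; module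
    have hpa : p - a = t • (b - a) := by rw [hpd]; module
    have hnqp : ‖q - p‖ = (t' - t) * ‖b - a‖ := by
      rw [hqp, norm_smul, Real.norm_eq_abs, abs_of_nonneg (by linarith)]
    have hnpa : ‖p - a‖ = t * ‖b - a‖ := by
      rw [hpa, norm_smul, Real.norm_eq_abs, abs_of_nonneg ht.1.1]
    have hsplit : ⟪Df a, q - a⟫ - ⟪Df a, p - a⟫ = ⟪Df a, q - p⟫ := by
      rw [← inner_sub_right]
      congr 1
      abel
    have hisub : ⟪Df p - Df a, q - p⟫ = ⟪Df p, q - p⟫ - ⟪Df a, q - p⟫ :=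
      inner_sub_left _ _ _
    have b1 : -(f q - f p - ⟪Df p, q - p⟫) ≤ Γb / 2 * ((t' - t) * ‖b - a‖) ^ 2 := by
      have h'' := (abs_le.mp (hTay p hp q hq)).1
      rw [hnqp] at h''
      linarith
    have b2 : -⟪Df p - Df a, q - p⟫ ≤ κ * (t * ‖b - a‖) * ((t' - t) * ‖b - a‖) := by
      have habs := abs_real_inner_le_norm (Df p - Df a) (q - p)
      have hl := hLip p hp a ha
      have h1 : -⟪Df p - Df a, q - p⟫ ≤ |⟪Df p - Df a, q - p⟫| := neg_le_abs _
      have h2 : ‖Df p - Df a‖ * ‖q - p‖ ≤ (κ * ‖p - a‖) * ‖q - p‖ :=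
        mul_le_mul_of_nonneg_right hl (norm_nonneg _)
      rw [hnpa, hnqp] at h2
      rw [hnqp] at habs
      linarith
    rw [← hpd, ← hqd]
    nlinarith [b1, b2, hisub, hsplit]
  have hjump : ∀ t ∈ Icc (0:ℝ) 1 ∩ (fun t : ℝ => a + t • (b - a)) ⁻¹' (closure Ω),
      ∀ t' ∈ Icc (0:ℝ) 1 ∩ (fun t : ℝ => a + t • (b - a)) ⁻¹' (closure Ω), t < t' →
      Ioo t t' ∩ (Icc (0:ℝ) 1 ∩ (fun t : ℝ => a + t • (b - a)) ⁻¹' (closure Ω)) = ∅ →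
      (⟪Df a, (a + t' • (b - a)) - a⟫ - κ/2 * t'^2 * ‖b - a‖^2 - f (a + t' • (b - a)))
      ≤ (⟪Df a, (a + t • (b - a)) - a⟫ - κ/2 * t^2 * ‖b - a‖^2 - f (a + t • (b - a))) := by
    intro t ht t' ht' htt hgap
    have hgap' : ∀ s, t < s → s < t' → (a + s • (b - a)) ∉ closure Ω := by
      intro s hs1 hs2 hmem
      have hsIcc : s ∈ Icc (0:ℝ) 1 := ⟨by linarith [ht.1.1], by linarith [ht'.1.2]⟩
      have : s ∈ Ioo t t' ∩ (Icc (0:ℝ) 1 ∩ (fun t : ℝ => a + t • (b - a)) ⁻¹' (closure Ω)) :=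
        ⟨⟨hs1, hs2⟩, hsIcc, hmem⟩
      rw [hgap] at this
      exact this
    obtain ⟨hfp, hfq⟩ := gap_frontier hΩop hγc htt ht.2 ht'.2 hgap'
    obtain ⟨p, hpd⟩ : ∃ p : H, p = a + t • (b - a) := ⟨_, rfl⟩
    obtain ⟨q, hqd⟩ : ∃ q : H, q = a + t' • (b - a) := ⟨_, rfl⟩
    rw [← hpd] at hfp
    rw [← hqd] at hfq
    have hp : p ∈ closure Ω := hpd ▸ ht.2
    have hqp : q - p = (t' - t) • (b - a) := by rw [hpd, hqd]; module
    have hpa : p - a = t • (b - a) := by rw [hpd]; module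
    have hnqp : ‖q - p‖ = (t' - t) * ‖b - a‖ := by
      rw [hqp, norm_smul, Real.norm_eq_abs, abs_of_nonneg (by linarith)]
    have hnpa : ‖p - a‖ = t * ‖b - a‖ := by
      rw [hpa, norm_smul, Real.norm_eq_abs, abs_of_nonneg ht.1.1]
    have hsplit : ⟪Df a, q - a⟫ - ⟪Df a, p - a⟫ = ⟪Df a, q - p⟫ := by
      rw [← inner_sub_right]
      congr 1
      abel
    have hisub : ⟪Df p - Df a, q - p⟫ = ⟪Df p, q - p⟫ - ⟪Df a, q - p⟫ :=
      inner_sub_left _ _ _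
    have b1 : -(f q - f p - ⟪Df p, q - p⟫) ≤ κ / 2 * ((t' - t) * ‖b - a‖) ^ 2 := by
      have h := hBd q hfq p hfp q
      rw [fieldEval_self] at h
      have hfe : fieldEval f Df p q = f p + ⟪Df p, q - p⟫ := rfl
      rw [hfe] at h
      have hqq : ‖q - q‖ ^ 2 = (0:ℝ) := by simp
      rw [hqq] at h
      rw [hnqp] at h
      linarith
    have b2 : -⟪Df p - Df a, q - p⟫ ≤ κ * (t * ‖b - a‖) * ((t' - t) * ‖b - a‖) := by
      have habs := abs_real_inner_le_norm (Df p - Df a) (q - p)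
      have hl := hLip p hp a ha
      have h1 : -⟪Df p - Df a, q - p⟫ ≤ |⟪Df p - Df a, q - p⟫| := neg_le_abs _
      have h2 : ‖Df p - Df a‖ * ‖q - p‖ ≤ (κ * ‖p - a‖) * ‖q - p‖ :=
        mul_le_mul_of_nonneg_right hl (norm_nonneg _)
      rw [hnpa, hnqp] at h2
      rw [hnqp] at habs
      linarith
    rw [← hpd, ← hqd]
    nlinarith [b1, b2, hisub, hsplit]
  have hg := continuous_induction hTc inter_subset_left h0T h1T
    (fun t => ⟪Df a, (a + t • (b - a)) - a⟫ - κ/2 * t^2 * ‖b - a‖^2 - f (a + t • (b - a)))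
    hC hstep hjump
  have hg' : ⟪Df a, (a + (1:ℝ) • (b - a)) - a⟫ - κ/2 * (1:ℝ)^2 * ‖b - a‖^2
      - f (a + (1:ℝ) • (b - a))
      ≤ ⟪Df a, (a + (0:ℝ) • (b - a)) - a⟫ - κ/2 * (0:ℝ)^2 * ‖b - a‖^2
      - f (a + (0:ℝ) • (b - a)) := hg
  have e1 : a + (1:ℝ) • (b - a) = b := by rw [one_smul]; abel
  have e0 : a + (0:ℝ) • (b - a) = a := by rw [zero_smul, add_zero]
  rw [e1, e0] at hg'
  have ei : ⟪Df a, a - a⟫ = 0 := by simp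
  rw [ei] at hg'
  nlinarith [hg']

end KTaylorDown

section MainPair

open Set

variable {H : Type*} [NormedAddCommGroup H] [InnerProductSpace ℝ H]
variable {f : H → ℝ} {Df : H → H} {Ω : Set H} {κ Γb : ℝ}

lemma seg_cases (hΩop : IsOpen Ω) {x w : H} (hx : x ∈ Ω) :
    (∀ t ∈ Icc (0:ℝ) 1, x + t • (w - x) ∈ Ω) ∨
    (∃ s : ℝ, s ∈ Icc (0:ℝ) 1 ∧ x + s • (w - x) ∈ frontier Ω ∧
      ∀ t ∈ Icc (0:ℝ) 1, x + (t * s) • (w - x) ∈ closure Ω) := by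
  have hγc : Continuous fun t : ℝ => x + t • (w - x) :=
    continuous_const.add (continuous_id.smul continuous_const)
  have hU : IsOpen ((fun t : ℝ => x + t • (w - x)) ⁻¹' Ω) := hΩop.preimage hγc
  have hV : IsOpen ((fun t : ℝ => x + t • (w - x)) ⁻¹' ((closure Ω)ᶜ)) :=
    isClosed_closure.isOpen_compl.preimage hγc
  have hdisj : Disjoint ((fun t : ℝ => x + t • (w - x)) ⁻¹' Ω)
      ((fun t : ℝ => x + t • (w - x)) ⁻¹' ((closure Ω)ᶜ)) := by
    rw [Set.disjoint_left]
    intro z hz hz'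
    exact hz' (subset_closure hz)
  have hnf : ∀ z : H, z ∉ frontier Ω → z ∈ Ω ∨ z ∈ (closure Ω)ᶜ := by
    intro z hz
    by_cases hcl : z ∈ closure Ω
    · left
      by_contra hzΩ
      exact hz (by rw [hΩop.frontier_eq]; exact ⟨hcl, hzΩ⟩)
    · right; exact hcl
  set T := Icc (0:ℝ) 1 ∩ (fun t : ℝ => x + t • (w - x)) ⁻¹' (frontier Ω) with hTdef
  have hTc : IsClosed T := isClosed_Icc.inter (isClosed_frontier.preimage hγc)
  rcases eq_empty_or_nonempty T with hTe | hTne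
  · left
    have hcover : Icc (0:ℝ) 1 ⊆ (fun t : ℝ => x + t • (w - x)) ⁻¹' Ω ∪
        (fun t : ℝ => x + t • (w - x)) ⁻¹' ((closure Ω)ᶜ) := by
      intro t ht
      have htnf : x + t • (w - x) ∉ frontier Ω := by
        intro hmem
        have : t ∈ T := ⟨ht, hmem⟩
        rw [hTe] at this
        exact this
      rcases hnf _ htnf with h | h
      · exact Or.inl h
      · exact Or.inr h
    have hsub := (isPreconnected_Icc).subset_left_of_subset_union hU hV hdisj hcover
      ⟨0, ⟨by constructor <;> norm_num, by simpa using hx⟩⟩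
    intro t ht
    exact hsub ht
  · right
    have hTb : BddBelow T := ⟨0, fun t ht => ht.1.1⟩
    refine ⟨sInf T, (hTc.csInf_mem hTne hTb).1, (hTc.csInf_mem hTne hTb).2, ?_⟩
    have hsmem := hTc.csInf_mem hTne hTb
    have hs0 : 0 ≤ sInf T := hsmem.1.1
    have hs1 : sInf T ≤ 1 := hsmem.1.2
    -- all points before sInf T are in Ω
    have hIco : Ico (0:ℝ) (sInf T) ⊆ (fun t : ℝ => x + t • (w - x)) ⁻¹' Ω := by
      rcases eq_or_lt_of_le hs0 with hz | hz
      · intro τ hτ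
        exfalso
        have := hτ.2
        rw [← hz] at this
        exact absurd hτ.1 (by linarith)
      · have hcover : Ico (0:ℝ) (sInf T) ⊆ (fun t : ℝ => x + t • (w - x)) ⁻¹' Ω ∪
            (fun t : ℝ => x + t • (w - x)) ⁻¹' ((closure Ω)ᶜ) := by
          intro τ hτ
          have hτnT : τ ∉ T := fun hmem => absurd (csInf_le hTb hmem) (by
            push_neg
            exact hτ.2)
          have : x + τ • (w - x) ∉ frontier Ω := by
            intro hmem
            exact hτnT ⟨⟨hτ.1, le_trans (le_of_lt hτ.2) hs1⟩, hmem⟩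
          rcases hnf _ this with h | h
          · exact Or.inl h
          · exact Or.inr h
        exact (isPreconnected_Ico).subset_left_of_subset_union hU hV hdisj hcover
          ⟨0, ⟨le_refl 0, hz⟩, by simpa using hx⟩
    intro t ht
    have hts0 : 0 ≤ t * sInf T := mul_nonneg ht.1 hs0
    have htsle : t * sInf T ≤ sInf T := by nlinarith [ht.1, ht.2]
    rcases eq_or_lt_of_le htsle with heq | hlt
    · rw [heq]
      exact frontier_subset_closure hsmem.2
    · exact subset_closure (hIco ⟨hts0, hlt⟩)

lemma phi_bound (hΩop : IsOpen Ω) (hκ0 : 0 ≤ κ) (hκΓ : κ ≤ Γb)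
    (hTay : ∀ p ∈ closure Ω, ∀ q ∈ closure Ω,
      |f q - f p - ⟪Df p, q - p⟫| ≤ Γb / 2 * ‖q - p‖ ^ 2)
    (hLip : ∀ p ∈ closure Ω, ∀ q ∈ closure Ω, ‖Df p - Df q‖ ≤ κ * ‖p - q‖)
    {x : H} (hx : x ∈ Ω) (w : H) :
    (∃ aa ∈ frontier Ω, f aa + ⟪Df aa, w - aa⟫ + κ/2 * ‖w - aa‖^2
        ≤ f x + ⟪Df x, w - x⟫ + κ/2 * ‖w - x‖^2) ∨
    (w ∈ Ω ∧ f w ≤ f x + ⟪Df x, w - x⟫ + κ/2 * ‖w - x‖^2) := by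
  rcases seg_cases hΩop hx (w := w) with hall | ⟨s, hsIcc, hfr, hseg⟩
  · right
    have hwΩ : w ∈ Ω := by
      have := hall 1 (by constructor <;> norm_num)
      rwa [one_smul, add_sub_cancel] at this
    refine ⟨hwΩ, ?_⟩
    have hseg1 : ∀ t ∈ Icc (0:ℝ) 1, x + (t * 1) • (w - x) ∈ closure Ω := by
      intro t ht
      rw [mul_one]
      exact subset_closure (hall t ht)
    have hmono := phi_mono hκ0 hκΓ hTay hLip w x
      (s := 1) (by constructor <;> norm_num) hseg1
    rw [one_smul, add_sub_cancel] at hmono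
    have hww : w - w = 0 := sub_self w
    rw [hww] at hmono
    simp only [inner_zero_right, norm_zero] at hmono
    calc f w ≤ f w + κ/2 * 0^2 := by norm_num
      _ = f w + 0 + κ/2 * 0^2 := by ring
      _ ≤ _ := by linarith [hmono]
  · left
    have hmono := phi_mono hκ0 hκΓ hTay hLip w x (s := s) hsIcc hseg
    exact ⟨x + s • (w - x), hfr, hmono⟩

lemma psi_bound (hΩop : IsOpen Ω) (hκ0 : 0 ≤ κ) (hκΓ : κ ≤ Γb)
    (hTay : ∀ p ∈ closure Ω, ∀ q ∈ closure Ω,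
      |f q - f p - ⟪Df p, q - p⟫| ≤ Γb / 2 * ‖q - p‖ ^ 2)
    (hLip : ∀ p ∈ closure Ω, ∀ q ∈ closure Ω, ‖Df p - Df q‖ ≤ κ * ‖p - q‖)
    {y : H} (hy : y ∈ Ω) (w : H) :
    (∃ bb ∈ frontier Ω, f y + ⟪Df y, w - y⟫ - κ/2 * ‖w - y‖^2
        ≤ f bb + ⟪Df bb, w - bb⟫ - κ/2 * ‖w - bb‖^2) ∨
    (w ∈ Ω ∧ f y + ⟪Df y, w - y⟫ - κ/2 * ‖w - y‖^2 ≤ f w) := by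
  rcases seg_cases hΩop hy (w := w) with hall | ⟨s, hsIcc, hfr, hseg⟩
  · right
    have hwΩ : w ∈ Ω := by
      have := hall 1 (by constructor <;> norm_num)
      rwa [one_smul, add_sub_cancel] at this
    refine ⟨hwΩ, ?_⟩
    have hseg1 : ∀ t ∈ Icc (0:ℝ) 1, y + (t * 1) • (w - y) ∈ closure Ω := by
      intro t ht
      rw [mul_one]
      exact subset_closure (hall t ht)
    have hmono := psi_mono hκ0 hκΓ hTay hLip w y
      (s := 1) (by constructor <;> norm_num) hseg1
    rw [one_smul, add_sub_cancel] at hmono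
    have hww : w - w = 0 := sub_self w
    rw [hww] at hmono
    simp only [inner_zero_right, norm_zero] at hmono
    calc f y + ⟪Df y, w - y⟫ - κ/2 * ‖w - y‖^2 ≤ f w + 0 - κ/2 * 0^2 := hmono
      _ = f w := by ring
  · left
    have hmono := psi_mono hκ0 hκΓ hTay hLip w y (s := s) hsIcc hseg
    exact ⟨y + s • (w - y), hfr, hmono⟩

lemma main_pair (hΩop : IsOpen Ω) (hκ0 : 0 ≤ κ) (hκΓ : κ ≤ Γb)
    (hTay : ∀ p ∈ closure Ω, ∀ q ∈ closure Ω,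
      |f q - f p - ⟪Df p, q - p⟫| ≤ Γb / 2 * ‖q - p‖ ^ 2)
    (hLip : ∀ p ∈ closure Ω, ∀ q ∈ closure Ω, ‖Df p - Df q‖ ≤ κ * ‖p - q‖)
    (hBd : ∀ p ∈ frontier Ω, ∀ q ∈ frontier Ω, ∀ w : H,
      fieldEval f Df q w - fieldEval f Df p w ≤ κ / 2 * (‖w - p‖ ^ 2 + ‖w - q‖ ^ 2))
    {x y : H} (hx : x ∈ Ω) (hy : y ∈ Ω) (w : H) :
    fieldEval f Df y w - fieldEval f Df x w ≤ κ / 2 * (‖w - x‖ ^ 2 + ‖w - y‖ ^ 2) := by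
  have hfex : fieldEval f Df x w = f x + ⟪Df x, w - x⟫ := rfl
  have hfey : fieldEval f Df y w = f y + ⟪Df y, w - y⟫ := rfl
  rw [hfex, hfey]
  rcases phi_bound hΩop hκ0 hκΓ hTay hLip hx w with ⟨aa, haf, hA⟩ | ⟨hwΩ, hA⟩ <;>
    rcases psi_bound hΩop hκ0 hκΓ hTay hLip hy w with ⟨bb, hbf, hB⟩ | ⟨hwΩ', hB⟩
  · have hbd := hBd aa haf bb hbf w
    have h1 : fieldEval f Df aa w = f aa + ⟪Df aa, w - aa⟫ := rfl
    have h2 : fieldEval f Df bb w = f bb + ⟪Df bb, w - bb⟫ := rfl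
    rw [h1, h2] at hbd
    linarith
  · have ht := taylor_down hΩop hκ0 hκΓ hTay hLip hBd (frontier_subset_closure haf)
      (subset_closure hwΩ')
    -- Need f w ≤ Φ(aa): taylor_up with (aa, w).
    have htu := taylor_up hΩop hκ0 hκΓ hTay hLip hBd (frontier_subset_closure haf)
      (subset_closure hwΩ')
    have hn : ‖w - aa‖ = ‖w - aa‖ := rfl
    linarith [htu, hA, hB]
  · -- hA : w ∈ Ω with f w ≤ Φ(x); hB : Ψ(y) ≤ Ψ(bb); need Ψ(bb) ≤ f w : taylor_down (bb, w)
    have htd := taylor_down hΩop hκ0 hκΓ hTay hLip hBd (frontier_subset_closure hbf)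
      (subset_closure hwΩ)
    linarith [htd, hA, hB]
  · linarith [hA, hB]

end MainPair

section Approx

open Set Filter Topology

variable {H : Type*} [NormedAddCommGroup H] [InnerProductSpace ℝ H]
variable {f : H → ℝ} {Df : H → H} {Ω : Set H} {Γb : ℝ}

/-- `tm` at a pair of closure points is dominated by any bound for interior pairs. -/
lemma tm_closure_le
    (hTayb : ∀ p ∈ closure Ω, ∀ q ∈ closure Ω,
      |f q - f p - ⟪Df p, q - p⟫| ≤ Γb / 2 * ‖q - p‖ ^ 2)
    (hLipΓ : ∀ p ∈ closure Ω, ∀ q ∈ closure Ω, ‖Df p - Df q‖ ≤ Γb * ‖p - q‖)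
    {a b : H} (ha : a ∈ closure Ω) (hb : b ∈ closure Ω) (hab : a ≠ b) (c : H) {M : ℝ}
    (hmem : ∀ u ∈ Ω, ∀ v ∈ Ω, u ≠ v → gammaPair f Df u v ≤ M) :
    tm f Df a b c ≤ M := by
  obtain ⟨u, huΩ, huT⟩ := mem_closure_iff_seq_limit.mp ha
  obtain ⟨v, hvΩ, hvT⟩ := mem_closure_iff_seq_limit.mp hb
  have hab0 : 0 < ‖a - b‖ := norm_sub_pos_iff.mpr hab
  have hdist : Tendsto (fun k => ‖u k - v k‖) atTop (𝓝 ‖a - b‖) := (huT.sub hvT).norm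
  have hev : ∀ᶠ k in atTop, 0 < ‖u k - v k‖ := hdist.eventually (eventually_gt_nhds hab0)
  -- convergence of Df along approximating sequences
  have hDlim : ∀ (z : ℕ → H) (z₀ : H), (∀ k, z k ∈ Ω) → z₀ ∈ closure Ω →
      Tendsto z atTop (𝓝 z₀) → Tendsto (fun k => Df (z k)) atTop (𝓝 (Df z₀)) := by
    intro z z₀ hzΩ hz₀ hzT
    have hz0 : Tendsto (fun k => ‖z k - z₀‖) atTop (𝓝 0) := by
      have h := (hzT.sub_const z₀).norm
      rw [sub_self, norm_zero] at h
      exact h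
    have h1 : ∀ k, ‖Df (z k) - Df z₀‖ ≤ Γb * ‖z k - z₀‖ :=
      fun k => hLipΓ (z k) (subset_closure (hzΩ k)) z₀ hz₀
    have h2 : Tendsto (fun k => Γb * ‖z k - z₀‖) atTop (𝓝 0) := by
      have := hz0.const_mul Γb
      rwa [mul_zero] at this
    exact tendsto_sub_nhds_zero_iff.mp (squeeze_zero_norm h1 h2)
  have hflim : ∀ (z : ℕ → H) (z₀ : H), (∀ k, z k ∈ Ω) → z₀ ∈ closure Ω →
      Tendsto z atTop (𝓝 z₀) → Tendsto (fun k => f (z k)) atTop (𝓝 (f z₀)) := by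
    intro z z₀ hzΩ hz₀ hzT
    have hz0 : Tendsto (fun k => ‖z k - z₀‖) atTop (𝓝 0) := by
      have h := (hzT.sub_const z₀).norm
      rw [sub_self, norm_zero] at h
      exact h
    have h1 : ∀ k, ‖f (z k) - f z₀‖ ≤ Γb / 2 * ‖z k - z₀‖ ^ 2 + ‖Df z₀‖ * ‖z k - z₀‖ := by
      intro k
      have ht := hTayb z₀ hz₀ (z k) (subset_closure (hzΩ k))
      have hi := abs_real_inner_le_norm (Df z₀) (z k - z₀)
      have h3 : |f (z k) - f z₀| ≤ |f (z k) - f z₀ - ⟪Df z₀, z k - z₀⟫| + |⟪Df z₀, z k - z₀⟫| := by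
        have := abs_add_le (f (z k) - f z₀ - ⟪Df z₀, z k - z₀⟫) (⟪Df z₀, z k - z₀⟫)
        simpa using this
      rw [Real.norm_eq_abs]
      linarith
    have h2 : Tendsto (fun k => Γb / 2 * ‖z k - z₀‖ ^ 2 + ‖Df z₀‖ * ‖z k - z₀‖)
        atTop (𝓝 0) := by
      have hp : Tendsto (fun k => ‖z k - z₀‖ ^ 2) atTop (𝓝 0) := by
        have := hz0.pow 2
        simpa using this
      have ha' := (hp.const_mul (Γb / 2)).add (hz0.const_mul ‖Df z₀‖)
      simpa using ha'
    exact tendsto_sub_nhds_zero_iff.mp (squeeze_zero_norm h1 h2)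
  have hDu := hDlim u a huΩ ha huT
  have hDv := hDlim v b hvΩ hb hvT
  have hfu := hflim u a huΩ ha huT
  have hfv := hflim v b hvΩ hb hvT
  have hnum : Tendsto (fun k => 2 * |fieldEval f Df (u k) c - fieldEval f Df (v k) c|)
      atTop (𝓝 (2 * |fieldEval f Df a c - fieldEval f Df b c|)) := by
    have h1 : Tendsto (fun k => fieldEval f Df (u k) c) atTop (𝓝 (fieldEval f Df a c)) :=
      hfu.add (hDu.inner (tendsto_const_nhds.sub huT))
    have h2 : Tendsto (fun k => fieldEval f Df (v k) c) atTop (𝓝 (fieldEval f Df b c)) :=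
      hfv.add (hDv.inner (tendsto_const_nhds.sub hvT))
    exact ((h1.sub h2).abs).const_mul 2
  have hden : Tendsto (fun k => ‖u k - c‖ ^ 2 + ‖v k - c‖ ^ 2)
      atTop (𝓝 (‖a - c‖ ^ 2 + ‖b - c‖ ^ 2)) :=
    (((huT.sub_const c).norm.pow 2).add ((hvT.sub_const c).norm.pow 2))
  have hdne : ‖a - c‖ ^ 2 + ‖b - c‖ ^ 2 ≠ 0 := ne_of_gt (den_pos hab c)
  have htm : Tendsto (fun k => tm f Df (u k) (v k) c) atTop (𝓝 (tm f Df a b c)) := by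
    have := hnum.div hden hdne
    exact this
  refine le_of_tendsto htm (hev.mono fun k hk => ?_)
  have hne : u k ≠ v k := norm_sub_pos_iff.mp hk
  exact (tm_le_gammaPair f Df hne c).trans (hmem (u k) (huΩ k) (v k) (hvΩ k) hne)

end Approx
end Stmt6Aux

/-- If `Ω ⊆ ℝⁿ` is nonempty and open and `F = (f, Df)` is a Taylorian
1-field on the closure of `Ω`, then `Γ¹(F;Ω) = max { Lip(Df;Ω), Γ¹(F;∂Ω) }`. -/
theorem stmt_6 {n : ℕ} (hn : 1 ≤ n) (Ω : Set (EuclideanSpace ℝ (Fin n)))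
    (hΩne : Ω.Nonempty) (hΩop : IsOpen Ω)
    (f : EuclideanSpace ℝ (Fin n) → ℝ)
    (Df : EuclideanSpace ℝ (Fin n) → EuclideanSpace ℝ (Fin n))
    (hTay : BddAbove (gammaVals f Df (closure Ω))) :
    gammaOn f Df Ω = max (lipOn Df Ω) (gammaOn f Df (frontier Ω)) := by
  classical
  open Stmt6Aux in
  obtain ⟨Γ₀, hΓ₀⟩ := hTay
  have hub0 : ∀ t ∈ gammaVals f Df (closure Ω), t ≤ Γ₀ := fun t ht => hΓ₀ ht
  set L := lipOn Df Ω with hLdef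
  set Gb := gammaOn f Df (frontier Ω) with hGbdef
  set κ := max L Gb with hκdef
  have hLnn : 0 ≤ L := by
    rw [hLdef, lipOn]
    apply Real.sSup_nonneg
    rintro t ⟨u, hu, v, hv, huv, rfl⟩
    positivity
  have hκ0 : 0 ≤ κ := le_trans hLnn (le_max_left _ _)
  set Γb := max Γ₀ κ with hΓbdef
  have hκΓ : κ ≤ Γb := le_max_right _ _
  have hΓbnn : 0 ≤ Γb := le_trans hκ0 hκΓ
  have hub : ∀ t ∈ gammaVals f Df (closure Ω), t ≤ Γb :=
    fun t ht => (hub0 t ht).trans (le_max_left _ _)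
  have hTayb : ∀ p ∈ closure Ω, ∀ q ∈ closure Ω,
      |f q - f p - ⟪Df p, q - p⟫| ≤ Γb / 2 * ‖q - p‖ ^ 2 :=
    fun p hp q hq => Stmt6Aux.taylor_abs hub hΓbnn hp hq
  have hLipΓ : ∀ p ∈ closure Ω, ∀ q ∈ closure Ω, ‖Df p - Df q‖ ≤ Γb * ‖p - q‖ := by
    intro p hp q hq
    rcases eq_or_ne p q with rfl | hpq
    · simp
    · have h := Stmt6Aux.B_le_gammaPair f Df hpq
      have h2 : gammaPair f Df p q ≤ Γb := hub _ ⟨p, hp, q, hq, hpq, rfl⟩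
      calc ‖Df p - Df q‖ ≤ ‖p - q‖ * gammaPair f Df p q := h
        _ ≤ ‖p - q‖ * Γb := mul_le_mul_of_nonneg_left h2 (norm_nonneg _)
        _ = Γb * ‖p - q‖ := mul_comm _ _
  have hlipbdd : ∀ t ∈ lipVals Df Ω, t ≤ Γb := by
    rintro t ⟨u, hu, v, hv, huv, rfl⟩
    rw [div_le_iff₀ (norm_sub_pos_iff.mpr huv)]
    exact hLipΓ u (subset_closure hu) v (subset_closure hv)
  have hLipΩ : ∀ p ∈ Ω, ∀ q ∈ Ω, ‖Df p - Df q‖ ≤ κ * ‖p - q‖ := by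
    intro p hp q hq
    rcases eq_or_ne p q with rfl | hpq
    · simp
    · have hmem : ‖Df p - Df q‖ / ‖p - q‖ ∈ lipVals Df Ω := ⟨p, hp, q, hq, hpq, rfl⟩
      have hle : ‖Df p - Df q‖ / ‖p - q‖ ≤ L := le_csSup ⟨Γb, hlipbdd⟩ hmem
      have hpq0 : 0 < ‖p - q‖ := norm_sub_pos_iff.mpr hpq
      rw [div_le_iff₀ hpq0] at hle
      calc ‖Df p - Df q‖ ≤ L * ‖p - q‖ := hle
        _ ≤ κ * ‖p - q‖ :=
            mul_le_mul_of_nonneg_right (le_max_left _ _) (norm_nonneg _)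
  have hLipκ : ∀ p ∈ closure Ω, ∀ q ∈ closure Ω, ‖Df p - Df q‖ ≤ κ * ‖p - q‖ := by
    intro p hp q hq
    refine le_of_forall_pos_le_add fun ε hε => ?_
    have hd : (0:ℝ) < 2 * Γb + 2 * κ + 1 := by linarith
    have hε' : 0 < ε / (2 * Γb + 2 * κ + 1) := div_pos hε hd
    obtain ⟨p', hp', hpp'⟩ := Metric.mem_closure_iff.mp hp _ hε'
    obtain ⟨q', hq', hqq'⟩ := Metric.mem_closure_iff.mp hq _ hε'
    rw [dist_eq_norm] at hpp' hqq'
    have h1 : ‖Df p - Df p'‖ ≤ Γb * ‖p - p'‖ := hLipΓ p hp p' (subset_closure hp')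
    have h2 : ‖Df q' - Df q‖ ≤ Γb * ‖q' - q‖ :=
      hLipΓ q' (subset_closure hq') q hq
    have h3 : ‖Df p' - Df q'‖ ≤ κ * ‖p' - q'‖ := hLipΩ p' hp' q' hq'
    have ht1 : ‖Df p - Df q‖ ≤ ‖Df p - Df p'‖ + ‖Df p' - Df q'‖ + ‖Df q' - Df q‖ := by
      have ha' := norm_sub_le_norm_sub_add_norm_sub (Df p) (Df p') (Df q)
      have hb' := norm_sub_le_norm_sub_add_norm_sub (Df p') (Df q') (Df q)
      linarith
    have ht2 : ‖p' - q'‖ ≤ ‖p - p'‖ + ‖p - q‖ + ‖q' - q‖ := by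
      have ha' := norm_sub_le_norm_sub_add_norm_sub p' p q'
      have hb' := norm_sub_le_norm_sub_add_norm_sub p q q'
      have hc' : ‖p' - p‖ = ‖p - p'‖ := norm_sub_rev _ _
      have hd' : ‖q - q'‖ = ‖q' - q‖ := norm_sub_rev _ _
      linarith
    have hup : ‖p - p'‖ ≤ ε / (2 * Γb + 2 * κ + 1) := le_of_lt hpp'
    have huq : ‖q' - q‖ ≤ ε / (2 * Γb + 2 * κ + 1) := by
      rw [norm_sub_rev]; exact le_of_lt hqq'
    have herr : (2 * Γb + 2 * κ) * (ε / (2 * Γb + 2 * κ + 1)) ≤ ε := by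
      rw [mul_div_assoc', div_le_iff₀ hd]
      nlinarith
    linarith [mul_le_mul_of_nonneg_left hup hΓbnn, mul_le_mul_of_nonneg_left huq hΓbnn,
      mul_le_mul_of_nonneg_left hup hκ0, mul_le_mul_of_nonneg_left huq hκ0,
      mul_le_mul_of_nonneg_left ht2 hκ0, herr, ht1, h1, h2, h3]
  -- boundary pair inequality with constant κ
  have hfrsub : gammaVals f Df (frontier Ω) ⊆ gammaVals f Df (closure Ω) := by
    rintro t ⟨u, hu, v, hv, huv, rfl⟩
    exact ⟨u, frontier_subset_closure hu, v, frontier_subset_closure hv, huv, rfl⟩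
  have hubF : ∀ t ∈ gammaVals f Df (frontier Ω), t ≤ κ := by
    intro t ht
    have h1 : t ≤ Gb := le_csSup ⟨Γb, fun t' ht' => hub t' (hfrsub ht')⟩ ht
    exact h1.trans (le_max_right L Gb)
  have hBd : ∀ p ∈ frontier Ω, ∀ q ∈ frontier Ω, ∀ w : EuclideanSpace ℝ (Fin n),
      fieldEval f Df q w - fieldEval f Df p w ≤ κ / 2 * (‖w - p‖ ^ 2 + ‖w - q‖ ^ 2) :=
    fun p hp q hq w => Stmt6Aux.pair_bound hubF hκ0 hp hq w
  -- upper bound : gammaOn Ω ≤ κ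
  have hupper : gammaOn f Df Ω ≤ κ := by
    apply Real.sSup_le _ hκ0
    rintro t ⟨u, hu, v, hv, huv, rfl⟩
    rw [Stmt6Aux.gammaPair_eq_iSup]
    apply Real.iSup_le _ hκ0
    intro c
    have hden := Stmt6Aux.den_pos huv c
    rw [Stmt6Aux.tm, div_le_iff₀ hden]
    have h1 := Stmt6Aux.main_pair hΩop hκ0 hκΓ hTayb hLipκ hBd hu hv c
    have h2 := Stmt6Aux.main_pair hΩop hκ0 hκΓ hTayb hLipκ hBd hv hu c
    have habs : |fieldEval f Df u c - fieldEval f Df v c|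
        ≤ κ / 2 * (‖c - u‖ ^ 2 + ‖c - v‖ ^ 2) := by
      rw [abs_le]
      constructor
      · linarith
      · linarith
    rw [norm_sub_rev u c, norm_sub_rev v c]
    linarith
  -- lower bound 1 : L ≤ gammaOn Ω
  have hgVΩ : gammaVals f Df Ω ⊆ gammaVals f Df (closure Ω) := by
    rintro t ⟨u, hu, v, hv, huv, rfl⟩
    exact ⟨u, subset_closure hu, v, subset_closure hv, huv, rfl⟩
  have hbddΩ : BddAbove (gammaVals f Df Ω) := ⟨Γ₀, fun t ht => hub0 t (hgVΩ ht)⟩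
  have hgamΩnn : 0 ≤ gammaOn f Df Ω := by
    apply Real.sSup_nonneg
    rintro t ⟨u, hu, v, hv, huv, rfl⟩
    exact Stmt6Aux.gammaPair_nonneg f Df huv
  have hlow1 : L ≤ gammaOn f Df Ω := by
    rw [hLdef, lipOn]
    apply Real.sSup_le _ hgamΩnn
    rintro t ⟨u, hu, v, hv, huv, rfl⟩
    have h1 := Stmt6Aux.B_le_gammaPair f Df huv
    have h2 : gammaPair f Df u v ≤ gammaOn f Df Ω :=
      le_csSup hbddΩ ⟨u, hu, v, hv, huv, rfl⟩
    have hpos : 0 < ‖u - v‖ := norm_sub_pos_iff.mpr huv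
    rw [div_le_iff₀ hpos]
    calc ‖Df u - Df v‖ ≤ ‖u - v‖ * gammaPair f Df u v := h1
      _ ≤ ‖u - v‖ * gammaOn f Df Ω := mul_le_mul_of_nonneg_left h2 (norm_nonneg _)
      _ = gammaOn f Df Ω * ‖u - v‖ := mul_comm _ _
  -- lower bound 2 : Gb ≤ gammaOn Ω
  have hlow2 : Gb ≤ gammaOn f Df Ω := by
    rw [hGbdef, gammaOn]
    apply Real.sSup_le _ hgamΩnn
    rintro t ⟨a, ha, b, hb, hab, rfl⟩
    rw [Stmt6Aux.gammaPair_eq_iSup]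
    apply Real.iSup_le _ hgamΩnn
    intro c
    exact Stmt6Aux.tm_closure_le hTayb hLipΓ (frontier_subset_closure ha)
      (frontier_subset_closure hb) hab c
      (fun u hu v hv huv => le_csSup hbddΩ ⟨u, hu, v, hv, huv, rfl⟩)
  exact le_antisymm hupper (max_le hlow1 hlow2)
end
end

section
/- Let Ω ⊆ ℝⁿ be nonempty, let F be a Taylorian 1-field on Ω and set κ := Γ¹(F;Ω). Then for all a, b ∈ Ω one has α_{a,b} ≥ 0, and for every x ∈ ℝⁿ the set Λ_x is nonempty, convex and compact. -/
noncomputable section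

open scoped RealInnerProductSpace

section LeGruyerAux
variable {E : Type*} [NormedAddCommGroup E] [InnerProductSpace ℝ E]
open Finset

/-- Identity I1. -/
lemma lg_I1 (f : E → ℝ) (Df : E → E) (κ : ℝ) (a b t : E) :
    2*κ*(κ/2*(‖a-t‖^2+‖b-t‖^2) + (fieldEval f Df a t - fieldEval f Df b t))
      = alphaab f Df κ a b
        + 2*‖κ•(t - (1/2:ℝ)•(a+b)) + (1/2:ℝ)•(Df a - Df b)‖^2 := by
  simp only [fieldEval, alphaab, ← real_inner_self_eq_norm_sq, inner_add_left, inner_add_right,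
    inner_sub_left, inner_sub_right, real_inner_smul_left, real_inner_smul_right, smul_add, smul_sub, real_inner_comm, starRingEnd_apply, star_trivial]
  ring

/-- I3 : `vab = S a + T b`. -/
lemma lg_I3 (Df : E → E) (κ : ℝ) (x a b : E) :
    vab Df κ a b = ((1/2:ℝ)•Df a + (κ/2)•(x - a)) + ((1/2:ℝ)•Df b - (κ/2)•(x - b)) := by
  simp only [vab]
  module

/-- I5 : `betaab = ‖S a - T b‖²`. -/
lemma lg_I5 (Df : E → E) (κ : ℝ) (x a b : E) :
    betaab Df κ a b x
      = ‖((1/2:ℝ)•Df a + (κ/2)•(x - a)) - ((1/2:ℝ)•Df b - (κ/2)•(x - b))‖^2 := by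
  unfold betaab
  congr 2
  module

/-- I4 : `A a - B b - 2‖S a - T b‖² = alphaab`. -/
lemma lg_I4 (f : E → ℝ) (Df : E → E) (κ : ℝ) (x a b : E) :
    (κ^2*‖a-x‖^2 + 2*κ*(fieldEval f Df a x)) - (2*κ*(fieldEval f Df b x) - κ^2*‖b-x‖^2)
      - 2*‖((1/2:ℝ)•Df a + (κ/2)•(x - a)) - ((1/2:ℝ)•Df b - (κ/2)•(x - b))‖^2
      = alphaab f Df κ a b := by
  simp only [fieldEval, alphaab, ← real_inner_self_eq_norm_sq, inner_add_left, inner_add_right,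
    inner_sub_left, inner_sub_right, real_inner_smul_left, real_inner_smul_right, smul_add,
    smul_sub, real_inner_comm]
  ring


lemma lg_inner_eq (X Y : E) : ⟪X, Y⟫ = (‖X‖^2 + ‖Y‖^2 - ‖X - Y‖^2)/2 := by
  simp only [← real_inner_self_eq_norm_sq, inner_sub_left, inner_sub_right, real_inner_comm]
  ring

lemma lg_cross (S1 T1 S2 T2 : E) :
    2*‖S1 - T2‖^2 + 2*‖S2 - T1‖^2 - ‖S1 - T1‖^2 - ‖S2 - T2‖^2
      - ‖(S1 + T1) - (S2 + T2)‖^2 = 2*⟪S1 - T1, S2 - T2⟫ := by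
  simp only [← real_inner_self_eq_norm_sq, inner_sub_left, inner_sub_right, inner_add_left,
    inner_add_right, real_inner_comm]
  ring

lemma lg_expand_step (v d c : E) (t : ℝ) :
    ‖v + t•d - c‖^2 = ‖v - c‖^2 + 2*t*⟪v - c, d⟫ + t^2*‖d‖^2 := by
  have h : v + t•d - c = (v - c) + t•d := by abel
  rw [h]
  simp only [← real_inner_self_eq_norm_sq, inner_add_left, inner_add_right,
    real_inner_smul_left, real_inner_smul_right, real_inner_comm]
  ring

lemma lg_inner_sum_sum {ι' : Type*} (tt : Finset ι') (w : ι' → ℝ) (y : ι' → E) :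
    ⟪∑ i ∈ tt, w i • y i, ∑ j ∈ tt, w j • y j⟫
      = ∑ i ∈ tt, ∑ j ∈ tt, w i * w j * ⟪y i, y j⟫ := by
  rw [sum_inner]
  refine Finset.sum_congr rfl fun i _ => ?_
  rw [inner_sum]
  refine Finset.sum_congr rfl fun j _ => ?_
  rw [real_inner_smul_left, real_inner_smul_right]
  ring

lemma lg_finite_balls [FiniteDimensional ℝ E] {ι : Type*} (s : Finset ι) (hs : s.Nonempty)
    (S T : ι → E) (A B : ι → ℝ)
    (hAB : ∀ p ∈ s, ∀ q ∈ s, 2 * ‖S p - T q‖^2 ≤ A p - B q) :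
    ∃ v : E, ∀ p ∈ s, ∀ q ∈ s, ‖v - (S p + T q)‖^2 ≤ A p - B q - ‖S p - T q‖^2 := by
  classical
  set ρ : ι × ι → ℝ := fun pq => A pq.1 - B pq.2 - ‖S pq.1 - T pq.2‖^2 with hρdef
  set c : ι × ι → E := fun pq => S pq.1 + T pq.2 with hcdef
  set P : Finset (ι × ι) := s ×ˢ s with hPdef
  have hP : P.Nonempty := hs.product hs
  set g : E → ι × ι → ℝ := fun v pq => ‖v - c pq‖^2 - ρ pq with hgdef
  set h : E → ℝ := fun v => P.sup' hP (g v) with hhdef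
  have hgle : ∀ (v : E) (pq : ι × ι), pq ∈ P → g v pq ≤ h v := fun v pq hpq => le_sup' (g v) hpq
  have hcont : Continuous h := by
    apply Continuous.finset_sup'_apply hP
    intro pq _
    exact ((continuous_id.sub continuous_const).norm.pow 2).sub continuous_const
  obtain ⟨p₀, hp₀⟩ := hs
  have hp₀P : (p₀, p₀) ∈ P := mem_product.2 ⟨hp₀, hp₀⟩
  set v₀ : E := c (p₀, p₀) with hv₀def
  set R : ℝ := Real.sqrt (max 0 (h v₀ + ρ (p₀, p₀))) with hRdef
  have hev : ∀ᶠ x in Filter.cocompact E, h v₀ ≤ h x := by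
    refine Filter.hasBasis_cocompact.eventually_iff.2
      ⟨Metric.closedBall v₀ R, isCompact_closedBall _ _, fun x hx => ?_⟩
    have hxR : R < dist x v₀ := by
      simpa [Metric.mem_closedBall, not_le] using hx
    have hR0 : 0 ≤ R := Real.sqrt_nonneg _
    have hR2 : h v₀ + ρ (p₀, p₀) ≤ R^2 := by
      rw [hRdef, Real.sq_sqrt (le_max_left _ _)]
      exact le_max_right _ _
    have h1 : g x (p₀, p₀) ≤ h x := hgle x _ hp₀P
    have h2 : R^2 ≤ ‖x - v₀‖^2 := by
      have := dist_nonneg (x := x) (y := v₀)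
      have : R^2 ≤ (dist x v₀)^2 := by nlinarith
      simpa [dist_eq_norm] using this
    have : g x (p₀, p₀) = ‖x - v₀‖^2 - ρ (p₀, p₀) := rfl
    linarith
  obtain ⟨v, hv⟩ := hcont.exists_forall_le' v₀ hev
  set m : ℝ := h v with hmdef
  by_cases hm : m ≤ 0
  · refine ⟨v, fun p hp q hq => ?_⟩
    have := hgle v (p, q) (mem_product.2 ⟨hp, hq⟩)
    have hg : g v (p, q) = ‖v - (S p + T q)‖^2 - (A p - B q - ‖S p - T q‖^2) := rfl
    linarith
  push_neg at hm
  exfalso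
  set Tact : Finset (ι × ι) := P.filter (fun pq => g v pq = m) with hTdef
  obtain ⟨pq₀, hpq₀P, hpq₀⟩ := P.exists_mem_eq_sup' hP (g v)
  have hTne : Tact.Nonempty := ⟨pq₀, mem_filter.2 ⟨hpq₀P, hpq₀.symm⟩⟩
  have hTact : ∀ pq ∈ Tact, ‖v - c pq‖^2 = m + ρ pq := by
    intro pq hpq
    have := (mem_filter.1 hpq).2
    simp only [hgdef] at this
    linarith
  have hTP : ∀ pq ∈ Tact, pq ∈ P := fun pq hpq => (mem_filter.1 hpq).1
  set K : Set E := convexHull ℝ (c '' ↑Tact) with hKdef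
  have hKconv : Convex ℝ K := convex_convexHull ℝ _
  have hKclosed : IsClosed K := ((Tact.finite_toSet.image c).isCompact_convexHull ℝ).isClosed
  have hKne : K.Nonempty := by
    obtain ⟨pq, hpq⟩ := hTne
    exact ⟨c pq, subset_convexHull ℝ _ ⟨pq, hpq, rfl⟩⟩
  have hcK : ∀ pq ∈ Tact, c pq ∈ K := fun pq hpq => subset_convexHull ℝ _ ⟨pq, hpq, rfl⟩
  -- v is in the convex hull of active centers
  have hvK : v ∈ K := by
    by_contra hvK
    obtain ⟨p, hpK, hproj⟩ := exists_norm_eq_iInf_of_complete_convex hKne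
      (hKclosed.isComplete) hKconv v
    have hchar : ∀ w ∈ K, ⟪v - p, w - p⟫ ≤ 0 :=
      (norm_eq_iInf_iff_real_inner_le_zero hKconv hpK).1 hproj
    set d : E := p - v with hddef
    have hd : d ≠ 0 := by
      rw [hddef, sub_ne_zero]
      rintro rfl
      exact hvK hpK
    have hdn : 0 < ‖d‖ := norm_pos_iff.2 hd
    have hdpos : 0 < ‖d‖^2 := by positivity
    have hkey : ∀ pq ∈ Tact, ⟪v - c pq, d⟫ ≤ -‖d‖^2 := by
      intro pq hpq
      have hsplit : v - c pq = (v - p) + (p - c pq) := by abel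
      have h1 : ⟪v - p, d⟫ = -‖d‖^2 := by
        rw [hddef]
        rw [show v - p = -(p - v) by abel, inner_neg_left, real_inner_self_eq_norm_sq]
      have h2 : ⟪p - c pq, d⟫ ≤ 0 := by
        have hch := hchar (c pq) (hcK pq hpq)
        have heq : ⟪p - c pq, d⟫ = ⟪v - p, c pq - p⟫ := by
          rw [hddef, show p - c pq = -(c pq - p) from by abel,
            show p - v = -(v - p) from by abel, inner_neg_neg, real_inner_comm]
        rw [heq]
        exact hch
      rw [hsplit, inner_add_left]
      linarith
    -- step size selection
    set Cm : ℝ := P.sup' hP (fun pq => 2*|⟪v - c pq, d⟫| + ‖d‖^2) with hCmdef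
    have hCmpos : 0 < Cm := by
      have : 2*|⟪v - c pq₀, d⟫| + ‖d‖^2 ≤ Cm :=
        le_sup' (fun pq => 2*|⟪v - c pq, d⟫| + ‖d‖^2) hpq₀P
      have := abs_nonneg (⟪v - c pq₀, d⟫)
      linarith
    have hstep : ∀ (t : ℝ), 0 < t → t ≤ 1 → ∀ pq ∈ P,
        g (v + t•d) pq ≤ g v pq + t * Cm := by
      intro t ht0 ht1 pq hpq
      have hex : g (v + t•d) pq = g v pq + 2*t*⟪v - c pq, d⟫ + t^2*‖d‖^2 := by
        simp only [hgdef]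
        rw [lg_expand_step]
        ring
      have habs : 2*⟪v - c pq, d⟫ ≤ 2*|⟪v - c pq, d⟫| := by
        have := le_abs_self (⟪v - c pq, d⟫); linarith
      have hCle : 2*|⟪v - c pq, d⟫| + ‖d‖^2 ≤ Cm :=
        le_sup' (fun pq => 2*|⟪v - c pq, d⟫| + ‖d‖^2) hpq
      have e1 : t*(2*⟪v - c pq, d⟫) ≤ t*(2*|⟪v - c pq, d⟫|) :=
        mul_le_mul_of_nonneg_left habs ht0.le
      have e2 : t^2*‖d‖^2 ≤ t*‖d‖^2 :=
        mul_le_mul_of_nonneg_right (by nlinarith) (by positivity)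
      have e3 : t*(2*|⟪v - c pq, d⟫| + ‖d‖^2) ≤ t*Cm := mul_le_mul_of_nonneg_left hCle ht0.le
      nlinarith
    set Pin : Finset (ι × ι) := P.filter (fun pq => g v pq ≠ m) with hPindef
    have hεget : ∃ t : ℝ, 0 < t ∧ t ≤ 1 ∧ ∀ pq ∈ Pin, t * Cm < m - g v pq := by
      by_cases hPin : Pin.Nonempty
      · set ε : ℝ := Pin.inf' hPin (fun pq => m - g v pq) with hεdef
        have hε : 0 < ε := by
          rw [hεdef, Finset.lt_inf'_iff]
          intro pq hpq
          obtain ⟨hpqP, hne⟩ := mem_filter.1 hpq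
          have := hgle v pq hpqP
          rw [← hmdef] at this
          exact sub_pos.2 (lt_of_le_of_ne this hne)
        refine ⟨min 1 (ε / (2*Cm)), lt_min one_pos (by positivity), min_le_left _ _, ?_⟩
        intro pq hpq
        have h1 : min 1 (ε / (2*Cm)) ≤ ε / (2*Cm) := min_le_right _ _
        have h2 : ε ≤ m - g v pq := Finset.inf'_le _ hpq
        have hCm0 : Cm ≠ 0 := ne_of_gt hCmpos
        have h4 : (ε / (2*Cm)) * Cm = ε / 2 := by field_simp
        have h3 : min 1 (ε / (2*Cm)) * Cm ≤ ε / 2 := by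
          rw [← h4]
          exact mul_le_mul_of_nonneg_right h1 (le_of_lt hCmpos)
        have h5 : ε / 2 < ε := by linarith
        exact lt_of_le_of_lt h3 (lt_of_lt_of_le h5 h2)
      · exact ⟨1, one_pos, le_refl 1, fun pq hpq => absurd ⟨pq, hpq⟩ hPin⟩
    obtain ⟨t, ht0, ht1, htin⟩ := hεget
    have hlt : P.sup' hP (g (v + t•d)) < m := by
      rw [Finset.sup'_lt_iff]
      intro pq hpq
      by_cases hact : g v pq = m
      · -- active
        have hex : g (v + t•d) pq = g v pq + 2*t*⟪v - c pq, d⟫ + t^2*‖d‖^2 := by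
          simp only [hgdef]
          rw [lg_expand_step]
          ring
        have hk := hkey pq (mem_filter.2 ⟨hpq, hact⟩)
        rw [hex, hact]
        have h2t : 2*t*⟪v - c pq, d⟫ ≤ 2*t*(-‖d‖^2) :=
          mul_le_mul_of_nonneg_left hk (by linarith)
        have htsq : t^2 ≤ t := by nlinarith
        have ht2 : t^2*‖d‖^2 ≤ t*‖d‖^2 := mul_le_mul_of_nonneg_right htsq hdpos.le
        have htd : 0 < t*‖d‖^2 := mul_pos ht0 hdpos
        linarith
      · -- inactive
        have := hstep t ht0 ht1 pq hpq
        have := htin pq (mem_filter.2 ⟨hpq, hact⟩)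
        linarith
    have hle := hv (v + t•d)
    have hre : h (v + t•d) = P.sup' hP (g (v + t•d)) := rfl
    rw [hre] at hle
    linarith
  -- extract convex combination
  rw [hKdef, _root_.convexHull_eq] at hvK
  obtain ⟨ι', tt, w, z, hw0, hw1, hz, hcm⟩ := hvK
  rw [Finset.centerMass_eq_of_sum_1 _ _ hw1] at hcm
  have hzpick : ∀ i : ι', ∃ pq : ι × ι, i ∈ tt → (pq ∈ Tact ∧ c pq = z i) := by
    intro i
    by_cases hi : i ∈ tt
    · obtain ⟨pq, hpq, hcz⟩ := hz i hi
      exact ⟨pq, fun _ => ⟨hpq, hcz⟩⟩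
    · exact ⟨pq₀, fun h => absurd h hi⟩
  choose pk hpk using hzpick
  set u : ι' → E := fun i => S (pk i).1 - T (pk i).2 with hudef
  -- key pairwise bound
  have hpair : ∀ i ∈ tt, ∀ j ∈ tt, m + ⟪u i, u j⟫ ≤ ⟪v - z i, v - z j⟫ := by
    intro i hi j hj
    obtain ⟨hiT, hiz⟩ := hpk i hi
    obtain ⟨hjT, hjz⟩ := hpk j hj
    obtain ⟨hip, hiq⟩ := mem_product.1 (hTP _ hiT)
    obtain ⟨hjp, hjq⟩ := mem_product.1 (hTP _ hjT)
    have hni : ‖v - z i‖^2 = m + ρ (pk i) := by rw [← hiz]; exact hTact _ hiT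
    have hnj : ‖v - z j‖^2 = m + ρ (pk j) := by rw [← hjz]; exact hTact _ hjT
    have hcr := lg_cross (S (pk i).1) (T (pk i).2) (S (pk j).1) (T (pk j).2)
    have hAB1 := hAB (pk i).1 hip (pk j).2 hjq
    have hAB2 := hAB (pk j).1 hjp (pk i).2 hiq
    have hinner : ⟪v - z i, v - z j⟫
        = (‖v - z i‖^2 + ‖v - z j‖^2 - ‖z i - z j‖^2)/2 := by
      rw [lg_inner_eq (v - z i) (v - z j),
        show (v - z i) - (v - z j) = -(z i - z j) from by abel, norm_neg]
    have hzz : ‖z i - z j‖^2 = ‖(S (pk i).1 + T (pk i).2) - (S (pk j).1 + T (pk j).2)‖^2 := by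
      rw [← hiz, ← hjz]
    have hρi : ρ (pk i) = A (pk i).1 - B (pk i).2 - ‖S (pk i).1 - T (pk i).2‖^2 := rfl
    have hρj : ρ (pk j) = A (pk j).1 - B (pk j).2 - ‖S (pk j).1 - T (pk j).2‖^2 := rfl
    have hui : u i = S (pk i).1 - T (pk i).2 := rfl
    have huj : u j = S (pk j).1 - T (pk j).2 := rfl
    rw [hinner, hni, hnj, hzz, hρi, hρj, hui, huj]
    linarith
  -- final contradiction
  have hzero : ∑ i ∈ tt, w i • (v - z i) = 0 := by
    have : ∑ i ∈ tt, w i • (v - z i) = (∑ i ∈ tt, w i) • v - ∑ i ∈ tt, w i • z i := by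
      rw [Finset.sum_smul]
      rw [← Finset.sum_sub_distrib]
      congr 1
      ext i
      rw [smul_sub]
    rw [this, hw1, hcm, one_smul, sub_self]
  have hdouble := lg_inner_sum_sum tt w (fun i => v - z i)
  have hudouble := lg_inner_sum_sum tt w u
  have hexpand : (0:ℝ) = ∑ i ∈ tt, ∑ j ∈ tt, w i * w j * ⟪v - z i, v - z j⟫ := by
    rw [← hdouble, hzero]
    simp
  have hmm : ∑ i ∈ tt, ∑ j ∈ tt, w i * w j * m = m := by
    have h1 : ∀ i ∈ tt, ∑ j ∈ tt, w i * w j * m = w i * m := fun i _ => by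
      rw [← Finset.sum_mul, ← Finset.mul_sum, hw1, mul_one]
    rw [Finset.sum_congr rfl h1, ← Finset.sum_mul, hw1, one_mul]
  have hsplit2 : ∑ i ∈ tt, ∑ j ∈ tt, w i * w j * (m + ⟪u i, u j⟫)
      = (∑ i ∈ tt, ∑ j ∈ tt, w i * w j * m) + ∑ i ∈ tt, ∑ j ∈ tt, w i * w j * ⟪u i, u j⟫ := by
    rw [← Finset.sum_add_distrib]
    refine Finset.sum_congr rfl fun i _ => ?_
    rw [← Finset.sum_add_distrib]
    refine Finset.sum_congr rfl fun j _ => ?_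
    ring
  have hsum : ∑ i ∈ tt, ∑ j ∈ tt, w i * w j * (m + ⟪u i, u j⟫)
      ≤ ∑ i ∈ tt, ∑ j ∈ tt, w i * w j * ⟪v - z i, v - z j⟫ := by
    apply Finset.sum_le_sum
    intro i hi
    apply Finset.sum_le_sum
    intro j hj
    exact mul_le_mul_of_nonneg_left (hpair i hi j hj)
      (mul_nonneg (hw0 i hi) (hw0 j hj))
  have hinner0 : (0:ℝ) ≤ ⟪∑ i ∈ tt, w i • u i, ∑ i ∈ tt, w i • u i⟫ := real_inner_self_nonneg
  rw [hsplit2, hmm, ← hudouble] at hsum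
  linarith


lemma lg_balls [FiniteDimensional ℝ E] {ι : Type*} (Ω' : Set ι) (hne : Ω'.Nonempty)
    (S T : ι → E) (A B : ι → ℝ)
    (hAB : ∀ p ∈ Ω', ∀ q ∈ Ω', 2 * ‖S p - T q‖^2 ≤ A p - B q) :
    ∃ v : E, ∀ p ∈ Ω', ∀ q ∈ Ω', ‖v - (S p + T q)‖^2 ≤ A p - B q - ‖S p - T q‖^2 := by
  classical
  obtain ⟨a₀, ha₀⟩ := hne
  set K : Ω' × Ω' → Set E := fun pq =>
    Metric.closedBall (S ↑pq.1 + T ↑pq.2)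
      (Real.sqrt (A ↑pq.1 - B ↑pq.2 - ‖S ↑pq.1 - T ↑pq.2‖^2)) with hKdef
  have hmemK : ∀ (v : E) (pq : Ω' × Ω'),
      (‖v - (S ↑pq.1 + T ↑pq.2)‖^2 ≤ A ↑pq.1 - B ↑pq.2 - ‖S ↑pq.1 - T ↑pq.2‖^2) ↔ v ∈ K pq := by
    intro v pq
    rw [hKdef]
    simp only [Metric.mem_closedBall, dist_eq_norm]
    constructor
    · intro h
      rw [show ‖v - (S ↑pq.1 + T ↑pq.2)‖ = Real.sqrt (‖v - (S ↑pq.1 + T ↑pq.2)‖^2) from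
        (Real.sqrt_sq (norm_nonneg _)).symm]
      exact Real.sqrt_le_sqrt h
    · intro h
      have hρ : 0 ≤ A ↑pq.1 - B ↑pq.2 - ‖S ↑pq.1 - T ↑pq.2‖^2 := by
        have := hAB _ pq.1.2 _ pq.2.2
        nlinarith [sq_nonneg ‖S ↑pq.1 - T ↑pq.2‖]
      have h2 := pow_le_pow_left₀ (norm_nonneg _) h 2
      rwa [Real.sq_sqrt hρ] at h2
  have hKcl : ∀ pq, IsClosed (K pq) := fun pq => Metric.isClosed_closedBall
  set i₀ : Ω' × Ω' := (⟨a₀, ha₀⟩, ⟨a₀, ha₀⟩) with hi₀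
  have hKcomp : IsCompact (K i₀) := isCompact_closedBall _ _
  have hInter : (K i₀ ∩ ⋂ pq, K pq).Nonempty := by
    by_contra hcon
    rw [Set.not_nonempty_iff_eq_empty] at hcon
    obtain ⟨t, ht⟩ := hKcomp.elim_finite_subfamily_closed K hKcl hcon
    set u : Finset ι :=
      insert a₀ ((t.image fun pq => (↑pq.1 : ι)) ∪ (t.image fun pq => (↑pq.2 : ι))) with hu
    have humem : ∀ y ∈ u, y ∈ Ω' := by
      intro y hy
      rcases Finset.mem_insert.1 hy with rfl | hy'
      · exact ha₀
      rcases Finset.mem_union.1 hy' with hy2 | hy2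
      · obtain ⟨pq, _, rfl⟩ := Finset.mem_image.1 hy2
        exact pq.1.2
      · obtain ⟨pq, _, rfl⟩ := Finset.mem_image.1 hy2
        exact pq.2.2
    obtain ⟨v, hv⟩ := lg_finite_balls u ⟨a₀, Finset.mem_insert_self _ _⟩ S T A B
      (fun p hp q hq => hAB p (humem p hp) q (humem q hq))
    have hvi : v ∈ K i₀ ∩ ⋂ pq ∈ t, K pq := by
      constructor
      · exact (hmemK v i₀).1 (hv a₀ (Finset.mem_insert_self _ _) a₀ (Finset.mem_insert_self _ _))
      · refine Set.mem_iInter₂.2 fun pq hpq => (hmemK v pq).1 ?_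
        apply hv
        · exact Finset.mem_insert_of_mem
            (Finset.mem_union_left _ (Finset.mem_image_of_mem _ hpq))
        · exact Finset.mem_insert_of_mem
            (Finset.mem_union_right _ (Finset.mem_image_of_mem _ hpq))
    rw [ht] at hvi
    exact hvi
  obtain ⟨v, _, hv⟩ := hInter
  refine ⟨v, fun p hp q hq => ?_⟩
  exact (hmemK v (⟨p, hp⟩, ⟨q, hq⟩)).2 (Set.mem_iInter.1 hv _)

lemma lg_kappa_nonneg (f : E → ℝ) (Df : E → E) (Ω : Set E) : 0 ≤ gammaOn f Df Ω := by
  apply Real.sSup_nonneg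
  rintro x ⟨a, _, b, _, _, rfl⟩
  apply Real.iSup_nonneg
  intro t
  positivity

lemma lg_taylor (f : E → ℝ) (Df : E → E) (Ω : Set E) (hTay : BddAbove (gammaVals f Df Ω))
    {a b : E} (ha : a ∈ Ω) (hb : b ∈ Ω) (t : E) :
    |fieldEval f Df a t - fieldEval f Df b t|
      ≤ gammaOn f Df Ω / 2 * (‖a - t‖^2 + ‖b - t‖^2) := by
  by_cases hab : a = b
  · subst hab
    have h0 : fieldEval f Df a t - fieldEval f Df a t = 0 := sub_self _
    rw [h0, abs_zero]
    have := lg_kappa_nonneg f Df Ω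
    positivity
  set κ : ℝ := gammaOn f Df Ω with hκdef
  set m : E := (1/2:ℝ) • (a+b) with hmdef
  set u : E := Df a - Df b with hudef
  set Nm : ℝ := fieldEval f Df a m - fieldEval f Df b m with hNmdef
  have hd : (0:ℝ) < ‖a - b‖^2/2 := by
    have : a - b ≠ 0 := sub_ne_zero.2 hab
    have : 0 < ‖a - b‖ := norm_pos_iff.2 this
    positivity
  -- numerator bound
  have hN : ∀ s : E, |fieldEval f Df a s - fieldEval f Df b s| ≤ |Nm| + ‖u‖*‖s - m‖ := by
    intro s
    have hdec : fieldEval f Df a s - fieldEval f Df b s = Nm + ⟪u, s - m⟫ := by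
      simp only [hNmdef, hudef, hmdef, fieldEval, inner_sub_left, inner_sub_right,
        inner_add_left, inner_add_right, real_inner_smul_left, real_inner_smul_right,
        smul_add, real_inner_comm]
      ring
    rw [hdec]
    calc |Nm + ⟪u, s - m⟫| ≤ |Nm| + |⟪u, s - m⟫| := abs_add_le _ _
      _ ≤ |Nm| + ‖u‖*‖s - m‖ := by
          have := abs_real_inner_le_norm u (s - m)
          linarith
  -- denominator identity
  have hden : ∀ s : E, ‖a - s‖^2 + ‖b - s‖^2 = 2*‖s - m‖^2 + ‖a - b‖^2/2 := by
    intro s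
    simp only [hmdef, ← real_inner_self_eq_norm_sq, inner_sub_left, inner_sub_right,
      inner_add_left, inner_add_right, real_inner_smul_left, real_inner_smul_right,
      smul_add, real_inner_comm]
    ring
  have hdenpos : ∀ s : E, (0:ℝ) < ‖a - s‖^2 + ‖b - s‖^2 := by
    intro s
    rw [hden s]
    have : (0:ℝ) ≤ ‖s - m‖^2 := sq_nonneg _
    linarith
  set dd : ℝ := ‖a - b‖^2/2 with hdddef
  set C : ℝ := 2*|Nm| + ‖u‖^2 with hCdef
  have hC : (0:ℝ) ≤ C := by positivity
  set M : ℝ := (2*C + dd)/(2*dd) with hMdef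
  have hQb : ∀ s : E,
      2 * |fieldEval f Df a s - fieldEval f Df b s| / (‖a - s‖^2 + ‖b - s‖^2) ≤ M := by
    intro s
    set ss : ℝ := ‖s - m‖ with hssdef
    have hss : (0:ℝ) ≤ ss := norm_nonneg _
    have h1 : 2*|fieldEval f Df a s - fieldEval f Df b s| ≤ C + ss^2 := by
      have := hN s
      nlinarith [sq_nonneg (‖u‖ - ss)]
    rw [hMdef, div_le_div_iff₀ (hdenpos s) (by positivity)]
    rw [hden s]
    nlinarith [mul_le_mul_of_nonneg_left h1 (by positivity : (0:ℝ) ≤ 2*dd),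
      mul_nonneg hC (sq_nonneg ss), sq_nonneg dd]
  have hbdd : BddAbove (Set.range fun s : E =>
      2 * |fieldEval f Df a s - fieldEval f Df b s| / (‖a - s‖^2 + ‖b - s‖^2)) := by
    refine ⟨M, ?_⟩
    rintro _ ⟨s, rfl⟩
    exact hQb s
  have hgp : (⨆ s : E, 2 * |fieldEval f Df a s - fieldEval f Df b s| / (‖a - s‖^2 + ‖b - s‖^2))
      ≤ κ := by
    have hmem : gammaPair f Df a b ∈ gammaVals f Df Ω := ⟨a, ha, b, hb, hab, rfl⟩
    have := le_csSup hTay hmem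
    exact this
  have hQt := (le_ciSup hbdd t).trans hgp
  rw [div_le_iff₀ (hdenpos t)] at hQt
  linarith

lemma lg_alpha_nonneg (f : E → ℝ) (Df : E → E) (Ω : Set E) (hTay : BddAbove (gammaVals f Df Ω))
    {a b : E} (ha : a ∈ Ω) (hb : b ∈ Ω) :
    0 ≤ alphaab f Df (gammaOn f Df Ω) a b := by
  set κ : ℝ := gammaOn f Df Ω with hκdef
  rcases eq_or_lt_of_le (lg_kappa_nonneg f Df Ω) with hκ0 | hκpos
  · -- κ = 0
    have hzero : ∀ t : E, fieldEval f Df a t - fieldEval f Df b t = 0 := by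
      intro t
      have := lg_taylor f Df Ω hTay ha hb t
      have hκ0' : gammaOn f Df Ω = 0 := hκ0.symm
      rw [hκ0'] at this
      have habs : |fieldEval f Df a t - fieldEval f Df b t| ≤ 0 := by
        have h1 : (0:ℝ) ≤ ‖a - t‖^2 + ‖b - t‖^2 := by positivity
        nlinarith
      exact abs_nonpos_iff.1 habs
    have hu : Df a - Df b = 0 := by
      have h1 := hzero (b + (Df a - Df b))
      have h2 := hzero b
      rw [← inner_self_eq_zero (𝕜 := ℝ)]
      simp only [fieldEval, inner_sub_left, inner_sub_right, inner_add_left,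
        inner_add_right, real_inner_comm] at h1 h2 ⊢
      linarith
    have hκ0' : gammaOn f Df Ω = 0 := hκ0.symm
    have hgoal : alphaab f Df κ a b = alphaab f Df 0 a b := by rw [hκdef, hκ0']
    rw [hgoal]
    simp only [alphaab, hu, norm_zero]
    norm_num
  · -- κ > 0
    set ts : E := (1/2:ℝ)•(a+b) - (1/(2*κ))•(Df a - Df b) with htsdef
    have hG := lg_taylor f Df Ω hTay ha hb ts
    have hI1 := lg_I1 f Df κ a b ts
    have hsq : κ•(ts - (1/2:ℝ)•(a+b)) + (1/2:ℝ)•(Df a - Df b) = 0 := by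
      have h1 : ts - (1/2:ℝ)•(a+b) = -((1/(2*κ))•(Df a - Df b)) := by
        rw [htsdef]; abel
      rw [h1, smul_neg, smul_smul]
      have hκne : κ ≠ 0 := ne_of_gt hκpos
      have h2 : κ * (1/(2*κ)) = 1/2 := by field_simp
      rw [h2]
      exact neg_add_cancel _
    rw [hsq] at hI1
    simp only [norm_zero] at hI1
    have hGpos : 0 ≤ κ/2*(‖a-ts‖^2+‖b-ts‖^2) + (fieldEval f Df a ts - fieldEval f Df b ts) := by
      have := neg_abs_le (fieldEval f Df a ts - fieldEval f Df b ts)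
      linarith
    nlinarith

end LeGruyerAux

/-- Let `F = (f, Df)` be a Taylorian 1-field on a nonempty `Ω ⊆ ℝⁿ` and set
`κ := Γ¹(F;Ω)`. Then `α_{a,b} ≥ 0` for all `a, b ∈ Ω`, and for every `x ∈ ℝⁿ` the set `Λ_x`
is nonempty, convex and compact. -/
theorem stmt_7 {n : ℕ} (hn : 1 ≤ n) (Ω : Set (EuclideanSpace ℝ (Fin n)))
    (hΩne : Ω.Nonempty)
    (f : EuclideanSpace ℝ (Fin n) → ℝ)
    (Df : EuclideanSpace ℝ (Fin n) → EuclideanSpace ℝ (Fin n))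
    (hTay : BddAbove (gammaVals f Df Ω)) :
    (∀ a ∈ Ω, ∀ b ∈ Ω, 0 ≤ alphaab f Df (gammaOn f Df Ω) a b) ∧
      ∀ x : EuclideanSpace ℝ (Fin n),
        (Lambda f Df (gammaOn f Df Ω) Ω x).Nonempty ∧
        Convex ℝ (Lambda f Df (gammaOn f Df Ω) Ω x) ∧
        IsCompact (Lambda f Df (gammaOn f Df Ω) Ω x) := by
  classical
  set κ : ℝ := gammaOn f Df Ω with hκdef
  have halpha : ∀ a ∈ Ω, ∀ b ∈ Ω, 0 ≤ alphaab f Df κ a b :=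
    fun a ha b hb => lg_alpha_nonneg f Df Ω hTay ha hb
  refine ⟨halpha, fun x => ?_⟩
  set Sf : EuclideanSpace ℝ (Fin n) → EuclideanSpace ℝ (Fin n) :=
    fun p => (1/2:ℝ)•Df p + (κ/2)•(x - p) with hSf
  set Tf : EuclideanSpace ℝ (Fin n) → EuclideanSpace ℝ (Fin n) :=
    fun q => (1/2:ℝ)•Df q - (κ/2)•(x - q) with hTf
  set Af : EuclideanSpace ℝ (Fin n) → ℝ :=
    fun p => κ^2*‖p-x‖^2 + 2*κ*(fieldEval f Df p x) with hAf
  set Bf : EuclideanSpace ℝ (Fin n) → ℝ :=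
    fun q => 2*κ*(fieldEval f Df q x) - κ^2*‖q-x‖^2 with hBf
  have hkey : ∀ a b : EuclideanSpace ℝ (Fin n), Af a - Bf b - ‖Sf a - Tf b‖^2
      = alphaab f Df κ a b + betaab Df κ a b x := by
    intro a b
    have h4 := lg_I4 f Df κ x a b
    have h5 := lg_I5 Df κ x a b
    simp only [hSf, hTf, hAf, hBf]
    linarith
  have hball : ∀ p ∈ Ω, ∀ q ∈ Ω, 2*‖Sf p - Tf q‖^2 ≤ Af p - Bf q := by
    intro p hp q hq
    have h4 := lg_I4 f Df κ x p q
    have := halpha p hp q hq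
    simp only [hSf, hTf, hAf, hBf]
    linarith
  have hmem : ∀ v : EuclideanSpace ℝ (Fin n),
      (∀ a ∈ Ω, ∀ b ∈ Ω, ‖v - (Sf a + Tf b)‖^2 ≤ Af a - Bf b - ‖Sf a - Tf b‖^2)
      → v ∈ Lambda f Df κ Ω x := by
    intro v hv
    simp only [Lambda, Set.mem_setOf_eq]
    intro a ha b hb
    have h3 := lg_I3 Df κ x a b
    have hv' := hv a ha b hb
    rw [hkey a b] at hv'
    rw [rab, show vab Df κ a b = Sf a + Tf b from h3,
      show ‖v - (Sf a + Tf b)‖ = Real.sqrt (‖v - (Sf a + Tf b)‖^2) from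
        (Real.sqrt_sq (norm_nonneg _)).symm]
    exact Real.sqrt_le_sqrt hv'
  have hiI : Lambda f Df κ Ω x
      = ⋂ a ∈ Ω, ⋂ b ∈ Ω, Metric.closedBall (vab Df κ a b) (rab f Df κ a b x) := by
    ext v
    simp only [Lambda, Set.mem_setOf_eq, Set.mem_iInter, Metric.mem_closedBall, dist_eq_norm]
  refine ⟨?_, ?_, ?_⟩
  · obtain ⟨v, hv⟩ := lg_balls Ω hΩne Sf Tf Af Bf hball
    exact ⟨v, hmem v hv⟩
  · rw [hiI]
    exact convex_iInter fun a => convex_iInter fun _ =>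
      convex_iInter fun b => convex_iInter fun _ => convex_closedBall _ _
  · have hclosed : IsClosed (Lambda f Df κ Ω x) := by
      rw [hiI]
      exact isClosed_iInter fun a => isClosed_iInter fun _ =>
        isClosed_iInter fun b => isClosed_iInter fun _ => Metric.isClosed_closedBall
    obtain ⟨a₀, ha₀⟩ := hΩne
    apply IsCompact.of_isClosed_subset
      (isCompact_closedBall (vab Df κ a₀ a₀) (rab f Df κ a₀ a₀ x)) hclosed
    intro v hv
    rw [Metric.mem_closedBall, dist_eq_norm]
    exact hv a₀ ha₀ a₀ ha₀
end
end

section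
/- Let Ω ⊆ ℝⁿ be nonempty, let F be a Taylorian 1-field on Ω with κ := Γ¹(F;Ω) > 0, and fix x ∈ ℝⁿ. Then there exists a unique v⁺ ∈ Λ_x such that inf_{a∈Ω} Ψ⁺(F,x,a,v⁺) = sup_{v∈Λ_x} inf_{a∈Ω} Ψ⁺(F,x,a,v); i.e. the map v ↦ inf_{a∈Ω} Ψ⁺(F,x,a,v) attains its maximum on Λ_x at a unique point. -/
noncomputable section

open scoped RealInnerProductSpace

section AuxAlgebra

variable {H : Type*} [NormedAddCommGroup H] [InnerProductSpace ℝ H]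

/-- parallelogram-type median identity -/
lemma median_identity (p q v : H) : ‖v - p‖^2 + ‖v - q‖^2
    = 2*‖v - (1/2:ℝ)•(p+q)‖^2 + ‖p-q‖^2/2 := by
  have h := parallelogram_law_with_norm ℝ (v - (1/2:ℝ)•(p+q)) ((1/2:ℝ)•(p-q))
  have e1 : v - (1/2:ℝ)•(p+q) + (1/2:ℝ)•(p-q) = v - q := by module
  have e2 : v - (1/2:ℝ)•(p+q) - (1/2:ℝ)•(p-q) = v - p := by module
  have e3 : ‖(1/2:ℝ)•(p-q)‖ = (1/2) * ‖p - q‖ := by rw [norm_smul]; norm_num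
  rw [e1, e2, e3] at h
  nlinarith [h]

/-- the `u` vector -/
def uu (Df : H → H) (κ : ℝ) (x a : H) : H := Df a + κ • (x - a)

/-- the `w` vector -/
def ww (Df : H → H) (κ : ℝ) (x a : H) : H := Df a - κ • (x - a)

/-- the `P` value -/
def PP (f : H → ℝ) (Df : H → H) (κ : ℝ) (x a : H) : ℝ :=
  f a + ⟪Df a, x - a⟫ + κ/2 * ‖x - a‖^2

/-- the `N` value -/
def NN (f : H → ℝ) (Df : H → H) (κ : ℝ) (x a : H) : ℝ :=
  f a + ⟪Df a, x - a⟫ - κ/2 * ‖x - a‖^2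

lemma A1 (f : H → ℝ) (Df : H → H) (κ : ℝ) (hκ : κ ≠ 0) (x a v : H) :
    PsiPlus f Df κ x a v = PP f Df κ x a - ‖v - uu Df κ x a‖^2/(4*κ) := by
  have e0 : v - uu Df κ x a = -((Df a - v) + κ•(x-a)) := by rw [uu]; module
  rw [PsiPlus, PP, e0, norm_neg, norm_add_sq_real, real_inner_smul_right, norm_smul,
    norm_sub_rev a x, inner_add_left, inner_sub_left]
  simp only [Real.norm_eq_abs, mul_pow, sq_abs]
  field_simp
  ring

lemma A2 (f : H → ℝ) (Df : H → H) (κ : ℝ) (hκ : κ ≠ 0) (x a v : H) :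
    PsiMinus f Df κ x a v = NN f Df κ x a + ‖v - ww Df κ x a‖^2/(4*κ) := by
  have e0 : v - ww Df κ x a = -((Df a - v) - κ•(x-a)) := by rw [ww]; module
  have en : ‖(Df a - v) - κ•(x-a)‖^2
      = ‖Df a - v‖^2 - 2*(κ*⟪Df a - v, x-a⟫) + κ^2*‖x-a‖^2 := by
    rw [norm_sub_sq_real, real_inner_smul_right, norm_smul]
    simp only [Real.norm_eq_abs, mul_pow, sq_abs]
  have ei : ⟪Df a + v, x-a⟫ = 2*⟪Df a, x-a⟫ - ⟪Df a - v, x-a⟫ := by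
    rw [inner_add_left, inner_sub_left]; ring
  rw [PsiMinus, NN, e0, norm_neg, en, ei, norm_sub_rev a x]
  field_simp
  ring

lemma A3 (Df : H → H) (κ : ℝ) (x a b : H) :
    vab Df κ a b = (1/2:ℝ) • (uu Df κ x a + ww Df κ x b) := by
  rw [vab, uu, ww]; module

lemma A5 (Df : H → H) (κ : ℝ) (x a b : H) :
    betaab Df κ a b x = ‖uu Df κ x a - ww Df κ x b‖^2/4 := by
  have e0 : uu Df κ x a - ww Df κ x b
      = (2:ℝ) • ((1 / 2 : ℝ) • (Df a - Df b) + (κ / 2) • ((2 : ℝ) • x - a - b)) := by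
    rw [uu, ww]; module
  rw [betaab, e0, norm_smul]
  simp only [Real.norm_eq_abs, mul_pow, sq_abs]
  ring

lemma A4 (f : H → ℝ) (Df : H → H) (κ : ℝ) (x a b : H) :
    alphaab f Df κ a b
      = 2*κ*(PP f Df κ x a - NN f Df κ x b) - ‖uu Df κ x a - ww Df κ x b‖^2/2 := by
  have e0 : uu Df κ x a - ww Df κ x b = (Df a - Df b) + κ•((x-a)+(x-b)) := by
    rw [uu, ww]; module
  have en : ‖(Df a - Df b) + κ•((x-a)+(x-b))‖^2
      = ‖Df a - Df b‖^2 + 2*(κ*⟪Df a - Df b, (x-a)+(x-b)⟫) + κ^2*‖(x-a)+(x-b)‖^2 := by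
    rw [norm_add_sq_real, real_inner_smul_right, norm_smul]
    simp only [Real.norm_eq_abs, mul_pow, sq_abs]
  have en2 : ‖(x-a)+(x-b)‖^2 = ‖x-a‖^2 + 2*⟪x-a,x-b⟫ + ‖x-b‖^2 := norm_add_sq_real _ _
  have en3 : ‖a-b‖^2 = ‖x-b‖^2 - 2*⟪x-a,x-b⟫ + ‖x-a‖^2 := by
    have e2 : a - b = (x-b) - (x-a) := by module
    rw [e2, norm_sub_sq_real, real_inner_comm (x-b) (x-a)]
  have ei : ⟪Df a + Df b, b-a⟫
      = ⟪Df a, x-a⟫ + ⟪Df b, x-a⟫ - ⟪Df a, x-b⟫ - ⟪Df b, x-b⟫ := by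
    have e1 : b - a = (x-a) - (x-b) := by module
    rw [e1, inner_sub_right, inner_add_left, inner_add_left]; ring
  have ei2 : ⟪Df a - Df b, (x-a)+(x-b)⟫
      = ⟪Df a, x-a⟫ + ⟪Df a, x-b⟫ - ⟪Df b, x-a⟫ - ⟪Df b, x-b⟫ := by
    rw [inner_add_right, inner_sub_left, inner_sub_left]; ring
  rw [alphaab, PP, NN, e0, en, en2, en3, ei, ei2]
  ring

lemma A_self (f : H → ℝ) (Df : H → H) (κ : ℝ) (x a : H) :
    ‖uu Df κ x a - ww Df κ x a‖^2 = 4*κ*(PP f Df κ x a - NN f Df κ x a) := by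
  have e0 : uu Df κ x a - ww Df κ x a = (2*κ)•(x-a) := by rw [uu, ww]; module
  rw [PP, NN, e0, norm_smul]
  simp only [Real.norm_eq_abs, mul_pow, sq_abs]
  ring

lemma alpha_self (f : H → ℝ) (Df : H → H) (κ : ℝ) (a : H) :
    alphaab f Df κ a a = 0 := by
  simp [alphaab]

lemma A7 (f : H → ℝ) (Df : H → H) (κ : ℝ) (hκ : κ ≠ 0) (a b : H)
    (c : H) (hc : c = (2*κ)⁻¹ • (κ•(a+b) + (Df b - Df a))) :
    κ * (‖b - c‖^2 + ‖a - c‖^2) - 2*(fieldEval f Df b c - fieldEval f Df a c)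
      = alphaab f Df κ a b / κ := by
  have h2κ : (2*κ) ≠ 0 := by simp [hκ]
  have hsc : (2*κ) • c = κ•(a+b) + (Df b - Df a) := by rw [hc, smul_inv_smul₀ h2κ]
  set g : H := Df b - Df a with hg
  set m : H := b - a with hm
  have hca : (2*κ) • (c - a) = κ•m + g := by rw [smul_sub, hsc, hg, hm]; module
  have hcb : (2*κ) • (c - b) = g - κ•m := by rw [smul_sub, hsc, hg, hm]; module
  have nac : (2*κ)^2 * ‖a - c‖^2 = ‖κ•m + g‖^2 := by
    rw [← hca, norm_smul, norm_sub_rev a c]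
    simp only [Real.norm_eq_abs, mul_pow, sq_abs]
  have nbc : (2*κ)^2 * ‖b - c‖^2 = ‖g - κ•m‖^2 := by
    rw [← hcb, norm_smul, norm_sub_rev b c]
    simp only [Real.norm_eq_abs, mul_pow, sq_abs]
  have iac : (2*κ) * ⟪Df a, c - a⟫ = ⟪Df a, κ•m + g⟫ := by
    rw [← hca, real_inner_smul_right]
  have ibc : (2*κ) * ⟪Df b, c - b⟫ = ⟪Df b, g - κ•m⟫ := by
    rw [← hcb, real_inner_smul_right]
  have eda : ‖Df a - Df b‖ = ‖g‖ := by rw [hg, norm_sub_rev]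
  have eab : ‖a - b‖ = ‖m‖ := by rw [hm, norm_sub_rev]
  have edm : ⟪Df a + Df b, b - a⟫ = ⟪Df a, m⟫ + ⟪Df b, m⟫ := by
    rw [hm, inner_add_left]
  rw [fieldEval, fieldEval, alphaab, eda, eab, edm]
  have expn1 : ‖κ•m + g‖^2 = κ^2*‖m‖^2 + 2*(κ*⟪m,g⟫) + ‖g‖^2 := by
    rw [norm_add_sq_real, real_inner_smul_left, norm_smul]
    simp only [Real.norm_eq_abs, mul_pow, sq_abs]
  have expn2 : ‖g - κ•m‖^2 = ‖g‖^2 - 2*(κ*⟪m,g⟫) + κ^2*‖m‖^2 := by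
    rw [norm_sub_sq_real, real_inner_smul_right, real_inner_comm g m, norm_smul]
    simp only [Real.norm_eq_abs, mul_pow, sq_abs]
  have expi1 : ⟪Df a, κ•m + g⟫ = κ*⟪Df a, m⟫ + ⟪Df a, g⟫ := by
    rw [inner_add_right, real_inner_smul_right]
  have expi2 : ⟪Df b, g - κ•m⟫ = ⟪Df b, g⟫ - κ*⟪Df b, m⟫ := by
    rw [inner_sub_right, real_inner_smul_right]
  have hgg : ⟪Df b, g⟫ - ⟪Df a, g⟫ = ‖g‖^2 := by
    rw [← inner_sub_left, ← hg, real_inner_self_eq_norm_sq]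
  rw [expi1] at iac
  rw [expi2] at ibc
  rw [expn1] at nac
  rw [expn2] at nbc
  rw [eq_div_iff hκ]
  linear_combination (1/4)*nac + (1/4)*nbc + iac - ibc - hgg

end AuxAlgebra

section AuxFin

variable {H : Type*} [NormedAddCommGroup H] [InnerProductSpace ℝ H]

lemma seg_aux (B C : ℝ) (h : ∀ t : ℝ, 0 < t → t ≤ 1 → t*B + t^2*C ≤ 0) : B ≤ 0 := by
  by_contra hB
  push_neg at hB
  have hden : 0 < 2*(|C|+1) := by positivity
  set t : ℝ := min 1 (B/(2*(|C|+1))) with ht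
  have ht0 : 0 < t := lt_min one_pos (by positivity)
  have ht1 : t ≤ 1 := min_le_left _ _
  have ht2 : t ≤ B/(2*(|C|+1)) := min_le_right _ _
  have ht3 : t*(2*(|C|+1)) ≤ B := by
    rw [← le_div_iff₀ hden]; exact ht2
  have habs : -|C| ≤ C := neg_abs_le C
  have := h t ht0 ht1
  nlinarith [sq_nonneg t, mul_pos ht0 ht0]

variable (κ : ℝ) {ι : Type*} [Fintype ι] [DecidableEq ι]

/-- weighted barycenter -/
def bary (u : ι → H) (μ : ι → ℝ) : H := ∑ i, μ i • u i

/-- weighted average of scalars -/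
def wavg (c : ι → ℝ) (μ : ι → ℝ) : ℝ := ∑ i, μ i * c i

/-- vertex of the simplex -/
def vert (i : ι) : ι → ℝ := fun j => if j = i then 1 else 0

lemma vert_mem_stdSimplex (i : ι) : vert i ∈ stdSimplex ℝ ι := by
  constructor
  · intro j
    by_cases hj : j = i <;> simp [vert, hj]
  · simp [vert, Finset.sum_ite_eq']

omit [DecidableEq ι] in
lemma wavg_const_one (μ : ι → ℝ) (hμ : ∑ i, μ i = 1) (c : ℝ) :
    wavg (fun _ => c) μ = c := by
  rw [wavg, ← Finset.sum_mul, hμ, one_mul]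

lemma bary_line (u : ι → H) (μ : ι → ℝ) (t : ℝ) (i : ι) :
    bary u (μ + t • (vert i - μ)) = bary u μ + t • (u i - bary u μ) := by
  have key : ∀ j, (μ + t • (vert i - μ)) j • u j
      = μ j • u j + ((t * vert i j) • u j - (t * μ j) • u j) := by
    intro j
    simp only [Pi.add_apply, Pi.smul_apply, Pi.sub_apply, smul_eq_mul]
    rw [add_smul, mul_sub, sub_smul]
  rw [bary, bary]
  simp only [key]
  rw [Finset.sum_add_distrib, Finset.sum_sub_distrib]
  have h1 : ∑ j, (t * vert i j) • u j = t • u i := by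
    rw [show (∑ j, (t * vert i j) • u j) = ∑ j, (if j = i then t • u j else 0) by
      apply Finset.sum_congr rfl; intro j _
      by_cases hj : j = i <;> simp [vert, hj]]
    simp [Finset.sum_ite_eq']
  have h2 : ∑ j, (t * μ j) • u j = t • ∑ j, μ j • u j := by
    rw [Finset.smul_sum]
    apply Finset.sum_congr rfl; intro j _
    rw [smul_smul]
  rw [h1, h2, smul_sub]

lemma wavg_line (c : ι → ℝ) (μ : ι → ℝ) (t : ℝ) (i : ι) :
    wavg c (μ + t • (vert i - μ)) = wavg c μ + t * (c i - wavg c μ) := by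
  have key : ∀ j, (μ + t • (vert i - μ)) j * c j
      = μ j * c j + (t * (vert i j * c j) - t * (μ j * c j)) := by
    intro j
    simp only [Pi.add_apply, Pi.smul_apply, Pi.sub_apply, smul_eq_mul]
    ring
  rw [wavg, wavg]
  simp only [key]
  rw [Finset.sum_add_distrib, Finset.sum_sub_distrib, ← Finset.mul_sum, ← Finset.mul_sum]
  have h1 : ∑ j, vert i j * c j = c i := by
    rw [show (∑ j, vert i j * c j) = ∑ j, (if j = i then c j else 0) by
      apply Finset.sum_congr rfl; intro j _
      by_cases hj : j = i <;> simp [vert, hj]]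
    simp [Finset.sum_ite_eq']
  rw [h1]
  ring

omit [DecidableEq ι] in
lemma sum_norm_expand (u : ι → H) (μ : ι → ℝ) (hμ : ∑ i, μ i = 1) (v : H) :
    ∑ i, μ i * ‖v - u i‖^2
      = ‖v‖^2 - 2*⟪v, bary u μ⟫ + wavg (fun i => ‖u i‖^2) μ := by
  have h1 : ⟪v, bary u μ⟫ = ∑ i, μ i * ⟪v, u i⟫ := by
    rw [bary, inner_sum]
    apply Finset.sum_congr rfl; intro i _
    rw [real_inner_smul_right]
  rw [h1, wavg]
  rw [show (∑ i, μ i * ‖v - u i‖^2)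
      = ∑ i, (μ i * ‖v‖^2 - 2*(μ i * ⟪v, u i⟫) + μ i * ‖u i‖^2) by
    apply Finset.sum_congr rfl; intro i _
    rw [norm_sub_sq_real]; ring]
  rw [Finset.sum_add_distrib, Finset.sum_sub_distrib, ← Finset.sum_mul, hμ,
    ← Finset.mul_sum]
  ring

omit [DecidableEq ι] in
lemma inner_bary_bary (u w : ι → H) (μ ν : ι → ℝ) :
    ⟪bary u μ, bary w ν⟫ = ∑ i, ∑ j, (μ i * ν j) * ⟪u i, w j⟫ := by
  rw [bary, bary, sum_inner]
  apply Finset.sum_congr rfl; intro i _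
  rw [inner_sum]
  apply Finset.sum_congr rfl; intro j _
  rw [real_inner_smul_left, real_inner_smul_right]
  ring

lemma fin_lemma (hκ : 0 < κ) [ne : Nonempty ι] (u w : ι → H) (P N : ι → ℝ)
    (hC : ∀ i j, ‖u i - w j‖^2 ≤ 4*κ*(P i - N j)) :
    ∃ v : H, ∀ i j, ‖v - u i‖^2 + ‖v - w j‖^2 ≤ 4*κ*(P i - N j) := by
  classical
  set Δ : Set (ι → ℝ) := stdSimplex ℝ ι with hΔ
  set d : (ι → ℝ) × (ι → ℝ) → ℝ := fun p =>
    wavg (fun i => ‖u i‖^2) p.1 + wavg (fun j => ‖w j‖^2) p.2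
      - 4*κ*(wavg P p.1 - wavg N p.2) - ‖bary u p.1 + bary w p.2‖^2/2 with hd
  have hwavg_cont : ∀ c : ι → ℝ, Continuous (fun μ : ι → ℝ => wavg c μ) := by
    intro c
    exact continuous_finset_sum _ fun i _ => (continuous_apply i).mul continuous_const
  have hbary_cont : ∀ z : ι → H, Continuous (fun μ : ι → ℝ => bary z μ) := by
    intro z
    exact continuous_finset_sum _ fun i _ => (continuous_apply i).smul continuous_const
  have hdcont : Continuous d := by
    apply Continuous.sub
    · apply Continuous.sub
      · exact ((hwavg_cont _).comp continuous_fst).add ((hwavg_cont _).comp continuous_snd)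
      · exact continuous_const.mul
          (((hwavg_cont P).comp continuous_fst).sub ((hwavg_cont N).comp continuous_snd))
    · exact ((((hbary_cont u).comp continuous_fst).add
        ((hbary_cont w).comp continuous_snd)).norm.pow 2).div_const 2
  have hΔcomp : IsCompact Δ := isCompact_stdSimplex ℝ ι
  have hΔne : Δ.Nonempty := ⟨vert (Classical.arbitrary ι), vert_mem_stdSimplex _⟩
  obtain ⟨p, hpmem, hpmax'⟩ := (hΔcomp.prod hΔcomp).exists_isMaxOn
    (hΔne.prod hΔne) hdcont.continuousOn
  have hpmax : ∀ q ∈ Δ ×ˢ Δ, d q ≤ d p := fun q hq => hpmax' hq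
  obtain ⟨hμmem, hνmem⟩ := Set.mem_prod.mp hpmem
  set μ : ι → ℝ := p.1
  set ν : ι → ℝ := p.2
  have hμ1 : ∑ i, μ i = 1 := hμmem.2
  have hν1 : ∑ i, ν i = 1 := hνmem.2
  set v : H := (1/2:ℝ) • (bary u μ + bary w ν) with hv
  have h2v : bary u μ + bary w ν = (2:ℝ) • v := by rw [hv]; module
  refine ⟨v, ?_⟩
  -- K1: for each i, ‖v - u i‖² - 4κ P i ≤ weighted average
  have K1 : ∀ i, ‖v - u i‖^2 - 4*κ*(P i)
      ≤ ∑ j, μ j * (‖v - u j‖^2 - 4*κ*(P j)) := by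
    intro i
    -- B ≤ 0 from maximality along the segment toward vert i
    have hB : (‖u i‖^2 - wavg (fun k => ‖u k‖^2) μ) - 4*κ*(P i - wavg P μ)
        - ⟪bary u μ + bary w ν, u i - bary u μ⟫ ≤ 0 := by
      apply seg_aux _ (-‖u i - bary u μ‖^2/2)
      intro t ht0 ht1
      have hmemt : μ + t • (vert i - μ) ∈ Δ := by
        have := (convex_stdSimplex ℝ ι) hμmem (vert_mem_stdSimplex i)
          (by linarith : (0:ℝ) ≤ 1 - t) (le_of_lt ht0) (by ring)
        convert this using 1
        funext j
        simp only [Pi.add_apply, Pi.smul_apply, Pi.sub_apply, smul_eq_mul]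
        ring
      have hle := hpmax (μ + t • (vert i - μ), ν) (Set.mem_prod.mpr ⟨hmemt, hνmem⟩)
      have hexp : d (μ + t • (vert i - μ), ν) = d (μ, ν)
          + t * ((‖u i‖^2 - wavg (fun k => ‖u k‖^2) μ) - 4*κ*(P i - wavg P μ)
            - ⟪bary u μ + bary w ν, u i - bary u μ⟫)
          + t^2 * (-‖u i - bary u μ‖^2/2) := by
        simp only [hd]
        rw [wavg_line, wavg_line, bary_line]
        have hnorm : ‖(bary u μ + t • (u i - bary u μ)) + bary w ν‖^2
            = ‖bary u μ + bary w ν‖^2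
              + 2*(t*⟪bary u μ + bary w ν, u i - bary u μ⟫)
              + t^2*‖u i - bary u μ‖^2 := by
          rw [show (bary u μ + t • (u i - bary u μ)) + bary w ν
              = (bary u μ + bary w ν) + t • (u i - bary u μ) by module]
          rw [norm_add_sq_real, real_inner_smul_right, norm_smul]
          simp only [Real.norm_eq_abs, mul_pow, sq_abs]
        rw [hnorm]
        ring
      have : d (μ, ν) + t * (_) + t^2 * (_) ≤ d (μ, ν) := hexp ▸ hle
      linarith [this]
    -- convert B ≤ 0 into K1 via sum_norm_expand
    have hexp1 : ∑ j, μ j * (‖v - u j‖^2 - 4*κ*(P j))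
        = ‖v‖^2 - 2*⟪v, bary u μ⟫ + wavg (fun k => ‖u k‖^2) μ - 4*κ*(wavg P μ) := by
      rw [show (∑ j, μ j * (‖v - u j‖^2 - 4*κ*(P j)))
          = (∑ j, μ j * ‖v - u j‖^2) - 4*κ*(∑ j, μ j * P j) by
        rw [Finset.mul_sum, ← Finset.sum_sub_distrib]
        apply Finset.sum_congr rfl; intro j _; ring]
      rw [sum_norm_expand u μ hμ1 v]
      simp only [wavg]
    have hvi : ‖v - u i‖^2 = ‖v‖^2 - 2*⟪v, u i⟫ + ‖u i‖^2 := norm_sub_sq_real _ _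
    have hinner : ⟪bary u μ + bary w ν, u i - bary u μ⟫
        = 2*⟪v, u i⟫ - 2*⟪v, bary u μ⟫ := by
      rw [h2v, real_inner_smul_left, inner_sub_right]
      ring
    rw [hexp1, hvi]
    rw [hinner] at hB
    linarith [hB]
  -- K2: symmetric for the w side
  have K2 : ∀ j, ‖v - w j‖^2 + 4*κ*(N j)
      ≤ ∑ k, ν k * (‖v - w k‖^2 + 4*κ*(N k)) := by
    intro j
    have hB : (‖w j‖^2 - wavg (fun k => ‖w k‖^2) ν) + 4*κ*(N j - wavg N ν)
        - ⟪bary u μ + bary w ν, w j - bary w ν⟫ ≤ 0 := by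
      apply seg_aux _ (-‖w j - bary w ν‖^2/2)
      intro t ht0 ht1
      have hmemt : ν + t • (vert j - ν) ∈ Δ := by
        have := (convex_stdSimplex ℝ ι) hνmem (vert_mem_stdSimplex j)
          (by linarith : (0:ℝ) ≤ 1 - t) (le_of_lt ht0) (by ring)
        convert this using 1
        funext k
        simp only [Pi.add_apply, Pi.smul_apply, Pi.sub_apply, smul_eq_mul]
        ring
      have hle := hpmax (μ, ν + t • (vert j - ν)) (Set.mem_prod.mpr ⟨hμmem, hmemt⟩)
      have hexp : d (μ, ν + t • (vert j - ν)) = d (μ, ν)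
          + t * ((‖w j‖^2 - wavg (fun k => ‖w k‖^2) ν) + 4*κ*(N j - wavg N ν)
            - ⟪bary u μ + bary w ν, w j - bary w ν⟫)
          + t^2 * (-‖w j - bary w ν‖^2/2) := by
        simp only [hd]
        rw [wavg_line, wavg_line, bary_line]
        have hnorm : ‖bary u μ + (bary w ν + t • (w j - bary w ν))‖^2
            = ‖bary u μ + bary w ν‖^2
              + 2*(t*⟪bary u μ + bary w ν, w j - bary w ν⟫)
              + t^2*‖w j - bary w ν‖^2 := by
          rw [show bary u μ + (bary w ν + t • (w j - bary w ν))
              = (bary u μ + bary w ν) + t • (w j - bary w ν) by module]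
          rw [norm_add_sq_real, real_inner_smul_right, norm_smul]
          simp only [Real.norm_eq_abs, mul_pow, sq_abs]
        rw [hnorm]
        ring
      have : d (μ, ν) + t * (_) + t^2 * (_) ≤ d (μ, ν) := hexp ▸ hle
      linarith [this]
    have hexp1 : ∑ k, ν k * (‖v - w k‖^2 + 4*κ*(N k))
        = ‖v‖^2 - 2*⟪v, bary w ν⟫ + wavg (fun k => ‖w k‖^2) ν + 4*κ*(wavg N ν) := by
      rw [show (∑ k, ν k * (‖v - w k‖^2 + 4*κ*(N k)))
          = (∑ k, ν k * ‖v - w k‖^2) + 4*κ*(∑ k, ν k * N k) by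
        rw [Finset.mul_sum, ← Finset.sum_add_distrib]
        apply Finset.sum_congr rfl; intro k _; ring]
      rw [sum_norm_expand w ν hν1 v]
      simp only [wavg]
    have hvj : ‖v - w j‖^2 = ‖v‖^2 - 2*⟪v, w j⟫ + ‖w j‖^2 := norm_sub_sq_real _ _
    have hinner : ⟪bary u μ + bary w ν, w j - bary w ν⟫
        = 2*⟪v, w j⟫ - 2*⟪v, bary w ν⟫ := by
      rw [h2v, real_inner_smul_left, inner_sub_right]
      ring
    rw [hexp1, hvj]
    rw [hinner] at hB
    linarith [hB]
  -- the total weighted sum is ≤ 0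
  have hsum : (∑ j, μ j * (‖v - u j‖^2 - 4*κ*(P j)))
      + (∑ k, ν k * (‖v - w k‖^2 + 4*κ*(N k))) ≤ 0 := by
    have e1 : ∑ j, μ j * (‖v - u j‖^2 - 4*κ*(P j))
        = ‖v‖^2 - 2*⟪v, bary u μ⟫ + wavg (fun k => ‖u k‖^2) μ - 4*κ*(wavg P μ) := by
      rw [show (∑ j, μ j * (‖v - u j‖^2 - 4*κ*(P j)))
          = (∑ j, μ j * ‖v - u j‖^2) - 4*κ*(∑ j, μ j * P j) by
        rw [Finset.mul_sum, ← Finset.sum_sub_distrib]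
        apply Finset.sum_congr rfl; intro j _; ring]
      rw [sum_norm_expand u μ hμ1 v]
      simp only [wavg]
    have e2 : ∑ k, ν k * (‖v - w k‖^2 + 4*κ*(N k))
        = ‖v‖^2 - 2*⟪v, bary w ν⟫ + wavg (fun k => ‖w k‖^2) ν + 4*κ*(wavg N ν) := by
      rw [show (∑ k, ν k * (‖v - w k‖^2 + 4*κ*(N k)))
          = (∑ k, ν k * ‖v - w k‖^2) + 4*κ*(∑ k, ν k * N k) by
        rw [Finset.mul_sum, ← Finset.sum_add_distrib]
        apply Finset.sum_congr rfl; intro k _; ring]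
      rw [sum_norm_expand w ν hν1 v]
      simp only [wavg]
    -- averaged hypothesis hC
    have miniL : ∀ (c : ι → ℝ), ∑ i, ∑ j, (μ i * ν j) * c i = ∑ i, μ i * c i := by
      intro c
      have h : ∀ i, ∑ j, (μ i * ν j) * c i = (∑ j, ν j) * (μ i * c i) := by
        intro i
        rw [Finset.sum_mul]
        exact Finset.sum_congr rfl fun j _ => by ring
      simp only [h, hν1, one_mul]
    have miniR : ∀ (c : ι → ℝ), ∑ i, ∑ j, (μ i * ν j) * c j = ∑ j, ν j * c j := by
      intro c
      have h : ∀ i, ∑ j, (μ i * ν j) * c j = μ i * (∑ j, ν j * c j) := by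
        intro i
        rw [Finset.mul_sum]
        exact Finset.sum_congr rfl fun j _ => by ring
      simp only [h]
      rw [← Finset.sum_mul, hμ1, one_mul]
    have havg : wavg (fun k => ‖u k‖^2) μ + wavg (fun k => ‖w k‖^2) ν
        - 2*⟪bary u μ, bary w ν⟫ ≤ 4*κ*(wavg P μ - wavg N ν) := by
      have split1 : ∀ i j, (μ i * ν j) * ‖u i - w j‖^2
          = (μ i * ν j) * ‖u i‖^2 - 2*((μ i * ν j) * ⟪u i, w j⟫)
            + (μ i * ν j) * ‖w j‖^2 := by
        intro i j
        rw [norm_sub_sq_real (u i) (w j)]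
        ring
      have hdouble : ∑ i, ∑ j, (μ i * ν j) * ‖u i - w j‖^2
          = wavg (fun k => ‖u k‖^2) μ + wavg (fun k => ‖w k‖^2) ν
            - 2*⟪bary u μ, bary w ν⟫ := by
        simp only [split1, Finset.sum_add_distrib, Finset.sum_sub_distrib,
          ← Finset.mul_sum]
        rw [miniL (fun k => ‖u k‖^2), miniR (fun k => ‖w k‖^2), inner_bary_bary]
        simp only [wavg]
        ring
      have split2 : ∀ i j, (μ i * ν j) * (4*κ*(P i - N j))
          = 4*κ*((μ i * ν j) * P i) - 4*κ*((μ i * ν j) * N j) := by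
        intro i j
        ring
      have hdouble2 : ∑ i, ∑ j, (μ i * ν j) * (4*κ*(P i - N j))
          = 4*κ*(wavg P μ - wavg N ν) := by
        simp only [split2, Finset.sum_sub_distrib, ← Finset.mul_sum]
        rw [miniL P, miniR N]
        simp only [wavg]
        ring
      have hle : ∑ i, ∑ j, (μ i * ν j) * ‖u i - w j‖^2
          ≤ ∑ i, ∑ j, (μ i * ν j) * (4*κ*(P i - N j)) := by
        apply Finset.sum_le_sum; intro i _
        apply Finset.sum_le_sum; intro j _
        have hnn : 0 ≤ μ i * ν j := mul_nonneg (hμmem.1 i) (hνmem.1 j)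
        exact mul_le_mul_of_nonneg_left (hC i j) hnn
      rw [hdouble, hdouble2] at hle
      exact hle
    have hquad : 2*⟪bary u μ, bary w ν⟫ ≤ ‖bary u μ + bary w ν‖^2/2 := by
      have h := sq_nonneg (‖bary u μ - bary w ν‖)
      have hexp := norm_add_sq_real (bary u μ) (bary w ν)
      have hexp2 := norm_sub_sq_real (bary u μ) (bary w ν)
      nlinarith [hexp, hexp2, sq_nonneg (‖bary u μ - bary w ν‖)]
    have hvnorm : 2*‖v‖^2 = ‖bary u μ + bary w ν‖^2/2 := by
      rw [hv, norm_smul]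
      simp only [Real.norm_eq_abs, mul_pow, sq_abs]
      ring
    have hib : ⟪v, bary u μ⟫ + ⟪v, bary w ν⟫ = 2*‖v‖^2 := by
      rw [← inner_add_right, h2v, real_inner_smul_right, real_inner_self_eq_norm_sq]
    rw [e1, e2]
    linarith [havg, hquad, hvnorm, hib]
  intro i j
  have := K1 i
  have := K2 j
  linarith [K1 i, K2 j, hsum]

end AuxFin

section AuxGamma

variable {H : Type*} [NormedAddCommGroup H] [InnerProductSpace ℝ H]

lemma fieldEval_decomp (f : H → ℝ) (Df : H → H) (p q c : H) :
    fieldEval f Df p c - fieldEval f Df q c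
      = (fieldEval f Df p ((1/2:ℝ)•(p+q)) - fieldEval f Df q ((1/2:ℝ)•(p+q)))
        + ⟪Df p - Df q, c - (1/2:ℝ)•(p+q)⟫ := by
  simp only [fieldEval, inner_sub_left]
  have h1 : ⟪Df p, c - p⟫ = ⟪Df p, (1/2:ℝ)•(p+q) - p⟫ + ⟪Df p, c - (1/2:ℝ)•(p+q)⟫ := by
    rw [← inner_add_right]
    congr 1
    module
  have h2 : ⟪Df q, c - q⟫ = ⟪Df q, (1/2:ℝ)•(p+q) - q⟫ + ⟪Df q, c - (1/2:ℝ)•(p+q)⟫ := by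
    rw [← inner_add_right]
    congr 1
    module
  rw [h1, h2]
  ring

lemma pointwise_bound (f : H → ℝ) (Df : H → H) (p q : H) (hpq : p ≠ q) (κ : ℝ)
    (hp : gammaPair f Df p q ≤ κ) (c : H) :
    2 * (fieldEval f Df p c - fieldEval f Df q c) ≤ κ * (‖p - c‖^2 + ‖q - c‖^2) := by
  set m : H := (1/2:ℝ)•(p+q) with hm
  set s : ℝ := ‖p - q‖^2/2 with hs
  have hs0 : 0 < s := by
    rw [hs]
    have : 0 < ‖p - q‖ := norm_pos_iff.mpr (sub_ne_zero.mpr hpq)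
    positivity
  set Xm : ℝ := |fieldEval f Df p m - fieldEval f Df q m| with hXm
  set dn : ℝ := ‖Df p - Df q‖ with hdn
  have hden : ∀ z : H, ‖p - z‖^2 + ‖q - z‖^2 = 2*‖z - m‖^2 + s := by
    intro z
    rw [norm_sub_rev p z, norm_sub_rev q z, hs, hm]
    exact median_identity p q z
  set Q : H → ℝ := fun z =>
    2 * |fieldEval f Df p z - fieldEval f Df q z| / (‖p - z‖ ^ 2 + ‖q - z‖ ^ 2) with hQ
  have hQbdd : ∀ z, Q z ≤ (2*Xm + dn*(s+1))/s := by
    intro z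
    set t : ℝ := ‖z - m‖ with htd
    have ht0 : 0 ≤ t := norm_nonneg _
    have hD : ‖p - z‖^2 + ‖q - z‖^2 = 2*t^2 + s := hden z
    have hD0 : 0 < 2*t^2 + s := by positivity
    have habs : |fieldEval f Df p z - fieldEval f Df q z| ≤ Xm + dn*t := by
      rw [fieldEval_decomp f Df p q z, ← hm]
      refine (abs_add_le _ _).trans ?_
      have := abs_real_inner_le_norm (Df p - Df q) (z - m)
      rw [← hdn, ← htd] at this
      rw [← hXm]
      linarith
    rw [hQ]
    simp only
    rw [hD, div_le_div_iff₀ hD0 hs0]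
    have hXm0 : 0 ≤ Xm := abs_nonneg _
    have hdn0 : 0 ≤ dn := norm_nonneg _
    nlinarith [sq_nonneg (t - 1), sq_nonneg (t - s), mul_nonneg hdn0 ht0,
      mul_nonneg hXm0 (sq_nonneg t), mul_nonneg (mul_nonneg hdn0 ht0) (le_of_lt hs0),
      mul_nonneg hdn0 (sq_nonneg (t-s)), mul_nonneg hdn0 (sq_nonneg (t-1)),
      mul_nonneg (mul_nonneg hdn0 (le_of_lt hs0)) (sq_nonneg (t-1))]
  have hQle : Q c ≤ κ := by
    have hbdd : BddAbove (Set.range Q) := ⟨(2*Xm + dn*(s+1))/s, by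
      rintro y ⟨z, rfl⟩
      exact hQbdd z⟩
    have : Q c ≤ ⨆ z, Q z := le_ciSup hbdd c
    calc Q c ≤ ⨆ z, Q z := this
    _ = gammaPair f Df p q := rfl
    _ ≤ κ := hp
  have hD0 : 0 < ‖p - c‖^2 + ‖q - c‖^2 := by
    rw [hden c]
    positivity
  rw [hQ] at hQle
  simp only at hQle
  rw [div_le_iff₀ hD0] at hQle
  have := le_abs_self (fieldEval f Df p c - fieldEval f Df q c)
  nlinarith [this, hQle]

lemma alpha_nonneg (f : H → ℝ) (Df : H → H) (κ : ℝ) (hκ : 0 < κ) (a b : H)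
    (h : ∀ c, 2*(fieldEval f Df b c - fieldEval f Df a c)
      ≤ κ*(‖b - c‖^2 + ‖a - c‖^2)) :
    0 ≤ alphaab f Df κ a b := by
  have hA := A7 f Df κ (ne_of_gt hκ) a b ((2*κ)⁻¹ • (κ•(a+b) + (Df b - Df a))) rfl
  have hh := h ((2*κ)⁻¹ • (κ•(a+b) + (Df b - Df a)))
  have h0 : 0 ≤ alphaab f Df κ a b / κ := by linarith
  have := mul_nonneg h0 (le_of_lt hκ)
  rwa [div_mul_cancel₀ _ (ne_of_gt hκ)] at this

end AuxGamma



/-- Let `F = (f, Df)` be a Taylorian 1-field on a nonempty `Ω ⊆ ℝⁿ` with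
`κ := Γ¹(F;Ω) > 0` and fix `x ∈ ℝⁿ`. Then the map `v ↦ inf_{a∈Ω} Ψ⁺(F,x,a,v)` attains its
supremum over `Λ_x` at a unique point `v⁺ ∈ Λ_x`. -/
theorem stmt_8 {n : ℕ} (hn : 1 ≤ n) (Ω : Set (EuclideanSpace ℝ (Fin n)))
    (hΩne : Ω.Nonempty)
    (f : EuclideanSpace ℝ (Fin n) → ℝ)
    (Df : EuclideanSpace ℝ (Fin n) → EuclideanSpace ℝ (Fin n))
    (hTay : BddAbove (gammaVals f Df Ω))
    (hκpos : 0 < gammaOn f Df Ω)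
    (x : EuclideanSpace ℝ (Fin n)) :
    ∃! v : EuclideanSpace ℝ (Fin n),
      v ∈ Lambda f Df (gammaOn f Df Ω) Ω x ∧
      infPsiPlus f Df (gammaOn f Df Ω) Ω x v = uPlus f Df (gammaOn f Df Ω) Ω x := by
  classical
  set κ : ℝ := gammaOn f Df Ω with hκdef
  have hκ : 0 < κ := hκpos
  have hκ0 : κ ≠ 0 := ne_of_gt hκ
  obtain ⟨a₀, ha₀⟩ := hΩne
  -- pointwise Taylorian inequality
  have hpt : ∀ a ∈ Ω, ∀ b ∈ Ω, ∀ c : (EuclideanSpace ℝ (Fin n)),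
      2*(fieldEval f Df b c - fieldEval f Df a c) ≤ κ*(‖b - c‖^2 + ‖a - c‖^2) := by
    intro a ha b hb c
    by_cases hab : b = a
    · subst hab
      have h1 : 0 ≤ ‖b - c‖^2 + ‖b - c‖^2 := by positivity
      nlinarith [mul_nonneg (le_of_lt hκ) h1]
    · have hmem : gammaPair f Df b a ∈ gammaVals f Df Ω := ⟨b, hb, a, ha, hab, rfl⟩
      exact pointwise_bound f Df b a hab κ (le_csSup hTay hmem) c
  have hα : ∀ a ∈ Ω, ∀ b ∈ Ω, 0 ≤ alphaab f Df κ a b := fun a ha b hb =>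
    alpha_nonneg f Df κ hκ a b (hpt a ha b hb)
  -- condition (C)
  have hC : ∀ a ∈ Ω, ∀ b ∈ Ω,
      ‖uu Df κ x a - ww Df κ x b‖^2 ≤ 4*κ*(PP f Df κ x a - NN f Df κ x b) := by
    intro a ha b hb
    have h4 := A4 f Df κ x a b
    have := hα a ha b hb
    linarith
  -- ball membership iff quadratic inequality
  have hiff : ∀ a, a ∈ Ω → ∀ b, b ∈ Ω → ∀ v : (EuclideanSpace ℝ (Fin n)),
      ((‖v - uu Df κ x a‖^2 + ‖v - ww Df κ x b‖^2
          ≤ 4*κ*(PP f Df κ x a - NN f Df κ x b))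
        ↔ ‖v - vab Df κ a b‖ ≤ rab f Df κ a b x) := by
    intro a ha b hb v
    have h4 := A4 f Df κ x a b
    have h5 := A5 Df κ x a b
    have hβ : 0 ≤ betaab Df κ a b x := by rw [betaab]; positivity
    have hnn : 0 ≤ alphaab f Df κ a b + betaab Df κ a b x := by
      have := hα a ha b hb; linarith
    have hmed := median_identity (uu Df κ x a) (ww Df κ x b) v
    have hA3 := A3 Df κ x a b
    have hsq : ‖v - vab Df κ a b‖ ≤ rab f Df κ a b x
        ↔ ‖v - vab Df κ a b‖^2 ≤ alphaab f Df κ a b + betaab Df κ a b x := by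
      rw [rab, Real.le_sqrt (norm_nonneg _) hnn]
    rw [hsq, hA3]
    constructor
    · intro h
      linarith
    · intro h
      linarith
  -- description of Lambda
  have hΛiff : ∀ v : (EuclideanSpace ℝ (Fin n)), v ∈ Lambda f Df κ Ω x ↔ ∀ a ∈ Ω, ∀ b ∈ Ω,
      ‖v - uu Df κ x a‖^2 + ‖v - ww Df κ x b‖^2
        ≤ 4*κ*(PP f Df κ x a - NN f Df κ x b) := by
    intro v
    constructor
    · intro h a ha b hb
      exact (hiff a ha b hb v).mpr (h a ha b hb)
    · intro h a ha b hb
      exact (hiff a ha b hb v).mp (h a ha b hb)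
  -- Lambda is an intersection of a compact ball with closed sets
  set Z : (↥Ω × ↥Ω) → Set (EuclideanSpace ℝ (Fin n)) := fun p =>
    {v | ‖v - vab Df κ (p.1 : (EuclideanSpace ℝ (Fin n))) (p.2 : (EuclideanSpace ℝ (Fin n)))‖ ≤ rab f Df κ (p.1 : (EuclideanSpace ℝ (Fin n))) (p.2 : (EuclideanSpace ℝ (Fin n))) x} with hZ
  have hZclosed : ∀ p, IsClosed (Z p) := by
    intro p
    exact isClosed_le ((continuous_id.sub continuous_const).norm) continuous_const
  set K : Set (EuclideanSpace ℝ (Fin n)) := Metric.closedBall (vab Df κ a₀ a₀) (rab f Df κ a₀ a₀ x) with hK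
  have hKcomp : IsCompact K := isCompact_closedBall _ _
  have hΛeq : Lambda f Df κ Ω x = K ∩ ⋂ p, Z p := by
    ext v
    constructor
    · intro hv
      refine ⟨?_, ?_⟩
      · rw [hK, Metric.mem_closedBall, dist_eq_norm]
        exact hv a₀ ha₀ a₀ ha₀
      · rw [Set.mem_iInter]
        intro p
        exact hv p.1 p.1.2 p.2 p.2.2
    · rintro ⟨-, hv⟩
      rw [Set.mem_iInter] at hv
      intro a ha b hb
      exact hv (⟨a, ha⟩, ⟨b, hb⟩)
  -- nonemptiness of Lambda
  have hΛne : (Lambda f Df κ Ω x).Nonempty := by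
    by_contra hemp
    rw [Set.not_nonempty_iff_eq_empty, hΛeq] at hemp
    obtain ⟨t, ht⟩ := hKcomp.elim_finite_subfamily_closed Z hZclosed hemp
    set S : Finset (EuclideanSpace ℝ (Fin n)) := insert a₀ ((t.image fun p => ((p.1 : (EuclideanSpace ℝ (Fin n)))))
      ∪ (t.image fun p => ((p.2 : (EuclideanSpace ℝ (Fin n)))))) with hS
    have hSΩ : ∀ s ∈ S, s ∈ Ω := by
      intro s hs
      rw [hS, Finset.mem_insert, Finset.mem_union] at hs
      rcases hs with rfl | hs | hs
      · exact ha₀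
      · obtain ⟨p, -, rfl⟩ := Finset.mem_image.mp hs
        exact p.1.2
      · obtain ⟨p, -, rfl⟩ := Finset.mem_image.mp hs
        exact p.2.2
    have hSne : Nonempty ↥S := ⟨⟨a₀, Finset.mem_insert_self _ _⟩⟩
    obtain ⟨v, hv⟩ := fin_lemma κ hκ (fun i : ↥S => uu Df κ x (i : (EuclideanSpace ℝ (Fin n))))
      (fun i : ↥S => ww Df κ x (i : (EuclideanSpace ℝ (Fin n)))) (fun i : ↥S => PP f Df κ x (i : (EuclideanSpace ℝ (Fin n))))
      (fun i : ↥S => NN f Df κ x (i : (EuclideanSpace ℝ (Fin n))))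
      (fun i j => hC (i : (EuclideanSpace ℝ (Fin n))) (hSΩ _ i.2) (j : (EuclideanSpace ℝ (Fin n))) (hSΩ _ j.2))
    have hvmem : v ∈ K ∩ ⋂ p ∈ t, Z p := by
      constructor
      · rw [hK, Metric.mem_closedBall, dist_eq_norm]
        have := hv ⟨a₀, Finset.mem_insert_self _ _⟩ ⟨a₀, Finset.mem_insert_self _ _⟩
        exact (hiff a₀ ha₀ a₀ ha₀ v).mp this
      · rw [Set.mem_iInter₂]
        intro p hp
        have h1 : (p.1 : (EuclideanSpace ℝ (Fin n))) ∈ S := by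
          rw [hS, Finset.mem_insert, Finset.mem_union]
          exact Or.inr (Or.inl (Finset.mem_image.mpr ⟨p, hp, rfl⟩))
        have h2 : (p.2 : (EuclideanSpace ℝ (Fin n))) ∈ S := by
          rw [hS, Finset.mem_insert, Finset.mem_union]
          exact Or.inr (Or.inr (Finset.mem_image.mpr ⟨p, hp, rfl⟩))
        have := hv ⟨(p.1 : (EuclideanSpace ℝ (Fin n))), h1⟩ ⟨(p.2 : (EuclideanSpace ℝ (Fin n))), h2⟩
        exact (hiff (p.1 : (EuclideanSpace ℝ (Fin n))) p.1.2 (p.2 : (EuclideanSpace ℝ (Fin n))) p.2.2 v).mp this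
    rw [ht] at hvmem
    exact hvmem
  -- compactness of Lambda
  have hΛclosed : IsClosed (Lambda f Df κ Ω x) := by
    rw [hΛeq]
    exact (Metric.isClosed_closedBall).inter (isClosed_iInter hZclosed)
  have hΛcomp : IsCompact (Lambda f Df κ Ω x) := by
    refine hKcomp.of_isClosed_subset hΛclosed ?_
    rw [hΛeq]
    exact Set.inter_subset_left
  -- the objective function and its elementary properties
  set T : (EuclideanSpace ℝ (Fin n)) → Set ℝ := fun v => {s | ∃ a ∈ Ω, s = PsiPlus f Df κ x a v} with hT
  have hTne : ∀ v, (T v).Nonempty := fun v => ⟨_, a₀, ha₀, rfl⟩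
  have hTbdd : ∀ v ∈ Lambda f Df κ Ω x, BddBelow (T v) := by
    intro v hv
    refine ⟨PsiMinus f Df κ x a₀ v, ?_⟩
    rintro s ⟨a, ha, rfl⟩
    have hq := (hΛiff v).mp hv a ha a₀ ha₀
    rw [A1 f Df κ hκ0 x a v, A2 f Df κ hκ0 x a₀ v]
    have h4 : (0:ℝ) < 4*κ := by linarith
    have hsplit : (‖v - uu Df κ x a‖^2 + ‖v - ww Df κ x a₀‖^2)/(4*κ)
        ≤ PP f Df κ x a - NN f Df κ x a₀ := by
      rw [div_le_iff₀ h4]; linarith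
    have e1 : ‖v - uu Df κ x a‖^2/(4*κ) + ‖v - ww Df κ x a₀‖^2/(4*κ)
        = (‖v - uu Df κ x a‖^2 + ‖v - ww Df κ x a₀‖^2)/(4*κ) := by ring
    linarith
  have hinf_le : ∀ v ∈ Lambda f Df κ Ω x, ∀ a ∈ Ω,
      infPsiPlus f Df κ Ω x v ≤ PsiPlus f Df κ x a v := by
    intro v hv a ha
    exact csInf_le (hTbdd v hv) ⟨a, ha, rfl⟩
  have hPsi_le_P : ∀ (a : (EuclideanSpace ℝ (Fin n))) (v : (EuclideanSpace ℝ (Fin n))), PsiPlus f Df κ x a v ≤ PP f Df κ x a := by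
    intro a v
    rw [A1 f Df κ hκ0 x a v]
    have h1 : 0 ≤ ‖v - uu Df κ x a‖^2/(4*κ) := by positivity
    linarith
  -- the supremum set
  set U : Set ℝ := {s | ∃ v ∈ Lambda f Df κ Ω x, s = infPsiPlus f Df κ Ω x v} with hU
  have hUne : U.Nonempty := by
    obtain ⟨v, hv⟩ := hΛne
    exact ⟨_, v, hv, rfl⟩
  have hUbdd : BddAbove U := by
    refine ⟨PP f Df κ x a₀, ?_⟩
    rintro s ⟨v, hv, rfl⟩
    exact le_trans (hinf_le v hv a₀ ha₀) (hPsi_le_P a₀ v)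
  have hudef : uPlus f Df κ Ω x = sSup U := rfl
  -- a maximizing sequence
  have hseq : ∀ m : ℕ, ∃ v, v ∈ Lambda f Df κ Ω x
      ∧ uPlus f Df κ Ω x - 1/((m:ℝ)+1) < infPsiPlus f Df κ Ω x v := by
    intro m
    have h1 : uPlus f Df κ Ω x - 1/((m:ℝ)+1) < sSup U := by
      have : (0:ℝ) < 1/((m:ℝ)+1) := by positivity
      rw [hudef]
      linarith
    obtain ⟨s, hsU, hlt⟩ := exists_lt_of_lt_csSup hUne h1
    obtain ⟨v, hvΛ, rfl⟩ := hsU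
    exact ⟨v, hvΛ, hlt⟩
  choose vs hvsΛ hvslt using hseq
  obtain ⟨vstar, hvstarΛ, σ, hσmono, hσtend⟩ := hΛcomp.tendsto_subseq hvsΛ
  -- continuity of PsiPlus in v
  have hcont : ∀ a : EuclideanSpace ℝ (Fin n),
      Continuous fun v : EuclideanSpace ℝ (Fin n) => PsiPlus f Df κ x a v := by
    intro a
    simp only [PsiPlus]
    refine Continuous.sub ?_ ?_
    · refine Continuous.add (Continuous.add continuous_const ?_) continuous_const
      exact continuous_const.mul
        (Continuous.inner (continuous_const.add continuous_id) continuous_const)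
    · exact continuous_const.mul (((continuous_const.sub continuous_id).norm).pow 2)
  -- the limit point attains the supremum
  have hstar : infPsiPlus f Df κ Ω x vstar = uPlus f Df κ Ω x := by
    refine le_antisymm ?_ ?_
    · rw [hudef]
      exact le_csSup hUbdd ⟨vstar, hvstarΛ, rfl⟩
    · refine le_csInf (hTne vstar) ?_
      rintro s ⟨a, ha, rfl⟩
      have hlim : Filter.Tendsto (fun k => PsiPlus f Df κ x a (vs (σ k)))
          Filter.atTop (nhds (PsiPlus f Df κ x a vstar)) :=
        ((hcont a).tendsto vstar).comp hσtend
      have hlow : ∀ k : ℕ, uPlus f Df κ Ω x - 1/((k:ℝ)+1)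
          ≤ PsiPlus f Df κ x a (vs (σ k)) := by
        intro k
        have h1 : uPlus f Df κ Ω x - 1/((σ k : ℝ)+1)
            < infPsiPlus f Df κ Ω x (vs (σ k)) := hvslt (σ k)
        have h2 : infPsiPlus f Df κ Ω x (vs (σ k)) ≤ PsiPlus f Df κ x a (vs (σ k)) :=
          hinf_le _ (hvsΛ (σ k)) a ha
        have h3 : k ≤ σ k := hσmono.le_apply
        have h3' : (k:ℝ) + 1 ≤ (σ k : ℝ) + 1 := by
          have : (k:ℝ) ≤ (σ k : ℝ) := by exact_mod_cast h3
          linarith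
        have h4 : 1/((σ k : ℝ)+1) ≤ 1/((k:ℝ)+1) := by
          apply one_div_le_one_div_of_le
          · positivity
          · exact h3'
        linarith
      have htends : Filter.Tendsto (fun k : ℕ => uPlus f Df κ Ω x - 1/((k:ℝ)+1))
          Filter.atTop (nhds (uPlus f Df κ Ω x)) := by
        have h0 : Filter.Tendsto (fun k : ℕ => 1/((k:ℝ)+1)) Filter.atTop (nhds 0) :=
          tendsto_one_div_add_atTop_nhds_zero_nat
        have := Filter.Tendsto.sub (tendsto_const_nhds (x := uPlus f Df κ Ω x)) h0
        simpa using this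
      exact le_of_tendsto_of_tendsto' htends hlim hlow
  refine ⟨vstar, ⟨hvstarΛ, hstar⟩, ?_⟩
  -- uniqueness
  rintro v₁ ⟨hv₁Λ, hv₁e⟩
  by_contra hne
  have hδ : 0 < ‖v₁ - vstar‖^2 := by
    have h1 : v₁ - vstar ≠ 0 := sub_ne_zero.mpr hne
    have h2 := norm_pos_iff.mpr h1
    positivity
  set δ : ℝ := ‖v₁ - vstar‖^2 with hδdef
  set mp : EuclideanSpace ℝ (Fin n) := (1/2:ℝ) • (v₁ + vstar) with hmp
  -- midpoint quadratic identities
  have hmid : ∀ z : EuclideanSpace ℝ (Fin n),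
      ‖mp - z‖^2 = (‖v₁ - z‖^2 + ‖vstar - z‖^2)/2 - δ/4 := by
    intro z
    have h := median_identity v₁ vstar z
    rw [norm_sub_rev z v₁, norm_sub_rev z vstar] at h
    rw [norm_sub_rev mp z, hmp, hδdef]
    linarith
  -- midpoint in Lambda
  have hmpΛ : mp ∈ Lambda f Df κ Ω x := by
    rw [hΛiff]
    intro a ha b hb
    have h1 := (hΛiff v₁).mp hv₁Λ a ha b hb
    have h2 := (hΛiff vstar).mp hvstarΛ a ha b hb
    have hu := hmid (uu Df κ x a)
    have hw := hmid (ww Df κ x b)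
    linarith
  -- strict concavity gain at the midpoint
  have hgain : ∀ a ∈ Ω, uPlus f Df κ Ω x + δ/(16*κ) ≤ PsiPlus f Df κ x a mp := by
    intro a ha
    have hu := hmid (uu Df κ x a)
    have l1 : uPlus f Df κ Ω x ≤ PsiPlus f Df κ x a v₁ := by
      have h := hinf_le _ hv₁Λ a ha
      rw [hv₁e] at h
      exact h
    have l2 : uPlus f Df κ Ω x ≤ PsiPlus f Df κ x a vstar := by
      have h := hinf_le _ hvstarΛ a ha
      rw [hstar] at h
      exact h
    have hid : PsiPlus f Df κ x a mp
        = (PsiPlus f Df κ x a v₁ + PsiPlus f Df κ x a vstar)/2 + δ/(16*κ) := by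
      rw [A1 f Df κ hκ0 x a mp, A1 f Df κ hκ0 x a v₁, A1 f Df κ hκ0 x a vstar, hu]
      field_simp
      ring
    rw [hid]
    linarith
  have hmple : infPsiPlus f Df κ Ω x mp ≤ uPlus f Df κ Ω x := by
    rw [hudef]
    exact le_csSup hUbdd ⟨mp, hmpΛ, rfl⟩
  have hmpge : uPlus f Df κ Ω x + δ/(16*κ) ≤ infPsiPlus f Df κ Ω x mp := by
    refine le_csInf (hTne mp) ?_
    rintro s ⟨a, ha, rfl⟩
    exact hgain a ha
  have hpos : 0 < δ/(16*κ) := by positivity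
  linarith
end
end

section
/- Let Ω ⊆ ℝⁿ be nonempty, let F be a Taylorian 1-field on Ω with κ := Γ¹(F;Ω) > 0, let x₀ ∈ ℝⁿ, set Ω₁ := Ω ∪ {x₀}, and let U be a 1-field on Ω₁ extending F (i.e. u_x = f_x and D_xu = D_xf for x ∈ Ω). Then the following are equivalent: (i) Γ¹(U;Ω₁) = Γ¹(F;Ω) (U is a minimal Lipschitz extension of F on Ω₁); (ii) for every x ∈ Ω₁, sup_{a∈Ω} Ψ⁻(F,x,a,D_xu) ≤ u_x ≤ inf_{a∈Ω} Ψ⁺(F,x,a,D_xu). -/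
noncomputable section

open scoped RealInnerProductSpace

section Aux
set_option linter.unusedSectionVars false
variable {H : Type*} [NormedAddCommGroup H] [InnerProductSpace ℝ H]

lemma stmt9_identPlus (κ : ℝ) (hκ : κ ≠ 0) (x a b d v : H) (fa : ℝ) :
    fa + ⟪d, b - a⟫ - ⟪v, b - x⟫ + κ / 2 * (‖x - b‖ ^ 2 + ‖a - b‖ ^ 2)
      = (fa + 1 / 2 * ⟪d + v, x - a⟫ + κ / 4 * ‖a - x‖ ^ 2 - 1 / (4 * κ) * ‖d - v‖ ^ 2)
        + κ * ‖b - ((1 / 2 : ℝ) • (x + a) - (1 / (2 * κ)) • (d - v))‖ ^ 2 := by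
  simp only [← real_inner_self_eq_norm_sq, inner_sub_left, inner_sub_right,
    inner_add_left, inner_add_right, real_inner_smul_left, real_inner_smul_right]
  rw [real_inner_comm x b, real_inner_comm a b, real_inner_comm x a,
    real_inner_comm d b, real_inner_comm v b, real_inner_comm d x, real_inner_comm v x,
    real_inner_comm d a, real_inner_comm v a, real_inner_comm v d]
  field_simp
  ring

lemma stmt9_identMinus (κ : ℝ) (hκ : κ ≠ 0) (x a b d v : H) (fa : ℝ) :
    fa + ⟪d, b - a⟫ - ⟪v, b - x⟫ - κ / 2 * (‖x - b‖ ^ 2 + ‖a - b‖ ^ 2)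
      = (fa + 1 / 2 * ⟪d + v, x - a⟫ - κ / 4 * ‖a - x‖ ^ 2 + 1 / (4 * κ) * ‖d - v‖ ^ 2)
        - κ * ‖b - ((1 / 2 : ℝ) • (x + a) + (1 / (2 * κ)) • (d - v))‖ ^ 2 := by
  simp only [← real_inner_self_eq_norm_sq, inner_sub_left, inner_sub_right,
    inner_add_left, inner_add_right, real_inner_smul_left, real_inner_smul_right]
  rw [real_inner_comm x b, real_inner_comm a b, real_inner_comm x a,
    real_inner_comm d b, real_inner_comm v b, real_inner_comm d x, real_inner_comm v x,
    real_inner_comm d a, real_inner_comm v a, real_inner_comm v d]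
  field_simp
  ring

lemma stmt9_psi_iff {κ : ℝ} (hκ : 0 < κ) (x a d v : H) (fa ux : ℝ) :
    (∀ b : H, 2 * |ux + ⟪v, b - x⟫ - (fa + ⟪d, b - a⟫)| ≤ κ * (‖x - b‖ ^ 2 + ‖a - b‖ ^ 2)) ↔
    ((fa + 1 / 2 * ⟪d + v, x - a⟫ - κ / 4 * ‖a - x‖ ^ 2 + 1 / (4 * κ) * ‖d - v‖ ^ 2 ≤ ux) ∧
     (ux ≤ fa + 1 / 2 * ⟪d + v, x - a⟫ + κ / 4 * ‖a - x‖ ^ 2 - 1 / (4 * κ) * ‖d - v‖ ^ 2)) := by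
  constructor
  · intro hb
    constructor
    · set b₀ : H := (1 / 2 : ℝ) • (x + a) + (1 / (2 * κ)) • (d - v) with hb₀
      have h1 := hb b₀
      have h2 : -(κ * (‖x - b₀‖ ^ 2 + ‖a - b₀‖ ^ 2)) ≤
          2 * (ux + ⟪v, b₀ - x⟫ - (fa + ⟪d, b₀ - a⟫)) := by
        have := neg_abs_le (ux + ⟪v, b₀ - x⟫ - (fa + ⟪d, b₀ - a⟫))
        nlinarith
      have hid := stmt9_identMinus κ hκ.ne' x a b₀ d v fa
      rw [hb₀, sub_self, norm_zero] at hid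
      nlinarith [hid]
    · set b₀ : H := (1 / 2 : ℝ) • (x + a) - (1 / (2 * κ)) • (d - v) with hb₀
      have h1 := hb b₀
      have h2 : 2 * (ux + ⟪v, b₀ - x⟫ - (fa + ⟪d, b₀ - a⟫)) ≤
          κ * (‖x - b₀‖ ^ 2 + ‖a - b₀‖ ^ 2) := by
        have := le_abs_self (ux + ⟪v, b₀ - x⟫ - (fa + ⟪d, b₀ - a⟫))
        nlinarith
      have hid := stmt9_identPlus κ hκ.ne' x a b₀ d v fa
      rw [hb₀, sub_self, norm_zero] at hid
      nlinarith [hid]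
  · rintro ⟨h1, h2⟩ b
    have hidP := stmt9_identPlus κ hκ.ne' x a b d v fa
    have hidM := stmt9_identMinus κ hκ.ne' x a b d v fa
    have hn1 : 0 ≤ κ * ‖b - ((1 / 2 : ℝ) • (x + a) - (1 / (2 * κ)) • (d - v))‖ ^ 2 := by positivity
    have hn2 : 0 ≤ κ * ‖b - ((1 / 2 : ℝ) • (x + a) + (1 / (2 * κ)) • (d - v))‖ ^ 2 := by positivity
    have habs : |ux + ⟪v, b - x⟫ - (fa + ⟪d, b - a⟫)| ≤ κ * (‖x - b‖ ^ 2 + ‖a - b‖ ^ 2) / 2 := by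
      rw [abs_le]
      constructor
      · nlinarith
      · nlinarith
    linarith


lemma stmt9_denom_pos {x y : H} (hxy : x ≠ y) (b : H) :
    0 < ‖x - b‖ ^ 2 + ‖y - b‖ ^ 2 := by
  by_contra hle
  push_neg at hle
  have h1 : (0:ℝ) ≤ ‖x - b‖ ^ 2 := sq_nonneg _
  have h2 : (0:ℝ) ≤ ‖y - b‖ ^ 2 := sq_nonneg _
  have hx : x - b = 0 := by
    have : ‖x - b‖ ^ 2 = 0 := by linarith
    simpa using this
  have hy : y - b = 0 := by
    have : ‖y - b‖ ^ 2 = 0 := by linarith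
    simpa using this
  exact hxy (by rw [sub_eq_zero] at hx hy; rw [hx, hy])

lemma stmt9_bdd (g : H → ℝ) (Dg : H → H) {x y : H} (hxy : x ≠ y) :
    BddAbove (Set.range fun b : H =>
      2 * |fieldEval g Dg x b - fieldEval g Dg y b| / (‖x - b‖ ^ 2 + ‖y - b‖ ^ 2)) := by
  set K : ℝ := 2 * |g x - g y| + ‖Dg x‖ ^ 2 + ‖Dg y‖ ^ 2 with hK
  have hKnn : 0 ≤ K := by positivity
  have hm : (0:ℝ) < ‖x - y‖ ^ 2 / 2 := by
    have : x - y ≠ 0 := sub_ne_zero.mpr hxy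
    have := pow_pos (norm_pos_iff.mpr this) 2
    linarith
  refine ⟨K / (‖x - y‖ ^ 2 / 2) + 1, ?_⟩
  rintro t ⟨b, rfl⟩
  have hd := stmt9_denom_pos hxy b
  have htri : ‖x - y‖ ≤ ‖x - b‖ + ‖y - b‖ := by
    have h0 : x - y = (x - b) - (y - b) := by abel
    rw [h0]; exact norm_sub_le _ _
  have hDm : ‖x - y‖ ^ 2 / 2 ≤ ‖x - b‖ ^ 2 + ‖y - b‖ ^ 2 := by
    nlinarith [sq_nonneg (‖x - b‖ - ‖y - b‖), norm_nonneg (x - b), norm_nonneg (y - b),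
      norm_nonneg (x - y)]
  have hPle : 2 * |fieldEval g Dg x b - fieldEval g Dg y b|
      ≤ K + (‖x - b‖ ^ 2 + ‖y - b‖ ^ 2) := by
    have h1 : fieldEval g Dg x b - fieldEval g Dg y b
        = (g x - g y) + (⟪Dg x, b - x⟫ - ⟪Dg y, b - y⟫) := by
      simp only [fieldEval]; ring
    have h2 : |fieldEval g Dg x b - fieldEval g Dg y b|
        ≤ |g x - g y| + (|⟪Dg x, b - x⟫| + |⟪Dg y, b - y⟫|) := by
      rw [h1]
      refine (abs_add_le _ _).trans (add_le_add_right ?_ _)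
      exact (abs_sub _ _)
    have hc1 : |⟪Dg x, b - x⟫| ≤ ‖Dg x‖ * ‖b - x‖ := abs_real_inner_le_norm _ _
    have hc2 : |⟪Dg y, b - y⟫| ≤ ‖Dg y‖ * ‖b - y‖ := abs_real_inner_le_norm _ _
    have e1 : ‖b - x‖ = ‖x - b‖ := norm_sub_rev _ _
    have e2 : ‖b - y‖ = ‖y - b‖ := norm_sub_rev _ _
    rw [e1] at hc1; rw [e2] at hc2
    nlinarith [sq_nonneg (‖Dg x‖ - ‖x - b‖), sq_nonneg (‖Dg y‖ - ‖y - b‖)]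
  rw [div_le_iff₀ hd]
  have key : K * (‖x - b‖ ^ 2 + ‖y - b‖ ^ 2) / (‖x - y‖ ^ 2 / 2) ≥ K := by
    rw [ge_iff_le, le_div_iff₀ hm]
    nlinarith [mul_nonneg hKnn (sub_nonneg.mpr hDm)]
  calc 2 * |fieldEval g Dg x b - fieldEval g Dg y b|
      ≤ K + (‖x - b‖ ^ 2 + ‖y - b‖ ^ 2) := hPle
    _ ≤ K * (‖x - b‖ ^ 2 + ‖y - b‖ ^ 2) / (‖x - y‖ ^ 2 / 2) + (‖x - b‖ ^ 2 + ‖y - b‖ ^ 2) := by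
        linarith
    _ = (K / (‖x - y‖ ^ 2 / 2) + 1) * (‖x - b‖ ^ 2 + ‖y - b‖ ^ 2) := by ring

lemma stmt9_gammaPair_le_iff (g : H → ℝ) (Dg : H → H) {x y : H} (hxy : x ≠ y) {κ : ℝ} :
    gammaPair g Dg x y ≤ κ ↔
      ∀ b : H, 2 * |fieldEval g Dg x b - fieldEval g Dg y b|
        ≤ κ * (‖x - b‖ ^ 2 + ‖y - b‖ ^ 2) := by
  constructor
  · intro hsup b
    have hb := le_ciSup (stmt9_bdd g Dg hxy) b
    have hd := stmt9_denom_pos hxy b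
    have h := hb.trans hsup
    rwa [div_le_iff₀ hd] at h
  · intro hb
    have : Nonempty H := ⟨x⟩
    refine ciSup_le fun b => ?_
    rw [div_le_iff₀ (stmt9_denom_pos hxy b)]
    exact hb b

lemma stmt9_pair_le_iff_psi (f : H → ℝ) (Df : H → H) {κ : ℝ} (hκ : 0 < κ)
    (g : H → ℝ) (Dg : H → H) {x y : H} (hxy : x ≠ y)
    (hgy : g y = f y) (hDgy : Dg y = Df y) :
    gammaPair g Dg x y ≤ κ ↔
      (PsiMinus f Df κ x y (Dg x) ≤ g x ∧ g x ≤ PsiPlus f Df κ x y (Dg x)) := by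
  rw [stmt9_gammaPair_le_iff g Dg hxy]
  have hfe : ∀ b : H, fieldEval g Dg x b - fieldEval g Dg y b
      = g x + ⟪Dg x, b - x⟫ - (f y + ⟪Df y, b - y⟫) := by
    intro b; simp only [fieldEval, hgy, hDgy]
  simp only [hfe]
  rw [stmt9_psi_iff hκ x y (Df y) (Dg x) (f y) (g x)]
  simp only [PsiMinus, PsiPlus]

lemma stmt9_gammaPair_comm (g : H → ℝ) (Dg : H → H) (x y : H) :
    gammaPair g Dg x y = gammaPair g Dg y x := by
  unfold gammaPair
  congr 1
  funext b
  rw [abs_sub_comm, add_comm (‖x - b‖ ^ 2)]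

lemma stmt9_psiPlus_self (f : H → ℝ) (Df : H → H) (κ : ℝ) (a : H) :
    PsiPlus f Df κ a a (Df a) = f a := by
  simp [PsiPlus]

lemma stmt9_psiMinus_self (f : H → ℝ) (Df : H → H) (κ : ℝ) (a : H) :
    PsiMinus f Df κ a a (Df a) = f a := by
  simp [PsiMinus]

end Aux
/-- Let `F = (f, Df)` be a Taylorian 1-field on a nonempty `Ω ⊆ ℝⁿ` with
`κ := Γ¹(F;Ω) > 0`, let `x₀ ∈ ℝⁿ`, `Ω₁ := Ω ∪ {x₀}`, and let `U = (u, Du)` be a 1-field on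
`Ω₁` extending `F`. Then `U` is an MLE of `F` on `Ω₁` iff
`sup_{a∈Ω} Ψ⁻(F,x,a,D_xu) ≤ u_x ≤ inf_{a∈Ω} Ψ⁺(F,x,a,D_xu)` for all `x ∈ Ω₁`
(the sup/inf condition being stated pointwise in `a`). -/
theorem stmt_9 {n : ℕ} (hn : 1 ≤ n) (Ω : Set (EuclideanSpace ℝ (Fin n)))
    (hΩne : Ω.Nonempty)
    (f : EuclideanSpace ℝ (Fin n) → ℝ)
    (Df : EuclideanSpace ℝ (Fin n) → EuclideanSpace ℝ (Fin n))
    (hTay : BddAbove (gammaVals f Df Ω))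
    (hκpos : 0 < gammaOn f Df Ω)
    (x₀ : EuclideanSpace ℝ (Fin n))
    (u : EuclideanSpace ℝ (Fin n) → ℝ)
    (Du : EuclideanSpace ℝ (Fin n) → EuclideanSpace ℝ (Fin n))
    (hext : ∀ x ∈ Ω, u x = f x ∧ Du x = Df x) :
    gammaOn u Du (Ω ∪ {x₀}) = gammaOn f Df Ω ↔
      ∀ x ∈ Ω ∪ {x₀}, ∀ a ∈ Ω,
        PsiMinus f Df (gammaOn f Df Ω) x a (Du x) ≤ u x ∧
        u x ≤ PsiPlus f Df (gammaOn f Df Ω) x a (Du x) := by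
  constructor
  · intro hMLE x hx a ha
    rcases eq_or_ne x a with rfl | hxa
    · obtain ⟨hu, hDu⟩ := hext x ha
      rw [hu, hDu, stmt9_psiMinus_self, stmt9_psiPlus_self]
      exact ⟨le_rfl, le_rfl⟩
    · have hbdd : BddAbove (gammaVals u Du (Ω ∪ {x₀})) := by
        by_contra hb
        rw [gammaOn, Real.sSup_of_not_bddAbove hb] at hMLE
        exact hκpos.ne' hMLE.symm
      have hmem : gammaPair u Du x a ∈ gammaVals u Du (Ω ∪ {x₀}) :=
        ⟨x, hx, a, Or.inl ha, hxa, rfl⟩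
      have hle : gammaPair u Du x a ≤ gammaOn f Df Ω := by
        rw [← hMLE]
        exact le_csSup hbdd hmem
      exact (stmt9_pair_le_iff_psi f Df hκpos u Du hxa (hext a ha).1 (hext a ha).2).mp hle
  · intro h
    have hub : ∀ t ∈ gammaVals u Du (Ω ∪ {x₀}), t ≤ gammaOn f Df Ω := by
      rintro t ⟨p, hp, q, hq, hpq, rfl⟩
      rcases hq with hqΩ | hqx
      · exact (stmt9_pair_le_iff_psi f Df hκpos u Du hpq
          (hext q hqΩ).1 (hext q hqΩ).2).mpr (h p hp q hqΩ)
      · rcases hp with hpΩ | hpx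
        · rw [stmt9_gammaPair_comm]
          exact (stmt9_pair_le_iff_psi f Df hκpos u Du (Ne.symm hpq)
            (hext p hpΩ).1 (hext p hpΩ).2).mpr (h q (Or.inr hqx) p hpΩ)
        · exact absurd (hpx.trans hqx.symm) hpq
    have hne : (gammaVals f Df Ω).Nonempty := by
      by_contra hne
      rw [Set.not_nonempty_iff_eq_empty] at hne
      rw [gammaOn, hne, Real.sSup_empty] at hκpos
      exact lt_irrefl 0 hκpos
    have hsub : gammaVals f Df Ω ⊆ gammaVals u Du (Ω ∪ {x₀}) := by
      rintro t ⟨p, hp, q, hq, hpq, rfl⟩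
      refine ⟨p, Or.inl hp, q, Or.inl hq, hpq, ?_⟩
      unfold gammaPair
      congr 1
      funext b
      simp only [fieldEval, (hext p hp).1, (hext p hp).2, (hext q hq).1, (hext q hq).2]
    have hband : BddAbove (gammaVals u Du (Ω ∪ {x₀})) := ⟨_, hub⟩
    apply le_antisymm
    · exact Real.sSup_le hub hκpos.le
    · exact csSup_le_csSup hband hne hsub
end
end
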